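/- arXiv:1912.00054 — 4 statements merged into one kernel-verified Lean document; each statement's English description precedes it below -/
import Mathlib

section
/- There exist constants M > 0 and 0 < λ < min_{1≤j≤n} (4 R_j(T))^{−1} such that for every j = 1,…,n, |∂u/∂x_j(t,x)| ≤ M (R_j(T) − R_j(t))^{−1/2} exp(λ|x|²) for all (t,x) ∈ [t₀,T) × ℝⁿ. -/
open Real MeasureTheory intervalIntegral

lemma rpow_neg_half_eq (A : ℝ) (hA : 0 < A) : A ^ (-(1:ℝ)/2) = (Real.sqrt A)⁻¹ := by
  rw [Real.sqrt_eq_rpow, ← Real.rpow_neg hA.le]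
  norm_num

lemma gauss_aux (β lam m : ℝ) (hβ : 0 < β) (hl : lam < β) :
    Integrable (fun y : ℝ => Real.exp (lam * y ^ 2 - β * (y - m) ^ 2)) ∧
    ∫ y : ℝ, Real.exp (lam * y ^ 2 - β * (y - m) ^ 2)
      = Real.sqrt (π / (β - lam)) * Real.exp (β * lam * m ^ 2 / (β - lam)) := by
  have hd : 0 < β - lam := sub_pos.2 hl
  have key : ∀ y : ℝ, lam * y ^ 2 - β * (y - m) ^ 2
      = -(β - lam) * (y - β * m / (β - lam)) ^ 2 + β * lam * m ^ 2 / (β - lam) := by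
    intro y; field_simp; ring
  have h1 : Integrable (fun y : ℝ => Real.exp (-(β - lam) * (y - β * m / (β - lam)) ^ 2)) :=
    (integrable_exp_neg_mul_sq hd).comp_sub_right _
  constructor
  · simp_rw [key, Real.exp_add]
    exact h1.mul_const _
  · simp_rw [key, Real.exp_add]
    rw [MeasureTheory.integral_mul_const,
      integral_sub_right_eq_self (fun z => Real.exp (-(β - lam) * z ^ 2)) (β * m / (β - lam)),
      integral_gaussian]

lemma abs_le_sqrt_exp (σ z : ℝ) (hσ : 0 < σ) :
    |z| * Real.exp (-z ^ 2 / (2 * σ)) ≤ Real.sqrt (2 * σ) * Real.exp (-z ^ 2 / (4 * σ)) := by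
  have hs : 0 < Real.sqrt (2 * σ) := Real.sqrt_pos.2 (by positivity)
  have h1 : |z| ≤ Real.sqrt (2 * σ) * Real.exp (z ^ 2 / (4 * σ)) := by
    have hw : |z| / Real.sqrt (2 * σ) ≤ Real.exp (z ^ 2 / (4 * σ)) := by
      have h2 : (|z| / Real.sqrt (2 * σ)) ^ 2 / 2 = z ^ 2 / (4 * σ) := by
        rw [div_pow, Real.sq_sqrt (by positivity), sq_abs]; ring
      set w := |z| / Real.sqrt (2 * σ) with hwdef
      have hw0 : 0 ≤ w := by positivity
      calc w ≤ w ^ 2 / 2 + 1 := by nlinarith [sq_nonneg (w - 1)]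
        _ ≤ Real.exp (w ^ 2 / 2) := by linarith [Real.add_one_le_exp (w ^ 2 / 2)]
        _ = Real.exp (z ^ 2 / (4 * σ)) := by rw [h2]
    calc |z| = |z| / Real.sqrt (2 * σ) * Real.sqrt (2 * σ) := by field_simp
      _ ≤ Real.exp (z ^ 2 / (4 * σ)) * Real.sqrt (2 * σ) := by
          exact mul_le_mul_of_nonneg_right hw hs.le
      _ = Real.sqrt (2 * σ) * Real.exp (z ^ 2 / (4 * σ)) := mul_comm _ _
  calc |z| * Real.exp (-z ^ 2 / (2 * σ))
      ≤ Real.sqrt (2 * σ) * Real.exp (z ^ 2 / (4 * σ)) * Real.exp (-z ^ 2 / (2 * σ)) :=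
        mul_le_mul_of_nonneg_right h1 (Real.exp_nonneg _)
    _ = Real.sqrt (2 * σ) * Real.exp (-z ^ 2 / (4 * σ)) := by
        rw [mul_assoc, ← Real.exp_add]
        congr 1
        field_simp
        ring

lemma coord_bound (σ lam x a : ℝ) (hσ : 0 < σ) (hlam : 0 < lam) (h16 : 16 * lam * σ < 1) :
    ∫ y : ℝ, (2 * π * σ) ^ (-(1:ℝ)/2) * Real.exp (lam * y ^ 2 - (2*σ)⁻¹ * (y - (x - a)) ^ 2)
      ≤ 2 * Real.exp (3 * lam * (x ^ 2 + a ^ 2)) := by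
  have hβ : (0:ℝ) < (2*σ)⁻¹ := by positivity
  have hI : (2*σ)⁻¹ * (2*σ) = 1 := inv_mul_cancel₀ (by positivity)
  have h8 : 8 * lam ≤ (2*σ)⁻¹ := by nlinarith
  have hlb : lam < (2*σ)⁻¹ := by nlinarith
  have hD : (0:ℝ) < (2*σ)⁻¹ - lam := by linarith
  obtain ⟨hi, hv⟩ := gauss_aux ((2*σ)⁻¹) lam (x - a) hβ hlb
  rw [MeasureTheory.integral_const_mul, hv]
  have hxa : (x - a) ^ 2 ≤ 2 * (x ^ 2 + a ^ 2) := by nlinarith [sq_nonneg (x + a)]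
  have hE : (2*σ)⁻¹ * lam * (x - a) ^ 2 / ((2*σ)⁻¹ - lam) ≤ 3 * lam * (x ^ 2 + a ^ 2) := by
    rw [div_le_iff₀ hD]
    nlinarith [mul_nonneg (mul_nonneg hlam.le (add_nonneg (sq_nonneg x) (sq_nonneg a)))
        (by linarith : (0:ℝ) ≤ (2*σ)⁻¹ - 3 * lam),
      mul_le_mul_of_nonneg_left hxa (mul_nonneg hβ.le hlam.le)]
  have hC : (2 * π * σ) ^ (-(1:ℝ)/2) * Real.sqrt (π / ((2*σ)⁻¹ - lam)) ≤ 2 := by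
    rw [rpow_neg_half_eq _ (by positivity), inv_mul_eq_div, ← Real.sqrt_div (by positivity)]
    rw [Real.sqrt_le_iff]
    refine ⟨by norm_num, ?_⟩
    rw [div_div, div_le_iff₀ (by positivity)]
    nlinarith [pi_pos, mul_pos hσ pi_pos]
  calc (2 * π * σ) ^ (-(1:ℝ)/2) *
        (Real.sqrt (π / ((2*σ)⁻¹ - lam)) * Real.exp ((2*σ)⁻¹ * lam * (x-a)^2 / ((2*σ)⁻¹ - lam)))
      = ((2 * π * σ) ^ (-(1:ℝ)/2) * Real.sqrt (π / ((2*σ)⁻¹ - lam))) *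
          Real.exp ((2*σ)⁻¹ * lam * (x-a)^2 / ((2*σ)⁻¹ - lam)) := by ring
    _ ≤ 2 * Real.exp (3 * lam * (x ^ 2 + a ^ 2)) := by
        apply mul_le_mul hC (Real.exp_le_exp.2 hE) (Real.exp_nonneg _) (by norm_num)

lemma coordj_bound (σ lam x a c' : ℝ) (hσ : 0 < σ) (hc' : 0 < c') (hlam : 0 < lam)
    (h16 : 16 * lam * σ < 1) :
    ∫ y : ℝ, c' * ((2 * π * σ) ^ (-(1:ℝ)/2) * Real.sqrt (2 / σ)) *
        Real.exp (lam * y ^ 2 - (4*σ)⁻¹ * (y - (x - a)) ^ 2)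
      ≤ 8 * c' * σ ^ (-(1:ℝ)/2) * Real.exp (3 * lam * (x ^ 2 + a ^ 2)) := by
  have hβ : (0:ℝ) < (4*σ)⁻¹ := by positivity
  have hI : (4*σ)⁻¹ * (4*σ) = 1 := inv_mul_cancel₀ (by positivity)
  have h4 : 4 * lam ≤ (4*σ)⁻¹ := by nlinarith
  have hlb : lam < (4*σ)⁻¹ := by nlinarith
  have hD : (0:ℝ) < (4*σ)⁻¹ - lam := by linarith
  have hδ3 : 3 ≤ ((4*σ)⁻¹ - lam) * (16 * σ) := by nlinarith
  obtain ⟨hi, hv⟩ := gauss_aux ((4*σ)⁻¹) lam (x - a) hβ hlb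
  rw [MeasureTheory.integral_const_mul, hv]
  have hxa : (x - a) ^ 2 ≤ 2 * (x ^ 2 + a ^ 2) := by nlinarith [sq_nonneg (x + a)]
  have hE : (4*σ)⁻¹ * lam * (x - a) ^ 2 / ((4*σ)⁻¹ - lam) ≤ 3 * lam * (x ^ 2 + a ^ 2) := by
    rw [div_le_iff₀ hD]
    nlinarith [mul_nonneg (mul_nonneg hlam.le (add_nonneg (sq_nonneg x) (sq_nonneg a)))
        (by linarith : (0:ℝ) ≤ (4*σ)⁻¹ - 3 * lam),
      mul_le_mul_of_nonneg_left hxa (mul_nonneg hβ.le hlam.le)]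
  have hC : (2 * π * σ) ^ (-(1:ℝ)/2) * Real.sqrt (2 / σ) * Real.sqrt (π / ((4*σ)⁻¹ - lam))
      ≤ 8 * σ ^ (-(1:ℝ)/2) := by
    rw [rpow_neg_half_eq _ (by positivity), rpow_neg_half_eq _ hσ,
      ← Real.sqrt_inv (2 * π * σ), ← Real.sqrt_mul (by positivity),
      ← Real.sqrt_mul (by positivity), ← Real.sqrt_inv σ]
    rw [show (8:ℝ) * Real.sqrt σ⁻¹ = Real.sqrt (64 * σ⁻¹) by
      rw [Real.sqrt_mul (by norm_num), show (64:ℝ) = 8 ^ 2 by norm_num,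
        Real.sqrt_sq (by norm_num)]]
    apply Real.sqrt_le_sqrt
    have h1m : (0:ℝ) < 1 - 4 * σ * lam := by nlinarith
    have hDeq : (4*σ)⁻¹ - lam = (1 - 4 * σ * lam) / (4 * σ) := by field_simp
    have heq : (2 * π * σ)⁻¹ * (2 / σ) * (π / ((4*σ)⁻¹ - lam))
        = 1 / (σ ^ 2 * ((4*σ)⁻¹ - lam)) := by
      rw [hDeq]
      rw [eq_div_iff (by positivity)]
      field_simp [h1m.ne']
      exact div_self (ne_of_gt (by linarith))
    rw [heq, div_le_iff₀ (by positivity), mul_comm (64 * σ⁻¹)]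
    have h64 : σ ^ 2 * ((4*σ)⁻¹ - lam) * (64 * σ⁻¹) = 64 * (σ * ((4*σ)⁻¹ - lam)) := by
      field_simp
    rw [h64]
    nlinarith
  calc c' * ((2 * π * σ) ^ (-(1:ℝ)/2) * Real.sqrt (2 / σ)) *
        (Real.sqrt (π / ((4*σ)⁻¹ - lam)) *
          Real.exp ((4*σ)⁻¹ * lam * (x-a) ^ 2 / ((4*σ)⁻¹ - lam)))
      = c' * (((2 * π * σ) ^ (-(1:ℝ)/2) * Real.sqrt (2 / σ) *
          Real.sqrt (π / ((4*σ)⁻¹ - lam))) *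
          Real.exp ((4*σ)⁻¹ * lam * (x-a) ^ 2 / ((4*σ)⁻¹ - lam))) := by ring
    _ ≤ c' * ((8 * σ ^ (-(1:ℝ)/2)) * Real.exp (3 * lam * (x ^ 2 + a ^ 2))) := by
        apply mul_le_mul_of_nonneg_left _ hc'.le
        apply mul_le_mul hC (Real.exp_le_exp.2 hE) (Real.exp_nonneg _) (by positivity)
    _ = 8 * c' * σ ^ (-(1:ℝ)/2) * Real.exp (3 * lam * (x ^ 2 + a ^ 2)) := by ring

set_option maxHeartbeats 2000000 in
lemma aux_main {n : ℕ} (j : Fin n) (σ a x : Fin n → ℝ) (hσ : ∀ k, 0 < σ k)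
    (g : (Fin n → ℝ) → ℝ) (hg : Continuous g) (c' lam' : ℝ) (hc' : 0 < c') (hlam' : 0 < lam')
    (hgrowth : ∀ y : Fin n → ℝ, |g y| ≤ c' * Real.exp (lam' * ∑ k, (y k) ^ 2))
    (h16 : ∀ k, 16 * lam' * σ k < 1) :
    ∃ d : ℝ,
      HasDerivAt (fun ξ => ∫ y : Fin n → ℝ, g y *
          ∏ k, (2 * π * σ k) ^ (-(1:ℝ)/2) *
            Real.exp (-(Function.update x j ξ k - a k - y k) ^ 2 / (2 * σ k))) d (x j) ∧
      |d| ≤ 8 * c' * (σ j) ^ (-(1:ℝ)/2) *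
        ∏ k, (2 * Real.exp (3 * lam' * ((x k) ^ 2 + (a k) ^ 2))) := by
  classical
  -- abbreviations
  set m : Fin n → ℝ := fun k => x k - a k with hm
  set cK : Fin n → ℝ := fun k => (2 * π * σ k) ^ (-(1:ℝ)/2) with hcK
  have hcKpos : ∀ k, 0 < cK k := fun k => Real.rpow_pos_of_pos (by have := hσ k; positivity) _
  set P : (Fin n → ℝ) → ℝ := fun y => ∏ k ∈ Finset.univ.erase j,
      cK k * Real.exp (-(x k - a k - y k) ^ 2 / (2 * σ k)) with hP
  have hPnn : ∀ y, 0 ≤ P y := fun y =>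
    Finset.prod_nonneg fun k _ => by
      have := hσ k; have := hcKpos k; positivity
  set F : ℝ → (Fin n → ℝ) → ℝ := fun ξ y => g y *
      ∏ k, cK k * Real.exp (-(Function.update x j ξ k - a k - y k) ^ 2 / (2 * σ k)) with hF
  set F' : ℝ → (Fin n → ℝ) → ℝ := fun ξ y => g y *
      (cK j * Real.exp (-(ξ - a j - y j) ^ 2 / (2 * σ j)) * (-(ξ - a j - y j) / σ j) * P y)
    with hF'
  have hsplit : ∀ (ξ : ℝ) (y : Fin n → ℝ),
      (∏ k, cK k * Real.exp (-(Function.update x j ξ k - a k - y k) ^ 2 / (2 * σ k)))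
        = cK j * Real.exp (-(ξ - a j - y j) ^ 2 / (2 * σ j)) * P y := by
    intro ξ y
    rw [← Finset.mul_prod_erase _ _ (Finset.mem_univ j), Function.update_self, hP]
    congr 1
    exact Finset.prod_congr rfl fun k hk => by
      rw [Function.update_of_ne (Finset.ne_of_mem_erase hk)]
  -- derivative pointwise
  have hderiv : ∀ (y : Fin n → ℝ) (ξ : ℝ), HasDerivAt (fun ξ => F ξ y) (F' ξ y) ξ := by
    intro y ξ
    have heq : (fun ξ => F ξ y) = fun ξ =>
        g y * (cK j * Real.exp (-(ξ - a j - y j) ^ 2 / (2 * σ j)) * P y) := by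
      funext ζ
      rw [hF]
      dsimp only
      rw [hsplit]
    rw [heq]
    have h0 : HasDerivAt (fun ξ : ℝ => ξ - a j - y j) 1 ξ :=
      ((hasDerivAt_id ξ).sub_const _).sub_const _
    have h1 : HasDerivAt (fun ξ : ℝ => -(ξ - a j - y j) ^ 2 / (2 * σ j))
        (-((2:ℕ) * (ξ - a j - y j) ^ 1 * 1) / (2 * σ j)) ξ := ((h0.pow 2).neg).div_const _
    have h2 := h1.exp
    have h3 := ((h2.const_mul (cK j)).mul_const (P y)).const_mul (g y)
    refine h3.congr_deriv (Eq.symm ?_)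
    rw [hF']
    dsimp only
    have hσj := (hσ j).ne'
    field_simp
    ring
  -- inverse comparisons
  have hinv2 : ∀ k, lam' < (2 * σ k)⁻¹ := by
    intro k
    have h := h16 k; have hs := hσ k
    rw [inv_eq_one_div, lt_div_iff₀ (by positivity)]
    nlinarith
  have hinv4 : ∀ k, lam' < (4 * σ k)⁻¹ := by
    intro k
    have h := h16 k; have hs := hσ k
    rw [inv_eq_one_div, lt_div_iff₀ (by positivity)]
    nlinarith
  have hinv8 : ∀ k, lam' < (8 * σ k)⁻¹ := by
    intro k
    have h := h16 k; have hs := hσ k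
    rw [inv_eq_one_div, lt_div_iff₀ (by positivity)]
    nlinarith
  -- continuity facts
  have hcontP : Continuous P := by
    simp only [hP]
    apply continuous_finset_prod
    intro k _
    exact continuous_const.mul (Real.continuous_exp.comp
      (((continuous_const.sub (continuous_apply k)).pow 2).neg.div_const _))
  have hcont : ∀ ξ, Continuous (F ξ) := by
    intro ξ
    simp only [hF]
    apply hg.mul
    apply continuous_finset_prod
    intro k _
    exact continuous_const.mul (Real.continuous_exp.comp
      (((continuous_const.sub (continuous_apply k)).pow 2).neg.div_const _))
  have hcontF' : Continuous (F' (x j)) := by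
    simp only [hF']
    apply hg.mul
    apply Continuous.mul
    apply Continuous.mul
    · exact continuous_const.mul (Real.continuous_exp.comp
        (((continuous_const.sub (continuous_apply j)).pow 2).neg.div_const _))
    · exact ((continuous_const.sub (continuous_apply j)).neg).div_const _
    · exact hcontP
  -- growth in product form
  have hgyprod : ∀ y : Fin n → ℝ, |g y| ≤ c' * ∏ k, Real.exp (lam' * (y k) ^ 2) := by
    intro y
    have hgy := hgrowth y
    rw [Finset.mul_sum] at hgy
    rw [← Real.exp_sum]
    exact hgy
  -- generic factor rewriting
  have hfact : ∀ (k : Fin n) (s : ℝ),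
      cK k * Real.exp (lam' * s ^ 2 - (2 * σ k)⁻¹ * (s - m k) ^ 2)
        = Real.exp (lam' * s ^ 2) * (cK k * Real.exp (-(x k - a k - s) ^ 2 / (2 * σ k))) := by
    intro k s
    have hσk := (hσ k).ne'
    rw [show lam' * s ^ 2 - (2 * σ k)⁻¹ * (s - m k) ^ 2
        = lam' * s ^ 2 + -(x k - a k - s) ^ 2 / (2 * σ k) by
      simp only [hm]; field_simp; ring]
    rw [Real.exp_add]; ring
  -- dominating function for the ball
  set φ : Fin n → ℝ → ℝ := fun k s =>
    if k = j then c' * (cK j * Real.sqrt (2 / σ j) * Real.exp ((4 * σ j)⁻¹)) *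
        Real.exp (lam' * s ^ 2 - (8 * σ j)⁻¹ * (s - m j) ^ 2)
    else cK k * Real.exp (lam' * s ^ 2 - (2 * σ k)⁻¹ * (s - m k) ^ 2) with hφ
  have hφint : ∀ k, Integrable (φ k) := by
    intro k
    simp only [hφ]
    rcases eq_or_ne k j with hk | hk
    · simp only [if_pos hk]
      exact ((gauss_aux _ _ _ (by have := hσ j; positivity) (hinv8 j)).1).const_mul _
    · simp only [if_neg hk]
      exact ((gauss_aux _ _ _ (by have := hσ k; positivity) (hinv2 k)).1).const_mul _
  have hφprod : ∀ y : Fin n → ℝ, (∏ k, φ k (y k)) =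
      c' * (∏ k, Real.exp (lam' * (y k) ^ 2)) *
        (cK j * Real.sqrt (2 / σ j) * Real.exp ((4 * σ j)⁻¹) *
          Real.exp (-(x j - a j - y j) ^ 2 / (8 * σ j))) * P y := by
    intro y
    rw [← Finset.mul_prod_erase _ (fun k => φ k (y k)) (Finset.mem_univ j),
      ← Finset.mul_prod_erase _ (fun k => Real.exp (lam' * (y k) ^ 2)) (Finset.mem_univ j)]
    have he : (∏ k ∈ Finset.univ.erase j, φ k (y k))
        = (∏ k ∈ Finset.univ.erase j, Real.exp (lam' * (y k) ^ 2)) * P y := by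
      rw [show (∏ k ∈ Finset.univ.erase j, φ k (y k))
          = ∏ k ∈ Finset.univ.erase j, (Real.exp (lam' * (y k) ^ 2) *
              (cK k * Real.exp (-(x k - a k - y k) ^ 2 / (2 * σ k)))) from
        Finset.prod_congr rfl fun k hk => by
          simp only [hφ]
          rw [if_neg (Finset.ne_of_mem_erase hk)]
          exact hfact k (y k)]
      rw [Finset.prod_mul_distrib]
    rw [he]
    have hj : φ j (y j) = c' * (cK j * Real.sqrt (2 / σ j) * Real.exp ((4 * σ j)⁻¹)) *
        (Real.exp (lam' * (y j) ^ 2) * Real.exp (-(x j - a j - y j) ^ 2 / (8 * σ j))) := by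
      simp only [hφ, if_pos rfl]
      rw [show lam' * (y j) ^ 2 - (8 * σ j)⁻¹ * (y j - m j) ^ 2
          = lam' * (y j) ^ 2 + -(x j - a j - y j) ^ 2 / (8 * σ j) by
        have := (hσ j).ne'; simp only [hm]; field_simp; ring]
      rw [Real.exp_add]
    rw [hj]; ring
  -- the j-factor estimates
  have hjshift : ∀ (z : ℝ), cK j * Real.exp (-z ^ 2 / (2 * σ j)) * (|z| / σ j)
      ≤ cK j * Real.sqrt (2 / σ j) * Real.exp (-z ^ 2 / (4 * σ j)) := by
    intro z
    have hσj := hσ j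
    have hAB := abs_le_sqrt_exp (σ j) z hσj
    have hs : Real.sqrt (2 / σ j) * σ j = Real.sqrt (2 * σ j) := by
      calc Real.sqrt (2 / σ j) * σ j = Real.sqrt (2 / σ j) * Real.sqrt ((σ j) ^ 2) := by
            rw [Real.sqrt_sq hσj.le]
        _ = Real.sqrt (2 / σ j * (σ j) ^ 2) := (Real.sqrt_mul (by positivity) _).symm
        _ = Real.sqrt (2 * σ j) := by
            rw [show 2 / σ j * (σ j) ^ 2 = 2 * σ j by field_simp]
    have h1 : cK j / σ j * (|z| * Real.exp (-z ^ 2 / (2 * σ j)))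
        ≤ cK j / σ j * (Real.sqrt (2 * σ j) * Real.exp (-z ^ 2 / (4 * σ j))) :=
      mul_le_mul_of_nonneg_left hAB (by have := hcKpos j; positivity)
    calc cK j * Real.exp (-z ^ 2 / (2 * σ j)) * (|z| / σ j)
        = cK j / σ j * (|z| * Real.exp (-z ^ 2 / (2 * σ j))) := by ring
      _ ≤ cK j / σ j * (Real.sqrt (2 * σ j) * Real.exp (-z ^ 2 / (4 * σ j))) := h1
      _ = cK j * Real.sqrt (2 / σ j) * Real.exp (-z ^ 2 / (4 * σ j)) := by
          rw [← hs]; field_simp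
  -- ball domination
  have hball : ∀ y : Fin n → ℝ, ∀ ξ ∈ Metric.ball (x j) 1, |F' ξ y| ≤ ∏ k, φ k (y k) := by
    intro y ξ hξ
    have hd1 : |ξ - x j| < 1 := by rwa [Metric.mem_ball, Real.dist_eq] at hξ
    have hσj := hσ j
    have habs : |F' ξ y| = |g y| *
        (cK j * Real.exp (-(ξ - a j - y j) ^ 2 / (2 * σ j)) * (|ξ - a j - y j| / σ j) * P y) := by
      simp only [hF']
      rw [abs_mul]
      congr 1
      rw [abs_mul, abs_mul, abs_mul, abs_div, abs_neg, Real.abs_exp,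
        abs_of_pos (hcKpos j), abs_of_pos hσj, abs_of_nonneg (hPnn y)]
    have hj2 : Real.exp (-(ξ - a j - y j) ^ 2 / (4 * σ j))
        ≤ Real.exp ((4 * σ j)⁻¹) * Real.exp (-(x j - a j - y j) ^ 2 / (8 * σ j)) := by
      rw [← Real.exp_add]
      apply Real.exp_le_exp.2
      have hd2 : (ξ - x j) ^ 2 ≤ 1 := by nlinarith [abs_lt.1 hd1]
      have hq : (x j - a j - y j) ^ 2 / 2 ≤ 1 + (ξ - a j - y j) ^ 2 := by
        nlinarith [sq_nonneg ((x j - a j - y j) + 2 * (ξ - x j))]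
      have heq : (4 * σ j)⁻¹ + -(x j - a j - y j) ^ 2 / (8 * σ j) - (-(ξ - a j - y j) ^ 2 / (4 * σ j))
          = (2 - (x j - a j - y j) ^ 2 + 2 * (ξ - a j - y j) ^ 2) / (8 * σ j) := by
        field_simp; ring
      have hnum : 0 ≤ (2 - (x j - a j - y j) ^ 2 + 2 * (ξ - a j - y j) ^ 2) / (8 * σ j) :=
        div_nonneg (by linarith) (by positivity)
      linarith [heq ▸ hnum]
    have hjf : cK j * Real.exp (-(ξ - a j - y j) ^ 2 / (2 * σ j)) * (|ξ - a j - y j| / σ j)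
        ≤ cK j * Real.sqrt (2 / σ j) * Real.exp ((4 * σ j)⁻¹) *
          Real.exp (-(x j - a j - y j) ^ 2 / (8 * σ j)) := by
      refine (hjshift _).trans ?_
      calc cK j * Real.sqrt (2 / σ j) * Real.exp (-(ξ - a j - y j) ^ 2 / (4 * σ j))
          ≤ cK j * Real.sqrt (2 / σ j) *
              (Real.exp ((4 * σ j)⁻¹) * Real.exp (-(x j - a j - y j) ^ 2 / (8 * σ j))) := by
            apply mul_le_mul_of_nonneg_left hj2
            have := hcKpos j; positivity
        _ = cK j * Real.sqrt (2 / σ j) * Real.exp ((4 * σ j)⁻¹) *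
              Real.exp (-(x j - a j - y j) ^ 2 / (8 * σ j)) := by ring
    rw [habs, hφprod y]
    have hJnn : (0:ℝ) ≤ cK j * Real.exp (-(ξ - a j - y j) ^ 2 / (2 * σ j)) * (|ξ - a j - y j| / σ j) := by
      have := hcKpos j; positivity
    have hgpnn : (0:ℝ) ≤ c' * ∏ k, Real.exp (lam' * (y k) ^ 2) := by positivity
    calc |g y| * (cK j * Real.exp (-(ξ - a j - y j) ^ 2 / (2 * σ j)) * (|ξ - a j - y j| / σ j) * P y)
        = (|g y| * (cK j * Real.exp (-(ξ - a j - y j) ^ 2 / (2 * σ j)) * (|ξ - a j - y j| / σ j))) * P y := by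
          ring
      _ ≤ ((c' * ∏ k, Real.exp (lam' * (y k) ^ 2)) *
            (cK j * Real.sqrt (2 / σ j) * Real.exp ((4 * σ j)⁻¹) *
              Real.exp (-(x j - a j - y j) ^ 2 / (8 * σ j)))) * P y := by
          apply mul_le_mul_of_nonneg_right _ (hPnn y)
          exact mul_le_mul (hgyprod y) hjf hJnn hgpnn
      _ = c' * (∏ k, Real.exp (lam' * (y k) ^ 2)) *
            (cK j * Real.sqrt (2 / σ j) * Real.exp ((4 * σ j)⁻¹) *
              Real.exp (-(x j - a j - y j) ^ 2 / (8 * σ j))) * P y := by ring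
  -- integrability of F (x j)
  set χ : Fin n → ℝ → ℝ := fun k s =>
    (if k = j then c' else 1) * (cK k * Real.exp (lam' * s ^ 2 - (2 * σ k)⁻¹ * (s - m k) ^ 2))
    with hχ
  have hχint : ∀ k, Integrable (χ k) := by
    intro k
    simp only [hχ]
    exact (((gauss_aux _ _ _ (by have := hσ k; positivity) (hinv2 k)).1).const_mul _).const_mul _
  have hχprod : ∀ y : Fin n → ℝ, (∏ k, χ k (y k)) =
      (c' * ∏ k, Real.exp (lam' * (y k) ^ 2)) *
        ∏ k, (cK k * Real.exp (-(x k - a k - y k) ^ 2 / (2 * σ k))) := by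
    intro y
    simp only [hχ]
    rw [Finset.prod_mul_distrib, Finset.prod_ite_eq' Finset.univ j (fun _ => c')]
    simp only [Finset.mem_univ, if_pos]
    rw [show (∏ k, cK k * Real.exp (lam' * (y k) ^ 2 - (2 * σ k)⁻¹ * (y k - m k) ^ 2))
        = ∏ k, (Real.exp (lam' * (y k) ^ 2) *
            (cK k * Real.exp (-(x k - a k - y k) ^ 2 / (2 * σ k)))) from
      Finset.prod_congr rfl fun k _ => hfact k (y k)]
    rw [Finset.prod_mul_distrib]
    ring
  have hupd : Function.update x j (x j) = x := Function.update_eq_self j x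
  have hintF : Integrable (F (x j)) := by
    apply Integrable.mono (Integrable.fintype_prod hχint) (hcont (x j)).aestronglyMeasurable
    apply ae_of_all
    intro y
    rw [Real.norm_eq_abs, Real.norm_eq_abs]
    have hFx : F (x j) y = g y * ∏ k, (cK k * Real.exp (-(x k - a k - y k) ^ 2 / (2 * σ k))) := by
      simp only [hF, hupd]
    rw [hFx, hχprod y, abs_mul]
    have hprodnn : (0:ℝ) ≤ ∏ k, (cK k * Real.exp (-(x k - a k - y k) ^ 2 / (2 * σ k))) :=
      Finset.prod_nonneg fun k _ => by have := hcKpos k; positivity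
    rw [abs_of_nonneg hprodnn]
    refine le_trans (mul_le_mul_of_nonneg_right (hgyprod y) hprodnn) ?_
    exact le_abs_self _
  -- sharp bound family
  set ψ : Fin n → ℝ → ℝ := fun k s =>
    if k = j then c' * (cK j * Real.sqrt (2 / σ j)) *
        Real.exp (lam' * s ^ 2 - (4 * σ j)⁻¹ * (s - m j) ^ 2)
    else cK k * Real.exp (lam' * s ^ 2 - (2 * σ k)⁻¹ * (s - m k) ^ 2) with hψ
  have hψint : ∀ k, Integrable (ψ k) := by
    intro k
    simp only [hψ]
    rcases eq_or_ne k j with hk | hk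
    · simp only [if_pos hk]
      exact ((gauss_aux _ _ _ (by have := hσ j; positivity) (hinv4 j)).1).const_mul _
    · simp only [if_neg hk]
      exact ((gauss_aux _ _ _ (by have := hσ k; positivity) (hinv2 k)).1).const_mul _
  have hψnn : ∀ k s, 0 ≤ ψ k s := by
    intro k s
    simp only [hψ]
    split
    · have := hcKpos j
      positivity
    · have := hcKpos k
      positivity
  have hψprod : ∀ y : Fin n → ℝ, (∏ k, ψ k (y k)) =
      c' * (∏ k, Real.exp (lam' * (y k) ^ 2)) *
        (cK j * Real.sqrt (2 / σ j) * Real.exp (-(x j - a j - y j) ^ 2 / (4 * σ j))) * P y := by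
    intro y
    rw [← Finset.mul_prod_erase _ (fun k => ψ k (y k)) (Finset.mem_univ j),
      ← Finset.mul_prod_erase _ (fun k => Real.exp (lam' * (y k) ^ 2)) (Finset.mem_univ j)]
    have he : (∏ k ∈ Finset.univ.erase j, ψ k (y k))
        = (∏ k ∈ Finset.univ.erase j, Real.exp (lam' * (y k) ^ 2)) * P y := by
      rw [show (∏ k ∈ Finset.univ.erase j, ψ k (y k))
          = ∏ k ∈ Finset.univ.erase j, (Real.exp (lam' * (y k) ^ 2) *
              (cK k * Real.exp (-(x k - a k - y k) ^ 2 / (2 * σ k)))) from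
        Finset.prod_congr rfl fun k hk => by
          simp only [hψ]
          rw [if_neg (Finset.ne_of_mem_erase hk)]
          exact hfact k (y k)]
      rw [Finset.prod_mul_distrib]
    rw [he]
    have hj : ψ j (y j) = c' * (cK j * Real.sqrt (2 / σ j)) *
        (Real.exp (lam' * (y j) ^ 2) * Real.exp (-(x j - a j - y j) ^ 2 / (4 * σ j))) := by
      simp only [hψ, if_pos rfl]
      rw [show lam' * (y j) ^ 2 - (4 * σ j)⁻¹ * (y j - m j) ^ 2
          = lam' * (y j) ^ 2 + -(x j - a j - y j) ^ 2 / (4 * σ j) by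
        have := (hσ j).ne'; simp only [hm]; field_simp; ring]
      rw [Real.exp_add]
    rw [hj]; ring
  have hsharp : ∀ y : Fin n → ℝ, |F' (x j) y| ≤ ∏ k, ψ k (y k) := by
    intro y
    have hσj := hσ j
    have habs : |F' (x j) y| = |g y| *
        (cK j * Real.exp (-(x j - a j - y j) ^ 2 / (2 * σ j)) * (|x j - a j - y j| / σ j) * P y) := by
      simp only [hF']
      rw [abs_mul]
      congr 1
      rw [abs_mul, abs_mul, abs_mul, abs_div, abs_neg, Real.abs_exp,
        abs_of_pos (hcKpos j), abs_of_pos hσj, abs_of_nonneg (hPnn y)]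
    rw [habs, hψprod y]
    have hJnn : (0:ℝ) ≤ cK j * Real.exp (-(x j - a j - y j) ^ 2 / (2 * σ j)) * (|x j - a j - y j| / σ j) := by
      have := hcKpos j; positivity
    have hgpnn : (0:ℝ) ≤ c' * ∏ k, Real.exp (lam' * (y k) ^ 2) := by positivity
    calc |g y| * (cK j * Real.exp (-(x j - a j - y j) ^ 2 / (2 * σ j)) * (|x j - a j - y j| / σ j) * P y)
        = (|g y| * (cK j * Real.exp (-(x j - a j - y j) ^ 2 / (2 * σ j)) * (|x j - a j - y j| / σ j))) * P y := by
          ring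
      _ ≤ ((c' * ∏ k, Real.exp (lam' * (y k) ^ 2)) *
            (cK j * Real.sqrt (2 / σ j) * Real.exp (-(x j - a j - y j) ^ 2 / (4 * σ j)))) * P y := by
          apply mul_le_mul_of_nonneg_right _ (hPnn y)
          exact mul_le_mul (hgyprod y) (hjshift _) hJnn hgpnn
      _ = c' * (∏ k, Real.exp (lam' * (y k) ^ 2)) *
            (cK j * Real.sqrt (2 / σ j) * Real.exp (-(x j - a j - y j) ^ 2 / (4 * σ j))) * P y := by
          ring
  -- apply the dominated differentiation theorem
  have key : Integrable (F' (x j)) volume ∧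
      HasDerivAt (fun ξ => ∫ y : Fin n → ℝ, F ξ y) (∫ y : Fin n → ℝ, F' (x j) y) (x j) := by
    apply hasDerivAt_integral_of_dominated_loc_of_deriv_le (Metric.ball_mem_nhds (x j) zero_lt_one)
      (bound := fun y => ∏ k, φ k (y k))
    · exact Filter.Eventually.of_forall fun ξ => (hcont ξ).aestronglyMeasurable
    · exact hintF
    · exact hcontF'.aestronglyMeasurable
    · exact MeasureTheory.ae_of_all _ fun y ξ hξ => by
        rw [Real.norm_eq_abs]; exact hball y ξ hξ
    · exact Integrable.fintype_prod hφint
    · exact MeasureTheory.ae_of_all _ fun y ξ _ => hderiv y ξ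
  refine ⟨∫ y : Fin n → ℝ, F' (x j) y, ?_, ?_⟩
  · have h := key.2
    have heq2 : (fun ξ => ∫ y : Fin n → ℝ, F ξ y)
        = fun ξ => ∫ y : Fin n → ℝ, g y *
            ∏ k, (2 * π * σ k) ^ (-(1:ℝ)/2) *
              Real.exp (-(Function.update x j ξ k - a k - y k) ^ 2 / (2 * σ k)) := by
      simp only [hF, hcK]
    rwa [heq2] at h
  set B : Fin n → ℝ := fun k =>
    if k = j then 8 * c' * (σ j) ^ (-(1:ℝ)/2) * Real.exp (3 * lam' * ((x j) ^ 2 + (a j) ^ 2))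
    else 2 * Real.exp (3 * lam' * ((x k) ^ 2 + (a k) ^ 2)) with hB
  have hstep1 : |∫ y : Fin n → ℝ, F' (x j) y| ≤ ∫ y : Fin n → ℝ, ∏ k, ψ k (y k) := by
    rw [← Real.norm_eq_abs]
    apply MeasureTheory.norm_integral_le_of_norm_le (Integrable.fintype_prod hψint)
    exact MeasureTheory.ae_of_all _ fun y => by rw [Real.norm_eq_abs]; exact hsharp y
  have hstep2 : (∫ y : Fin n → ℝ, ∏ k, ψ k (y k)) = ∏ k, ∫ s : ℝ, ψ k s :=
    MeasureTheory.integral_fintype_prod_eq_prod (ι := Fin n) ψ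
  have hstep3 : (∏ k, ∫ s : ℝ, ψ k s) ≤ ∏ k, B k := by
    apply Finset.prod_le_prod (fun k _ => integral_nonneg fun s => hψnn k s)
    intro k _
    rcases eq_or_ne k j with hk | hk
    · subst hk
      have hcb := coordj_bound (σ k) lam' (x k) (a k) c' (hσ k) hc' hlam' (h16 k)
      simp only [hψ, hB, hm, hcK, eq_self_iff_true, if_true]
      exact hcb
    · have hcb := coord_bound (σ k) lam' (x k) (a k) (hσ k) hlam' (h16 k)
      simp only [hψ, hB, hm, hcK, if_neg hk]
      exact hcb
  have hstep4 : (∏ k, B k) ≤ 8 * c' * (σ j) ^ (-(1:ℝ)/2) *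
      ∏ k, (2 * Real.exp (3 * lam' * ((x k) ^ 2 + (a k) ^ 2))) := by
    rw [← Finset.mul_prod_erase _ B (Finset.mem_univ j),
      ← Finset.mul_prod_erase _ (fun k => 2 * Real.exp (3 * lam' * ((x k) ^ 2 + (a k) ^ 2)))
        (Finset.mem_univ j)]
    have he : (∏ k ∈ Finset.univ.erase j, B k)
        = ∏ k ∈ Finset.univ.erase j, (2 * Real.exp (3 * lam' * ((x k) ^ 2 + (a k) ^ 2))) :=
      Finset.prod_congr rfl fun k hk => by
        simp only [hB]; rw [if_neg (Finset.ne_of_mem_erase hk)]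
    rw [he]
    have hpos : (0:ℝ) ≤ ∏ k ∈ Finset.univ.erase j,
        (2 * Real.exp (3 * lam' * ((x k) ^ 2 + (a k) ^ 2))) :=
      Finset.prod_nonneg fun k _ => by positivity
    have h1 : (0:ℝ) < (σ j) ^ (-(1:ℝ)/2) := Real.rpow_pos_of_pos (hσ j) _
    have h2 : (0:ℝ) ≤ 8 * c' * (σ j) ^ (-(1:ℝ)/2) *
        Real.exp (3 * lam' * ((x j) ^ 2 + (a j) ^ 2)) := by positivity
    have hBj : B j ≤ 8 * c' * (σ j) ^ (-(1:ℝ)/2) *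
        (2 * Real.exp (3 * lam' * ((x j) ^ 2 + (a j) ^ 2))) := by
      simp only [hB, eq_self_iff_true, if_true]
      nlinarith [h2]
    calc B j * ∏ k ∈ Finset.univ.erase j, (2 * Real.exp (3 * lam' * ((x k) ^ 2 + (a k) ^ 2)))
        ≤ (8 * c' * (σ j) ^ (-(1:ℝ)/2) *
            (2 * Real.exp (3 * lam' * ((x j) ^ 2 + (a j) ^ 2)))) *
          ∏ k ∈ Finset.univ.erase j, (2 * Real.exp (3 * lam' * ((x k) ^ 2 + (a k) ^ 2))) :=
          mul_le_mul_of_nonneg_right hBj hpos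
      _ = 8 * c' * (σ j) ^ (-(1:ℝ)/2) *
          (2 * Real.exp (3 * lam' * ((x j) ^ 2 + (a j) ^ 2)) *
            ∏ k ∈ Finset.univ.erase j, (2 * Real.exp (3 * lam' * ((x k) ^ 2 + (a k) ^ 2)))) := by
          ring
  calc |∫ y : Fin n → ℝ, F' (x j) y| ≤ ∫ y : Fin n → ℝ, ∏ k, ψ k (y k) := hstep1
    _ = ∏ k, ∫ s : ℝ, ψ k s := hstep2
    _ ≤ ∏ k, B k := hstep3
    _ ≤ _ := hstep4

set_option maxHeartbeats 1000000 in
/-- There exist `M > 0` and `0 < lam < min_j (4 R_j(T))⁻¹` ... -/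
theorem feynman_kac_first_derivative_bound
    (n : ℕ) (hn : 1 ≤ n) (t₀ T : ℝ) (ht₀ : 0 ≤ t₀) (hT : t₀ < T)
    (R : Fin n → ℝ → ℝ)
    (hRsmooth : ∀ j, ContDiffOn ℝ 1 (R j) (Set.Icc t₀ T))
    (hRnonneg : ∀ j, ∀ t ∈ Set.Icc t₀ T, 0 ≤ R j t)
    (hRmono : ∀ j, StrictMonoOn (R j) (Set.Icc t₀ T))
    (hRT : ∀ j, 0 < R j T)
    (r : Fin n → ℝ → ℝ) (A₁ f : ℝ → ℝ)
    (hr : ∀ j, ContinuousOn (r j) (Set.Icc t₀ T))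
    (hA₁ : ContinuousOn A₁ (Set.Icc t₀ T)) (hf : ContinuousOn f (Set.Icc t₀ T))
    (Cr CA Cf : ℝ) (hrB : ∀ j, ∀ t ∈ Set.Icc t₀ T, |r j t| ≤ Cr)
    (hA₁B : ∀ t ∈ Set.Icc t₀ T, |A₁ t| ≤ CA) (hfB : ∀ t ∈ Set.Icc t₀ T, |f t| ≤ Cf)
    (g : (Fin n → ℝ) → ℝ) (hg : Continuous g)
    (c' lam' : ℝ) (hc' : 0 < c') (hlam' : 0 < lam')
    (hlam'' : ∀ j, lam' < (16 * R j T)⁻¹)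
    (hgrowth : ∀ x : Fin n → ℝ, |g x| ≤ c' * Real.exp (lam' * ∑ j, (x j) ^ 2))
    (u : ℝ → (Fin n → ℝ) → ℝ)
    (hu : ∀ t : ℝ, t₀ ≤ t → t < T → ∀ x : Fin n → ℝ,
      u t x = -(∫ s in t..T, Real.exp (∫ ρ in s..t, A₁ ρ) * f s)
        + Real.exp (-(∫ s in t..T, A₁ s)) *
          ∫ y : Fin n → ℝ, g y *
            ∏ j, (2 * Real.pi * (R j T - R j t)) ^ (-(1 : ℝ) / 2) *
              Real.exp (-(x j - (∫ s in t..T, r j s) - y j) ^ 2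
                / (2 * (R j T - R j t)))) :
    ∃ M lam : ℝ, 0 < M ∧ 0 < lam ∧ (∀ j, lam < (4 * R j T)⁻¹) ∧
      ∀ j, ∀ t : ℝ, t₀ ≤ t → t < T → ∀ x : Fin n → ℝ,
        |deriv (fun ξ => u t (Function.update x j ξ)) (x j)|
          ≤ M * (R j T - R j t) ^ (-(1 : ℝ) / 2) * Real.exp (lam * ∑ j, (x j) ^ 2) := by
  have hCA : 0 ≤ CA := (abs_nonneg _).trans (hA₁B t₀ ⟨le_refl _, hT.le⟩)
  have hCr : 0 ≤ Cr := (abs_nonneg _).trans (hrB ⟨0, hn⟩ t₀ ⟨le_refl _, hT.le⟩)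
  refine ⟨8 * c' * Real.exp (CA * (T - t₀)) *
      (2 * Real.exp (3 * lam' * (Cr * (T - t₀)) ^ 2)) ^ n, 3 * lam',
    by positivity, by positivity, ?_, ?_⟩
  · intro j
    have hR := hRT j
    have h1 := hlam'' j
    rw [inv_eq_one_div, lt_div_iff₀ (by positivity)] at h1 ⊢
    nlinarith
  · intro j t ht1 ht2 x
    have htIcc : t ∈ Set.Icc t₀ T := ⟨ht1, ht2.le⟩
    have hTIcc : T ∈ Set.Icc t₀ T := ⟨hT.le, le_refl T⟩
    have hσ : ∀ k, 0 < R k T - R k t :=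
      fun k => sub_pos.2 (hRmono k htIcc hTIcc ht2)
    have hσle : ∀ k, R k T - R k t ≤ R k T :=
      fun k => by have := hRnonneg k t htIcc; linarith
    have h16 : ∀ k, 16 * lam' * (R k T - R k t) < 1 := by
      intro k
      have h1 := hlam'' k
      have hR := hRT k
      rw [inv_eq_one_div, lt_div_iff₀ (by positivity)] at h1
      nlinarith [hσ k, hσle k]
    obtain ⟨d, hd, hdb⟩ := aux_main j (fun k => R k T - R k t)
      (fun k => ∫ s in t..T, r k s) x hσ g hg c' lam' hc' hlam' hgrowth h16
    have h2 : HasDerivAt (fun ξ => u t (Function.update x j ξ))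
        (Real.exp (-(∫ s in t..T, A₁ s)) * d) (x j) := by
      have h3 := (hd.const_mul (Real.exp (-(∫ s in t..T, A₁ s)))).const_add
        (-(∫ s in t..T, Real.exp (∫ ρ in s..t, A₁ ρ) * f s))
      refine HasDerivAt.congr_of_eventuallyEq h3 ?_
      exact Filter.Eventually.of_forall fun ξ => hu t ht1 ht2 (Function.update x j ξ)
    rw [h2.deriv]
    -- numeric estimates
    have hIA : |∫ s in t..T, A₁ s| ≤ CA * (T - t) := by
      have := intervalIntegral.norm_integral_le_of_norm_le_const
        (C := CA) (f := A₁) (a := t) (b := T) (fun s hs => by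
          rw [Set.uIoc_of_le ht2.le] at hs
          exact hA₁B s ⟨le_trans ht1 hs.1.le, hs.2⟩)
      rwa [Real.norm_eq_abs, abs_of_nonneg (by linarith : (0:ℝ) ≤ T - t)] at this
    have hC2 : Real.exp (-(∫ s in t..T, A₁ s)) ≤ Real.exp (CA * (T - t₀)) := by
      apply Real.exp_le_exp.2
      have h4 := neg_le_abs (∫ s in t..T, A₁ s)
      have h5 : CA * (T - t) ≤ CA * (T - t₀) := by nlinarith
      linarith
    have hak : ∀ k, (∫ s in t..T, r k s) ^ 2 ≤ (Cr * (T - t₀)) ^ 2 := by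
      intro k
      have h6 : |∫ s in t..T, r k s| ≤ Cr * (T - t) := by
        have := intervalIntegral.norm_integral_le_of_norm_le_const
          (C := Cr) (f := r k) (a := t) (b := T) (fun s hs => by
            rw [Set.uIoc_of_le ht2.le] at hs
            exact hrB k s ⟨le_trans ht1 hs.1.le, hs.2⟩)
        rwa [Real.norm_eq_abs, abs_of_nonneg (by linarith : (0:ℝ) ≤ T - t)] at this
      have h7 : |∫ s in t..T, r k s| ≤ Cr * (T - t₀) := by nlinarith
      nlinarith [abs_nonneg (∫ s in t..T, r k s), sq_abs (∫ s in t..T, r k s)]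
    have hprodle : (∏ k, (2 * Real.exp (3 * lam' * ((x k) ^ 2 + (∫ s in t..T, r k s) ^ 2))))
        ≤ (2 * Real.exp (3 * lam' * (Cr * (T - t₀)) ^ 2)) ^ n *
            Real.exp (3 * lam' * ∑ k, (x k) ^ 2) := by
      have hple : (∏ k, (2 * Real.exp (3 * lam' * ((x k) ^ 2 + (∫ s in t..T, r k s) ^ 2))))
          ≤ ∏ k, (2 * Real.exp (3 * lam' * (Cr * (T - t₀)) ^ 2) *
              Real.exp (3 * lam' * (x k) ^ 2)) := by
        apply Finset.prod_le_prod (fun k _ => by positivity)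
        intro k _
        rw [show 3 * lam' * ((x k) ^ 2 + (∫ s in t..T, r k s) ^ 2)
            = 3 * lam' * (∫ s in t..T, r k s) ^ 2 + 3 * lam' * (x k) ^ 2 by ring,
          Real.exp_add, ← mul_assoc]
        apply mul_le_mul_of_nonneg_right _ (Real.exp_nonneg _)
        have := hak k
        nlinarith [Real.exp_le_exp.2 (by nlinarith [hak k] :
          3 * lam' * (∫ s in t..T, r k s) ^ 2 ≤ 3 * lam' * (Cr * (T - t₀)) ^ 2),
          Real.exp_pos (3 * lam' * (∫ s in t..T, r k s) ^ 2)]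
      refine hple.trans (le_of_eq ?_)
      rw [Finset.prod_mul_distrib, Finset.prod_const, Finset.card_univ, Fintype.card_fin,
        ← Real.exp_sum, ← Finset.mul_sum]
    have hrp : (0:ℝ) < (R j T - R j t) ^ (-(1:ℝ)/2) := Real.rpow_pos_of_pos (hσ j) _
    calc |Real.exp (-(∫ s in t..T, A₁ s)) * d|
        = Real.exp (-(∫ s in t..T, A₁ s)) * |d| := by
          rw [abs_mul, abs_of_pos (Real.exp_pos _)]
      _ ≤ Real.exp (CA * (T - t₀)) *
          (8 * c' * (R j T - R j t) ^ (-(1:ℝ)/2) *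
            ∏ k, (2 * Real.exp (3 * lam' * ((x k) ^ 2 + (∫ s in t..T, r k s) ^ 2)))) := by
          apply mul_le_mul hC2 hdb (abs_nonneg d) (Real.exp_nonneg _)
      _ ≤ Real.exp (CA * (T - t₀)) *
          (8 * c' * (R j T - R j t) ^ (-(1:ℝ)/2) *
            ((2 * Real.exp (3 * lam' * (Cr * (T - t₀)) ^ 2)) ^ n *
              Real.exp (3 * lam' * ∑ k, (x k) ^ 2))) := by
          apply mul_le_mul_of_nonneg_left _ (Real.exp_nonneg _)
          apply mul_le_mul_of_nonneg_left hprodle (by positivity)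
      _ = 8 * c' * Real.exp (CA * (T - t₀)) *
            (2 * Real.exp (3 * lam' * (Cr * (T - t₀)) ^ 2)) ^ n *
            (R j T - R j t) ^ (-(1:ℝ)/2) * Real.exp (3 * lam' * ∑ k, (x k) ^ 2) := by
          ring
end

section
/- There exist constants M > 0 and 0 < λ < min_{1≤j≤n} (4 R_j(T))^{−1} such that for every j = 1,…,n, |∂²u/∂x_j²(t,x)| ≤ M (R_j(T) − R_j(t))^{−1} exp(λ|x|²) for all (t,x) ∈ [t₀,T) × ℝⁿ. -/
open Real MeasureTheory intervalIntegral

lemma fk_complete_square (β γ δ : ℝ) (hβ : 0 < β) :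
    Integrable (fun y : ℝ => Real.exp (-β*y^2 + γ*y + δ)) ∧
    ∫ y : ℝ, Real.exp (-β*y^2 + γ*y + δ)
      = Real.sqrt (π/β) * Real.exp (γ^2/(4*β) + δ) := by
  have key : ∀ y : ℝ, -β*y^2 + γ*y + δ = -β*(y - γ/(2*β))^2 + (γ^2/(4*β) + δ) := by
    intro y; field_simp; ring
  have hfun : (fun y : ℝ => Real.exp (-β*y^2 + γ*y + δ))
      = fun y : ℝ => Real.exp (γ^2/(4*β) + δ) * Real.exp (-β*(y - γ/(2*β))^2) := by
    funext y; rw [key y, ← Real.exp_add]; ring_nf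
  constructor
  · rw [hfun]
    have : Integrable (fun y : ℝ => Real.exp (-β*y^2)) := by
      simpa using integrable_exp_neg_mul_sq hβ
    exact (this.comp_sub_right (γ/(2*β))).const_mul _
  · rw [hfun, MeasureTheory.integral_const_mul]
    have : (∫ y : ℝ, Real.exp (-β*(y - γ/(2*β))^2)) = ∫ y : ℝ, Real.exp (-β*y^2) := by
      exact MeasureTheory.integral_sub_right_eq_self (fun y => Real.exp (-β*y^2)) (γ/(2*β))
    rw [this]
    have := integral_gaussian β
    simp only [neg_mul] at this ⊢
    rw [this]; ring

lemma fk_shift (s z z₀ : ℝ) (hs : 0 < s) (h : |z - z₀| ≤ 1) :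
    Real.exp (-z^2/(4*s)) ≤ Real.exp ((4*s)⁻¹) * Real.exp (-z₀^2/(8*s)) := by
  rw [← Real.exp_add]
  apply Real.exp_le_exp.2
  have h3 : (z - z₀)^2 ≤ 1 := by
    nlinarith [sq_abs (z - z₀), abs_nonneg (z - z₀)]
  have h4 : z₀^2 ≤ 2*z^2 + 2 := by nlinarith [sq_nonneg (z + z₀ - 2*z), sq_nonneg (z - z₀ + z)]
  have hs8 : (0:ℝ) < 8*s := by linarith
  rw [← sub_nonneg]
  have heq : (4*s)⁻¹ + -z₀^2/(8*s) - (-z^2/(4*s)) = (2 + 2*z^2 - z₀^2)/(8*s) := by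
    field_simp; ring
  rw [heq]
  apply div_nonneg _ hs8.le
  linarith

lemma fk_sqrt16 : Real.sqrt 16 = 4 := by
  rw [show (16:ℝ) = 4^2 by norm_num, Real.sqrt_sq (by norm_num : (0:ℝ) ≤ 4)]

/-- Integral bound for `exp (lam' y² − (y−m)²/(a s))`. -/
lemma fk_int_bound (lam' s RT m a : ℝ) (hs : 0 < s) (hsR : s ≤ RT) (hlam' : 0 < lam')
    (hl : lam' < (16*RT)⁻¹) (ha : 0 < a) (ha8 : a ≤ 8) :
    Integrable (fun y : ℝ => Real.exp (lam' * y^2 - (y - m)^2/(a*s))) ∧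
    ∫ y : ℝ, Real.exp (lam' * y^2 - (y - m)^2/(a*s))
      ≤ 4 * Real.sqrt π * Real.sqrt s * Real.exp (2 * lam' * m^2) := by
  have hRT : 0 < RT := lt_of_lt_of_le hs hsR
  have has : 0 < a * s := by positivity
  set β := (a*s)⁻¹ - lam' with hβdef
  have hlam16 : lam' < (16*s)⁻¹ := by
    apply hl.trans_le
    apply inv_anti₀ (by linarith) (by linarith)
  have h2as16 : 2*(a*s) ≤ 16*s := by nlinarith
  have hβlb : (2*(a*s))⁻¹ ≤ β := by
    rw [hβdef]
    have h1 : (16*s)⁻¹ ≤ (2*(a*s))⁻¹ := inv_anti₀ (by positivity) h2as16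
    have h2 : (a*s)⁻¹ = 2 * (2*(a*s))⁻¹ := by field_simp
    rw [h2]; linarith
  have hβ : 0 < β := lt_of_lt_of_le (by positivity) hβlb
  set γ := 2*m/(a*s) with hγdef
  set δ := -m^2/(a*s) with hδdef
  have hfun : (fun y : ℝ => Real.exp (lam' * y^2 - (y - m)^2/(a*s)))
      = fun y : ℝ => Real.exp (-β*y^2 + γ*y + δ) := by
    funext y
    congr 1
    rw [hβdef, hγdef, hδdef]
    field_simp; ring
  obtain ⟨hint, hval⟩ := fk_complete_square β γ δ hβ
  refine ⟨hfun ▸ hint, ?_⟩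
  rw [hfun, hval]
  have f1 : Real.sqrt (π/β) ≤ 4 * Real.sqrt π * Real.sqrt s := by
    have h1 : π/β ≤ π * (16*s) := by
      calc π/β ≤ π/(2*(a*s))⁻¹ :=
            div_le_div_of_nonneg_left (le_of_lt pi_pos) (by positivity) hβlb
        _ = π * (2*(a*s)) := by field_simp
        _ ≤ π * (16*s) := mul_le_mul_of_nonneg_left h2as16 (le_of_lt pi_pos)
    calc Real.sqrt (π/β) ≤ Real.sqrt (π * (16*s)) := Real.sqrt_le_sqrt h1
      _ = Real.sqrt π * (Real.sqrt 16 * Real.sqrt s) := by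
          rw [Real.sqrt_mul pi_pos.le, Real.sqrt_mul (by norm_num : (0:ℝ) ≤ 16)]
      _ = 4 * Real.sqrt π * Real.sqrt s := by rw [fk_sqrt16]; ring
  have hkl : a*s*lam' ≤ 1/2 := by
    have h7 : lam' ≤ (2*(a*s))⁻¹ := le_of_lt (lt_of_lt_of_le hlam16
      (inv_anti₀ (by positivity) h2as16))
    calc a*s*lam' ≤ a*s*(2*(a*s))⁻¹ := mul_le_mul_of_nonneg_left h7 has.le
      _ = 1/2 := by field_simp
  have hkβ : a*s*β = 1 - a*s*lam' := by rw [hβdef]; field_simp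
  have f2 : γ^2/(4*β) + δ ≤ 2 * lam' * m^2 := by
    have hkey : 1 ≤ (a*s*β)*(2*lam'*(a*s) + 1) := by
      rw [hkβ]
      nlinarith [mul_pos has hlam']
    have hstep : 1/(a*s)^2 ≤ β*(2*lam' + 1/(a*s)) := by
      rw [← sub_nonneg]
      have heq3 : β*(2*lam' + 1/(a*s)) - 1/(a*s)^2
          = ((a*s*β)*(2*lam'*(a*s)+1) - 1)/(a*s)^2 := by
        field_simp
      rw [heq3]
      exact div_nonneg (by linarith) (by positivity)
    have hγ2 : γ^2 = 4*m^2/(a*s)^2 := by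
      rw [hγdef]; field_simp; ring
    have h11 : γ^2/(4*β) = m^2*(1/(a*s)^2)*β⁻¹ := by rw [hγ2, div_eq_mul_inv, mul_inv]; ring
    have h12 : m^2*(1/(a*s)^2)*β⁻¹ ≤ m^2*(β*(2*lam'+1/(a*s)))*β⁻¹ :=
      mul_le_mul_of_nonneg_right (mul_le_mul_of_nonneg_left hstep (sq_nonneg m))
        (inv_nonneg.2 hβ.le)
    have h13 : m^2*(β*(2*lam'+1/(a*s)))*β⁻¹ = m^2*(2*lam') + m^2*(1/(a*s)) := by
      field_simp
    rw [h11, hδdef]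
    have hd : -m^2/(a*s) = -(m^2*(1/(a*s))) := by ring
    rw [hd]
    linarith
  calc Real.sqrt (π/β) * Real.exp (γ^2/(4*β) + δ)
      ≤ (4 * Real.sqrt π * Real.sqrt s) * Real.exp (2 * lam' * m^2) :=
        mul_le_mul f1 (Real.exp_le_exp.2 f2) (Real.exp_nonneg _) (by positivity)

lemma fk_kderiv (s : ℝ) (hs : s ≠ 0) (z : ℝ) :
    HasDerivAt (fun z : ℝ => Real.exp (-z^2/(2*s)))
      ((-z/s) * Real.exp (-z^2/(2*s))) z := by
  have h1 : HasDerivAt (fun z : ℝ => -z^2/(2*s)) (-z/s) z := by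
    have h2 : HasDerivAt (fun z : ℝ => z^2) (2*z) z := by
      simpa [mul_comm] using (hasDerivAt_pow 2 z)
    have := (h2.neg).div_const (2*s)
    refine this.congr_deriv ?_
    ring
  simpa [mul_comm] using h1.exp

lemma fk_kderiv2 (s : ℝ) (hs : s ≠ 0) (z : ℝ) :
    HasDerivAt (fun z : ℝ => (-z/s) * Real.exp (-z^2/(2*s)))
      ((z^2/s^2 - 1/s) * Real.exp (-z^2/(2*s))) z := by
  have h1 : HasDerivAt (fun z : ℝ => -z/s) (-1/s) z := by
    simpa using (((hasDerivAt_id z).neg).div_const s)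
  have := h1.mul (fk_kderiv s hs z)
  refine this.congr_deriv ?_
  ring

lemma fk_exp_split (s z : ℝ) (hs : 0 < s) :
    Real.exp (-z^2/(2*s)) = Real.exp (-z^2/(4*s)) * Real.exp (-z^2/(4*s)) := by
  rw [← Real.exp_add]; congr 1; field_simp; ring

lemma fk_key1 (s z : ℝ) (hs : 0 < s) :
    |z| * Real.exp (-z^2/(4*s)) ≤ Real.sqrt s := by
  have hss : Real.sqrt s * Real.sqrt s = s := Real.mul_self_sqrt hs.le
  have hsq : (0:ℝ) < Real.sqrt s := Real.sqrt_pos.2 hs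
  have hE : 1 + z^2/(4*s) ≤ Real.exp (z^2/(4*s)) := by
    have := Real.add_one_le_exp (z^2/(4*s)); linarith
  have h1 : 4*Real.sqrt s*|z| ≤ 4*s + z^2 := by
    nlinarith [sq_nonneg (2*Real.sqrt s - |z|), sq_abs z]
  have h2 : |z| ≤ Real.sqrt s * (1 + z^2/(4*s)) := by
    rw [← sub_nonneg]
    have heq : Real.sqrt s * (1 + z^2/(4*s)) - |z|
        = (Real.sqrt s * (4*s + z^2) - 4*s*|z|)/(4*s) := by field_simp
    rw [heq]
    apply div_nonneg _ (by linarith)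
    have h3 : Real.sqrt s * (4*Real.sqrt s*|z|) ≤ Real.sqrt s * (4*s + z^2) :=
      mul_le_mul_of_nonneg_left h1 hsq.le
    nlinarith
  have h4 : |z| ≤ Real.sqrt s * Real.exp (z^2/(4*s)) :=
    h2.trans (mul_le_mul_of_nonneg_left hE hsq.le)
  rw [show -z^2/(4*s) = -(z^2/(4*s)) by ring, Real.exp_neg]
  rw [mul_inv_le_iff₀ (Real.exp_pos _)]
  linarith [h4]

lemma fk_key2 (s z : ℝ) (hs : 0 < s) :
    z^2 * Real.exp (-z^2/(4*s)) ≤ 2*s := by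
  have hE2 : 1 + z^2/(8*s) ≤ Real.exp (z^2/(8*s)) := by
    have := Real.add_one_le_exp (z^2/(8*s)); linarith
  have hpos : (0:ℝ) ≤ 1 + z^2/(8*s) := by positivity
  have hsq : (1 + z^2/(8*s))^2 ≤ Real.exp (z^2/(4*s)) := by
    have h := mul_le_mul hE2 hE2 hpos (Real.exp_nonneg _)
    rw [← Real.exp_add] at h
    calc (1 + z^2/(8*s))^2 = (1 + z^2/(8*s)) * (1 + z^2/(8*s)) := sq (1 + z^2/(8*s)) ▸ by ring
      _ ≤ Real.exp (z^2/(8*s) + z^2/(8*s)) := h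
      _ = Real.exp (z^2/(4*s)) := by congr 1; field_simp; ring
  have h5 : z^2 ≤ 2*s*(1 + z^2/(8*s))^2 := by
    rw [← sub_nonneg]
    have heq : 2*s*(1 + z^2/(8*s))^2 - z^2 = (z^2 - 8*s)^2/(32*s) := by field_simp; ring
    rw [heq]; positivity
  have h6 : z^2 ≤ 2*s*Real.exp (z^2/(4*s)) := by nlinarith
  rw [show -z^2/(4*s) = -(z^2/(4*s)) by ring, Real.exp_neg]
  rw [mul_inv_le_iff₀ (Real.exp_pos _)]
  linarith

lemma fk_bound1 (s z : ℝ) (hs : 0 < s) :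
    |(-z/s) * Real.exp (-z^2/(2*s))| ≤ (Real.sqrt s)⁻¹ * Real.exp (-z^2/(4*s)) := by
  have hsq : (0:ℝ) < Real.sqrt s := Real.sqrt_pos.2 hs
  have hss : Real.sqrt s * Real.sqrt s = s := Real.mul_self_sqrt hs.le
  have expand : |(-z/s) * Real.exp (-z^2/(2*s))| = (|z|/s) * Real.exp (-z^2/(2*s)) := by
    rw [abs_mul, abs_of_nonneg (Real.exp_nonneg _), abs_div, abs_neg, abs_of_pos hs]
  rw [expand, fk_exp_split s z hs]
  calc |z|/s * (Real.exp (-z^2/(4*s)) * Real.exp (-z^2/(4*s)))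
      = (|z| * Real.exp (-z^2/(4*s))) * (s⁻¹ * Real.exp (-z^2/(4*s))) := by ring
    _ ≤ Real.sqrt s * (s⁻¹ * Real.exp (-z^2/(4*s))) :=
        mul_le_mul_of_nonneg_right (fk_key1 s z hs) (by positivity)
    _ = (Real.sqrt s)⁻¹ * Real.exp (-z^2/(4*s)) := by
        field_simp
        nlinarith [Real.exp_pos (-z^2/(4*s))]

lemma fk_bound2 (s z : ℝ) (hs : 0 < s) :
    |(z^2/s^2 - 1/s) * Real.exp (-z^2/(2*s))| ≤ (3/s) * Real.exp (-z^2/(4*s)) := by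
  have h0 : |z^2/s^2 - 1/s| ≤ z^2/s^2 + 1/s := by
    refine (abs_sub _ _).trans ?_
    rw [abs_of_nonneg (by positivity), abs_of_nonneg (by positivity)]
  have hexp : (0:ℝ) < Real.exp (-z^2/(2*s)) := Real.exp_pos _
  have step1 : |(z^2/s^2 - 1/s) * Real.exp (-z^2/(2*s))|
      ≤ (z^2/s^2 + 1/s) * Real.exp (-z^2/(2*s)) := by
    rw [abs_mul, abs_of_nonneg hexp.le]
    exact mul_le_mul_of_nonneg_right h0 hexp.le
  refine step1.trans ?_
  rw [fk_exp_split s z hs]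
  have hA : z^2/s^2 * (Real.exp (-z^2/(4*s)) * Real.exp (-z^2/(4*s)))
      ≤ (2/s) * Real.exp (-z^2/(4*s)) := by
    calc z^2/s^2 * (Real.exp (-z^2/(4*s)) * Real.exp (-z^2/(4*s)))
        = (z^2 * Real.exp (-z^2/(4*s))) * (s⁻¹*s⁻¹ * Real.exp (-z^2/(4*s))) := by ring
      _ ≤ (2*s) * (s⁻¹*s⁻¹ * Real.exp (-z^2/(4*s))) :=
          mul_le_mul_of_nonneg_right (fk_key2 s z hs) (by positivity)
      _ = (2/s) * Real.exp (-z^2/(4*s)) := by field_simp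
  have hB : (1/s) * (Real.exp (-z^2/(4*s)) * Real.exp (-z^2/(4*s)))
      ≤ (1/s) * Real.exp (-z^2/(4*s)) := by
    have h1 : Real.exp (-z^2/(4*s)) ≤ 1 := by
      rw [Real.exp_le_one_iff, neg_div]
      have : (0:ℝ) ≤ z^2/(4*s) := by positivity
      linarith
    have := mul_le_mul_of_nonneg_right h1 (Real.exp_nonneg (-z^2/(4*s)))
    rw [one_mul] at this
    exact mul_le_mul_of_nonneg_left this (by positivity)
  have expand2 : (z^2/s^2 + 1/s) * (Real.exp (-z^2/(4*s)) * Real.exp (-z^2/(4*s)))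
      = z^2/s^2 * (Real.exp (-z^2/(4*s)) * Real.exp (-z^2/(4*s)))
        + (1/s) * (Real.exp (-z^2/(4*s)) * Real.exp (-z^2/(4*s))) := by ring
  rw [expand2]
  have : (2/s) * Real.exp (-z^2/(4*s)) + (1/s) * Real.exp (-z^2/(4*s))
      = (3/s) * Real.exp (-z^2/(4*s)) := by ring
  linarith

lemma fk_master {n : ℕ} (j : Fin n) (ξ₀ : ℝ) (W : (Fin n → ℝ) → ℝ) (hW : Continuous W)
    (w : Fin n → ℝ → ℝ) (hwnn : ∀ i v, 0 ≤ w i v)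
    (hwb : ∀ y : Fin n → ℝ, |W y| ≤ ∏ i, w i (y i))
    (s c : ℝ) (hs : 0 < s)
    (k k' : ℝ → ℝ) (hk : ∀ z, HasDerivAt k (k' z) z) (hkc : Continuous k)
    (hk'c : Continuous k')
    (κ₀ κ : ℝ) (hκ₀ : 0 ≤ κ₀) (hκ : 0 ≤ κ)
    (hkb : ∀ z, |k z| ≤ κ₀ * Real.exp (-z^2/(4*s)))
    (hk'b : ∀ z, |k' z| ≤ κ * Real.exp (-z^2/(4*s)))
    (hwi : ∀ i, i ≠ j → Integrable (w i))
    (hwj : Integrable (fun v => w j v * Real.exp (-(ξ₀ - c - v)^2/(8*s)))) :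
    HasDerivAt (fun ξ => ∫ y : Fin n → ℝ, W y * k (ξ - c - y j))
      (∫ y : Fin n → ℝ, W y * k' (ξ₀ - c - y j)) ξ₀ := by
  set B : Fin n → ℝ → ℝ :=
    Function.update w j (fun v => w j v * Real.exp (-(ξ₀ - c - v)^2/(8*s))) with hBdef
  have hBint : ∀ i, Integrable (B i) := by
    intro i
    rcases eq_or_ne i j with rfl | hij
    · rw [hBdef, Function.update_self]; exact hwj
    · rw [hBdef, Function.update_of_ne hij]; exact hwi i hij
  have hprod_int : Integrable (fun y : Fin n → ℝ => ∏ i, B i (y i)) :=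
    Integrable.fintype_prod (𝕜 := ℝ) hBint
  have hprod_eq : ∀ y : Fin n → ℝ,
      (∏ i, w i (y i)) * Real.exp (-(ξ₀ - c - y j)^2/(8*s)) = ∏ i, B i (y i) := by
    intro y
    have h1 : ∏ i, w i (y i) = w j (y j) * ∏ i ∈ Finset.univ.erase j, w i (y i) :=
      (Finset.mul_prod_erase Finset.univ (fun i => w i (y i)) (Finset.mem_univ j)).symm
    have h2 : ∏ i, B i (y i) = B j (y j) * ∏ i ∈ Finset.univ.erase j, B i (y i) :=
      (Finset.mul_prod_erase Finset.univ (fun i => B i (y i)) (Finset.mem_univ j)).symm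
    have h3 : ∀ i ∈ Finset.univ.erase j, B i (y i) = w i (y i) := by
      intro i hi
      rw [hBdef, Function.update_of_ne (Finset.mem_erase.1 hi).1]
    rw [h1, h2, Finset.prod_congr rfl h3, hBdef, Function.update_self]
    ring
  have hkey : ∀ (q : ℝ → ℝ) (κq : ℝ), 0 ≤ κq →
      (∀ z, |q z| ≤ κq * Real.exp (-z^2/(4*s))) →
      ∀ ξ ∈ Metric.ball ξ₀ 1, ∀ y : Fin n → ℝ,
      |W y * q (ξ - c - y j)| ≤ κq * Real.exp ((4*s)⁻¹) * ∏ i, B i (y i) := by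
    intro q κq hκq hqb ξ hξ y
    have hball : |(ξ - c - y j) - (ξ₀ - c - y j)| ≤ 1 := by
      rw [Metric.mem_ball, Real.dist_eq] at hξ
      have : (ξ - c - y j) - (ξ₀ - c - y j) = ξ - ξ₀ := by ring
      rw [this]; exact hξ.le
    have hshift := fk_shift s (ξ - c - y j) (ξ₀ - c - y j) hs hball
    have hprodnn : (0:ℝ) ≤ ∏ i, w i (y i) :=
      Finset.prod_nonneg (fun i _ => hwnn i (y i))
    calc |W y * q (ξ - c - y j)| = |W y| * |q (ξ - c - y j)| := abs_mul _ _
      _ ≤ (∏ i, w i (y i)) * (κq * Real.exp (-(ξ - c - y j)^2/(4*s))) :=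
          mul_le_mul (hwb y) (hqb _) (abs_nonneg _) hprodnn
      _ ≤ (∏ i, w i (y i)) * (κq * (Real.exp ((4*s)⁻¹)
            * Real.exp (-(ξ₀ - c - y j)^2/(8*s)))) := by
          apply mul_le_mul_of_nonneg_left _ hprodnn
          exact mul_le_mul_of_nonneg_left hshift hκq
      _ = κq * Real.exp ((4*s)⁻¹)
            * ((∏ i, w i (y i)) * Real.exp (-(ξ₀ - c - y j)^2/(8*s))) := by ring
      _ = κq * Real.exp ((4*s)⁻¹) * ∏ i, B i (y i) := by rw [hprod_eq y]
  have hmeas : ∀ ξ : ℝ, AEStronglyMeasurable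
      (fun y : Fin n → ℝ => W y * k (ξ - c - y j)) volume := by
    intro ξ
    exact (hW.mul (hkc.comp (continuous_const.sub (continuous_apply j)))).aestronglyMeasurable
  have h := hasDerivAt_integral_of_dominated_loc_of_deriv_le
    (F := fun ξ (y : Fin n → ℝ) => W y * k (ξ - c - y j))
    (F' := fun ξ (y : Fin n → ℝ) => W y * k' (ξ - c - y j))
    (x₀ := ξ₀) (s := Metric.ball ξ₀ 1)
    (bound := fun y => κ * Real.exp ((4*s)⁻¹) * ∏ i, B i (y i))
    (Metric.ball_mem_nhds ξ₀ one_pos)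
    (Filter.Eventually.of_forall fun ξ => hmeas ξ)
    ?hint
    ((hW.mul (hk'c.comp (continuous_const.sub (continuous_apply j)))).aestronglyMeasurable)
    ?hbound
    ((hprod_int.const_mul _))
    ?hdiff
  · exact h.2
  case hint =>
    apply Integrable.mono' ((hprod_int.const_mul (κ₀ * Real.exp ((4*s)⁻¹))))
      (hmeas ξ₀)
    exact Filter.Eventually.of_forall fun y =>
      (Real.norm_eq_abs _ ▸ hkey k κ₀ hκ₀ hkb ξ₀ (Metric.mem_ball_self one_pos) y)
  case hbound =>
    exact Filter.Eventually.of_forall fun y ξ hξ =>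
      (Real.norm_eq_abs _ ▸ hkey k' κ hκ hk'b ξ hξ y)
  case hdiff =>
    apply Filter.Eventually.of_forall
    intro y ξ hξ
    have h1 : HasDerivAt (fun ξ : ℝ => ξ - c - y j) 1 ξ := by
      simpa using ((hasDerivAt_id ξ).sub_const c).sub_const (y j)
    have h2 := (hk (ξ - c - y j)).comp ξ h1
    have h3 := h2.const_mul (W y)
    simpa [Function.comp] using h3

lemma fk_exp_le (s z : ℝ) (hs : 0 < s) :
    Real.exp (-z^2/(2*s)) ≤ Real.exp (-z^2/(4*s)) := by
  apply Real.exp_le_exp.2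
  rw [div_le_div_iff₀ (by linarith) (by linarith)]
  nlinarith [sq_nonneg z]

lemma fk_kc_eq (s : ℝ) (hs : 0 < s) :
    (2*π*s) ^ (-(1:ℝ)/2) = (Real.sqrt (2*π*s))⁻¹ := by
  have h2πs : (0:ℝ) < 2*π*s := by positivity
  rw [show -(1:ℝ)/2 = -(1/2 : ℝ) by norm_num, Real.rpow_neg h2πs.le,
    ← Real.sqrt_eq_rpow]

lemma fk_kc_pos (s : ℝ) (hs : 0 < s) : 0 < (2*π*s) ^ (-(1:ℝ)/2) := by
  have h2πs : (0:ℝ) < 2*π*s := by positivity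
  exact Real.rpow_pos_of_pos h2πs _

lemma fk_kc_bound (s : ℝ) (hs : 0 < s) :
    (2*π*s) ^ (-(1:ℝ)/2) * (4*Real.sqrt π*Real.sqrt s) ≤ 3 := by
  rw [fk_kc_eq s hs]
  have h2πs : (0:ℝ) < 2*π*s := by positivity
  have hsqrt : Real.sqrt (2*π*s) = Real.sqrt 2 * Real.sqrt π * Real.sqrt s := by
    rw [show 2*π*s = 2*(π*s) by ring, Real.sqrt_mul (by norm_num : (0:ℝ) ≤ 2),
      Real.sqrt_mul pi_pos.le, mul_assoc]
  rw [hsqrt]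
  have hs2 : (0:ℝ) < Real.sqrt 2 := Real.sqrt_pos.2 (by norm_num)
  have hsπ : (0:ℝ) < Real.sqrt π := Real.sqrt_pos.2 pi_pos
  have hss : (0:ℝ) < Real.sqrt s := Real.sqrt_pos.2 hs
  have h22 : Real.sqrt 2 * Real.sqrt 2 = 2 := Real.mul_self_sqrt (by norm_num)
  have key : (Real.sqrt 2 * Real.sqrt π * Real.sqrt s)⁻¹ * (4*Real.sqrt π*Real.sqrt s)
      = 4 / Real.sqrt 2 := by
    field_simp
    
  rw [key, div_le_iff₀ hs2]
  nlinarith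
set_option maxHeartbeats 2000000 in
/-- There exist `M > 0` and `0 < λ < min_j (4 R_j(T))⁻¹` such that for
every `j`, `|∂²u/∂x_j²(t,x)| ≤ M (R_j(T) − R_j(t))⁻¹ exp(λ|x|²)` for all
`(t,x) ∈ [t₀,T) × ℝⁿ`. -/
theorem feynman_kac_second_derivative_bound
    (n : ℕ) (hn : 1 ≤ n) (t₀ T : ℝ) (ht₀ : 0 ≤ t₀) (hT : t₀ < T)
    (R : Fin n → ℝ → ℝ)
    (hRsmooth : ∀ j, ContDiffOn ℝ 1 (R j) (Set.Icc t₀ T))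
    (hRnonneg : ∀ j, ∀ t ∈ Set.Icc t₀ T, 0 ≤ R j t)
    (hRmono : ∀ j, StrictMonoOn (R j) (Set.Icc t₀ T))
    (hRT : ∀ j, 0 < R j T)
    (r : Fin n → ℝ → ℝ) (A₁ f : ℝ → ℝ)
    (hr : ∀ j, ContinuousOn (r j) (Set.Icc t₀ T))
    (hA₁ : ContinuousOn A₁ (Set.Icc t₀ T)) (hf : ContinuousOn f (Set.Icc t₀ T))
    (Cr CA Cf : ℝ) (hrB : ∀ j, ∀ t ∈ Set.Icc t₀ T, |r j t| ≤ Cr)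
    (hA₁B : ∀ t ∈ Set.Icc t₀ T, |A₁ t| ≤ CA) (hfB : ∀ t ∈ Set.Icc t₀ T, |f t| ≤ Cf)
    (g : (Fin n → ℝ) → ℝ) (hg : Continuous g)
    (c' lam' : ℝ) (hc' : 0 < c') (hlam' : 0 < lam')
    (hlam'' : ∀ j, lam' < (16 * R j T)⁻¹)
    (hgrowth : ∀ x : Fin n → ℝ, |g x| ≤ c' * Real.exp (lam' * ∑ j, (x j) ^ 2))
    (u : ℝ → (Fin n → ℝ) → ℝ)
    (hu : ∀ t : ℝ, t₀ ≤ t → t < T → ∀ x : Fin n → ℝ,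
      u t x = -(∫ s in t..T, Real.exp (∫ ρ in s..t, A₁ ρ) * f s)
        + Real.exp (-(∫ s in t..T, A₁ s)) *
          ∫ y : Fin n → ℝ, g y *
            ∏ j, (2 * Real.pi * (R j T - R j t)) ^ (-(1 : ℝ) / 2) *
              Real.exp (-(x j - (∫ s in t..T, r j s) - y j) ^ 2
                / (2 * (R j T - R j t)))) :
    ∃ M lam : ℝ, 0 < M ∧ 0 < lam ∧ (∀ j, lam < (4 * R j T)⁻¹) ∧
      ∀ j, ∀ t : ℝ, t₀ ≤ t → t < T → ∀ x : Fin n → ℝ,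
        |deriv (deriv (fun ξ => u t (Function.update x j ξ))) (x j)|
          ≤ M * (R j T - R j t)⁻¹ * Real.exp (lam * ∑ j, (x j) ^ 2) := by
  classical
  have ht₀T : t₀ ≤ T := hT.le
  refine ⟨3 * Real.exp (CA*(T-t₀)) * (3*(c'+1))^n *
      Real.exp (4*(n:ℝ)*lam'*(Cr*(T-t₀))^2), 4*lam',
    by positivity, by linarith, ?_, ?_⟩
  · intro i
    have hR : 0 < R i T := hRT i
    have heq : (4:ℝ) * (16*R i T)⁻¹ = (4*R i T)⁻¹ := by
      field_simp; ring
    calc (4:ℝ)*lam' < 4*(16*R i T)⁻¹ := by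
          have := hlam'' i; linarith
      _ = (4*R i T)⁻¹ := heq
  intro j t ht1 ht2 x
  have htT : t ∈ Set.Icc t₀ T := ⟨ht1, ht2.le⟩
  have hTmem : T ∈ Set.Icc t₀ T := ⟨ht₀T, le_refl T⟩
  have hσpos : ∀ i, 0 < R i T - R i t := fun i =>
    sub_pos.2 (hRmono i htT hTmem ht2)
  have hσle : ∀ i, R i T - R i t ≤ R i T := fun i => by
    have := hRnonneg i t htT; linarith
  have hCr0 : 0 ≤ Cr := le_trans (abs_nonneg _) (hrB ⟨0, hn⟩ t₀ ⟨le_refl _, ht₀T⟩)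
  have hCA0 : 0 ≤ CA := le_trans (abs_nonneg _) (hA₁B t₀ ⟨le_refl _, ht₀T⟩)
  have hEB : Real.exp (-(∫ s in t..T, A₁ s)) ≤ Real.exp (CA*(T-t₀)) := by
    apply Real.exp_le_exp.2
    have h1 : ‖∫ s in t..T, A₁ s‖ ≤ CA * |T - t| := by
      apply intervalIntegral.norm_integral_le_of_norm_le_const
      intro s hs
      rw [Set.uIoc_of_le ht2.le] at hs
      exact (Real.norm_eq_abs _) ▸ hA₁B s ⟨ht1.trans hs.1.le, hs.2⟩
    rw [Real.norm_eq_abs, abs_of_nonneg (by linarith : (0:ℝ) ≤ T - t)] at h1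
    have h2 := (abs_le.1 h1).1
    have h3 : CA*(T-t) ≤ CA*(T-t₀) := by nlinarith
    linarith
  -- local definitions
  set kc : Fin n → ℝ := fun i => (2*Real.pi*(R i T - R i t)) ^ (-(1:ℝ)/2) with hkc_def
  set ci : Fin n → ℝ := fun i => ∫ s in t..T, r i s with hci_def
  have hkcpos : ∀ i, 0 < kc i := fun i => by
    rw [hkc_def]; exact fk_kc_pos _ (hσpos i)
  have hkcb : ∀ i, kc i * (4*Real.sqrt Real.pi*Real.sqrt (R i T - R i t)) ≤ 3 := fun i => by
    rw [hkc_def]; exact fk_kc_bound _ (hσpos i)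
  have hciB : ∀ i, |ci i| ≤ Cr*(T-t₀) := by
    intro i
    have h1 : ‖∫ s in t..T, r i s‖ ≤ Cr * |T - t| := by
      apply intervalIntegral.norm_integral_le_of_norm_le_const
      intro s hs
      rw [Set.uIoc_of_le ht2.le] at hs
      exact (Real.norm_eq_abs _) ▸ hrB i s ⟨ht1.trans hs.1.le, hs.2⟩
    rw [Real.norm_eq_abs, abs_of_nonneg (by linarith : (0:ℝ) ≤ T - t)] at h1
    have h3 : Cr*(T-t) ≤ Cr*(T-t₀) := by nlinarith
    rw [hci_def]
    simp only []
    linarith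
  set W : (Fin n → ℝ) → ℝ := fun y => g y *
    ∏ i ∈ Finset.univ.erase j,
      kc i * Real.exp (-(x i - ci i - y i)^2/(2*(R i T - R i t))) with hW_def
  set w : Fin n → ℝ → ℝ := fun i v =>
    if i = j then c' * Real.exp (lam' * v^2)
    else kc i * Real.exp (lam' * v^2 - (v - (x i - ci i))^2/(2*(R i T - R i t)))
    with hw_def
  set hh : Fin n → ℝ → ℝ := fun i v =>
    if i = j then kc j * c' *
      Real.exp (lam' * v^2 - (v - (x j - ci j))^2/(4*(R j T - R j t)))
    else w i v with hh_def
  set k : ℝ → ℝ := fun z => kc j * Real.exp (-z^2/(2*(R j T - R j t))) with hk_def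
  set k1 : ℝ → ℝ := fun z =>
    kc j * ((-z/(R j T - R j t)) * Real.exp (-z^2/(2*(R j T - R j t)))) with hk1_def
  set k2 : ℝ → ℝ := fun z =>
    kc j * ((z^2/(R j T - R j t)^2 - 1/(R j T - R j t)) *
      Real.exp (-z^2/(2*(R j T - R j t)))) with hk2_def
  have hWc : Continuous W := by
    rw [hW_def]
    apply hg.mul
    apply continuous_finset_prod
    intro i _
    apply Continuous.mul continuous_const
    apply Real.continuous_exp.comp
    apply Continuous.div_const
    exact (((continuous_const.sub (continuous_apply i)).pow 2)).neg
  have hwnn : ∀ i v, 0 ≤ w i v := by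
    intro i v
    rw [hw_def]
    dsimp only
    split_ifs
    · positivity
    · exact mul_nonneg (hkcpos i).le (Real.exp_nonneg _)
  have hwb : ∀ y : Fin n → ℝ, |W y| ≤ ∏ i, w i (y i) := by
    intro y
    have hPnn : (0:ℝ) ≤ ∏ i ∈ Finset.univ.erase j,
        kc i * Real.exp (-(x i - ci i - y i)^2/(2*(R i T - R i t))) :=
      Finset.prod_nonneg (fun i _ => mul_nonneg (hkcpos i).le (Real.exp_nonneg _))
    have h1 : |W y| ≤ (c' * Real.exp (lam' * ∑ i, (y i)^2)) *
        ∏ i ∈ Finset.univ.erase j,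
          kc i * Real.exp (-(x i - ci i - y i)^2/(2*(R i T - R i t))) := by
      rw [hW_def]
      dsimp only
      rw [abs_mul, abs_of_nonneg hPnn]
      exact mul_le_mul_of_nonneg_right (hgrowth y) hPnn
    refine h1.trans_eq ?_
    have hsum : Real.exp (lam' * ∑ i, (y i)^2) = ∏ i, Real.exp (lam' * (y i)^2) := by
      rw [Finset.mul_sum, Real.exp_sum]
    rw [hsum,
      ← Finset.mul_prod_erase Finset.univ (fun i => Real.exp (lam' * (y i)^2))
        (Finset.mem_univ j),
      ← Finset.mul_prod_erase Finset.univ (fun i => w i (y i)) (Finset.mem_univ j)]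
    have hwj_eq : w j (y j) = c' * Real.exp (lam' * (y j)^2) := by
      rw [hw_def]; simp
    have her : ∏ i ∈ Finset.univ.erase j, w i (y i)
        = (∏ i ∈ Finset.univ.erase j, Real.exp (lam' * (y i)^2)) *
            ∏ i ∈ Finset.univ.erase j,
              (kc i * Real.exp (-(x i - ci i - y i)^2/(2*(R i T - R i t)))) := by
      rw [← Finset.prod_mul_distrib]
      apply Finset.prod_congr rfl
      intro i hi
      have hij := (Finset.mem_erase.1 hi).1
      rw [hw_def]
      dsimp only
      rw [if_neg hij,
        show lam'*(y i)^2 - (y i - (x i - ci i))^2/(2*(R i T - R i t))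
          = lam'*(y i)^2 + (-(x i - ci i - y i)^2/(2*(R i T - R i t))) by ring,
        Real.exp_add]
      ring
    rw [hwj_eq, her]
    simp only [mul_assoc]
  -- kernel derivative facts
  have hσjne : (R j T - R j t) ≠ 0 := ne_of_gt (hσpos j)
  have hkd : ∀ z, HasDerivAt k (k1 z) z := by
    intro z
    rw [hk_def, hk1_def]
    exact (fk_kderiv _ hσjne z).const_mul (kc j)
  have hk1d : ∀ z, HasDerivAt k1 (k2 z) z := by
    intro z
    rw [hk1_def, hk2_def]
    exact (fk_kderiv2 _ hσjne z).const_mul (kc j)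
  have hkcont : Continuous k := by
    rw [hk_def]
    apply continuous_const.mul
    apply Real.continuous_exp.comp
    exact ((continuous_id.pow 2).neg).div_const _
  have hk1cont : Continuous k1 := by
    rw [hk1_def]
    apply continuous_const.mul
    exact ((continuous_id.neg.div_const _).mul
      (Real.continuous_exp.comp (((continuous_id.pow 2).neg).div_const _)))
  have hk2cont : Continuous k2 := by
    rw [hk2_def]
    apply continuous_const.mul
    exact ((((continuous_id.pow 2).div_const _).sub continuous_const).mul
      (Real.continuous_exp.comp (((continuous_id.pow 2).neg).div_const _)))
  -- kernel bounds
  have hkb : ∀ z, |k z| ≤ kc j * Real.exp (-z^2/(4*(R j T - R j t))) := by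
    intro z
    rw [hk_def]
    dsimp only
    rw [abs_mul, abs_of_pos (hkcpos j), abs_of_nonneg (Real.exp_nonneg _)]
    exact mul_le_mul_of_nonneg_left (fk_exp_le _ z (hσpos j)) (hkcpos j).le
  have hk1b : ∀ z, |k1 z| ≤ (kc j * (Real.sqrt (R j T - R j t))⁻¹) *
      Real.exp (-z^2/(4*(R j T - R j t))) := by
    intro z
    rw [hk1_def]
    dsimp only
    rw [abs_mul, abs_of_pos (hkcpos j), mul_assoc]
    exact mul_le_mul_of_nonneg_left (fk_bound1 _ z (hσpos j)) (hkcpos j).le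
  have hk2b : ∀ z, |k2 z| ≤ (kc j * (3/(R j T - R j t))) *
      Real.exp (-z^2/(4*(R j T - R j t))) := by
    intro z
    rw [hk2_def]
    dsimp only
    rw [abs_mul, abs_of_pos (hkcpos j), mul_assoc]
    exact mul_le_mul_of_nonneg_left (fk_bound2 _ z (hσpos j)) (hkcpos j).le
  -- integrability of the w's
  have hwint : ∀ i, i ≠ j → Integrable (w i) := by
    intro i hij
    have hib := (fk_int_bound lam' (R i T - R i t) (R i T) (x i - ci i) 2
      (hσpos i) (hσle i) hlam' (hlam'' i) (by norm_num) (by norm_num)).1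
    have heq : w i = fun v => kc i *
        Real.exp (lam' * v^2 - (v - (x i - ci i))^2/(2*(R i T - R i t))) := by
      funext v
      rw [hw_def]
      dsimp only
      rw [if_neg hij]
    rw [heq]
    exact hib.const_mul _
  have hwjint : ∀ ξ₀ : ℝ, Integrable (fun v => w j v *
      Real.exp (-(ξ₀ - ci j - v)^2/(8*(R j T - R j t)))) := by
    intro ξ₀
    have hib := (fk_int_bound lam' (R j T - R j t) (R j T) (ξ₀ - ci j) 8
      (hσpos j) (hσle j) hlam' (hlam'' j) (by norm_num) (by norm_num)).1
    have heq : (fun v => w j v * Real.exp (-(ξ₀ - ci j - v)^2/(8*(R j T - R j t))))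
        = fun v => c' *
          Real.exp (lam' * v^2 - (v - (ξ₀ - ci j))^2/(8*(R j T - R j t))) := by
      funext v
      rw [hw_def]
      dsimp only
      rw [if_pos rfl, mul_assoc, ← Real.exp_add]
      congr 2
      ring
    rw [heq]
    exact hib.const_mul _
  -- differentiation under the integral, twice
  have step1 : ∀ ξ₀ : ℝ, HasDerivAt
      (fun ξ => ∫ y : Fin n → ℝ, W y * k (ξ - ci j - y j))
      (∫ y : Fin n → ℝ, W y * k1 (ξ₀ - ci j - y j)) ξ₀ := by
    intro ξ₀
    exact fk_master j ξ₀ W hWc w hwnn hwb (R j T - R j t) (ci j) (hσpos j)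
      k k1 hkd hkcont hk1cont (kc j) (kc j * (Real.sqrt (R j T - R j t))⁻¹)
      (hkcpos j).le (mul_nonneg (hkcpos j).le (inv_nonneg.2 (Real.sqrt_nonneg _)))
      hkb hk1b hwint (hwjint ξ₀)
  have step2 : HasDerivAt
      (fun ξ => ∫ y : Fin n → ℝ, W y * k1 (ξ - ci j - y j))
      (∫ y : Fin n → ℝ, W y * k2 (x j - ci j - y j)) (x j) := by
    exact fk_master j (x j) W hWc w hwnn hwb (R j T - R j t) (ci j) (hσpos j)
      k1 k2 hk1d hk1cont hk2cont (kc j * (Real.sqrt (R j T - R j t))⁻¹)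
      (kc j * (3/(R j T - R j t)))
      (mul_nonneg (hkcpos j).le (inv_nonneg.2 (Real.sqrt_nonneg _)))
      (mul_nonneg (hkcpos j).le (div_nonneg (by norm_num) (hσpos j).le))
      hk1b hk2b hwint (hwjint (x j))
  -- identification of u with the kernel integral
  have hsplit : ∀ (ξ : ℝ) (y : Fin n → ℝ),
      g y * ∏ i, (2 * Real.pi * (R i T - R i t)) ^ (-(1:ℝ)/2) *
        Real.exp (-(Function.update x j ξ i - (∫ s in t..T, r i s) - y i)^2
          / (2 * (R i T - R i t)))
      = W y * k (ξ - ci j - y j) := by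
    intro ξ y
    have e1 : ∏ i, (2 * Real.pi * (R i T - R i t)) ^ (-(1:ℝ)/2) *
        Real.exp (-(Function.update x j ξ i - (∫ s in t..T, r i s) - y i)^2
          / (2 * (R i T - R i t)))
        = ((2 * Real.pi * (R j T - R j t)) ^ (-(1:ℝ)/2) *
            Real.exp (-(ξ - (∫ s in t..T, r j s) - y j)^2/(2*(R j T - R j t))))
          * ∏ i ∈ Finset.univ.erase j,
            (2 * Real.pi * (R i T - R i t)) ^ (-(1:ℝ)/2) *
              Real.exp (-(x i - (∫ s in t..T, r i s) - y i)^2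
                / (2 * (R i T - R i t))) := by
      rw [← Finset.mul_prod_erase Finset.univ _ (Finset.mem_univ j),
        Function.update_self]
      congr 1
      apply Finset.prod_congr rfl
      intro i hi
      rw [Function.update_of_ne (Finset.mem_erase.1 hi).1]
    rw [e1, hW_def, hk_def, hkc_def, hci_def]
    dsimp only
    ring
  have hfun : (fun ξ => u t (Function.update x j ξ))
      = fun ξ => (-(∫ s in t..T, Real.exp (∫ ρ in s..t, A₁ ρ) * f s))
        + Real.exp (-(∫ s in t..T, A₁ s)) *
          ∫ y : Fin n → ℝ, W y * k (ξ - ci j - y j) := by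
    funext ξ
    rw [hu t ht1 ht2 (Function.update x j ξ)]
    congr 1
    congr 1
    apply MeasureTheory.integral_congr_ae
    exact Filter.Eventually.of_forall (fun y => hsplit ξ y)
  have hderiv1 : deriv (fun ξ => u t (Function.update x j ξ))
      = fun ξ₀ => Real.exp (-(∫ s in t..T, A₁ s)) *
          ∫ y : Fin n → ℝ, W y * k1 (ξ₀ - ci j - y j) := by
    funext ξ₀
    rw [hfun]
    exact (((step1 ξ₀).const_mul _).const_add _).deriv
  have hderiv2 : deriv (deriv (fun ξ => u t (Function.update x j ξ))) (x j)
      = Real.exp (-(∫ s in t..T, A₁ s)) *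
          ∫ y : Fin n → ℝ, W y * k2 (x j - ci j - y j) := by
    rw [hderiv1]
    exact (step2.const_mul _).deriv
  -- properties of the comparison functions hh
  have hhnn : ∀ i v, 0 ≤ hh i v := by
    intro i v
    rw [hh_def]
    dsimp only
    split_ifs
    · exact mul_nonneg (mul_nonneg (hkcpos j).le hc'.le) (Real.exp_nonneg _)
    · exact hwnn i v
  have hhint : ∀ i, Integrable (hh i) := by
    intro i
    rcases eq_or_ne i j with rfl | hij
    · have hib := (fk_int_bound lam' (R i T - R i t) (R i T) (x i - ci i) 4
        (hσpos i) (hσle i) hlam' (hlam'' i) (by norm_num) (by norm_num)).1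
      have heq : hh i = fun v => kc i * c' *
          Real.exp (lam' * v^2 - (v - (x i - ci i))^2/(4*(R i T - R i t))) := by
        funext v
        rw [hh_def]
        dsimp only
        rw [if_pos rfl]
      rw [heq]
      exact hib.const_mul _
    · have heq : hh i = w i := by
        funext v
        rw [hh_def]
        dsimp only
        rw [if_neg hij]
      rw [heq]
      exact hwint i hij
  -- pointwise bound for the integrand of the second derivative
  have hb2 : ∀ y : Fin n → ℝ, ‖W y * k2 (x j - ci j - y j)‖ ≤
      3*(R j T - R j t)⁻¹ * ∏ i, hh i (y i) := by
    intro y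
    have hfactor : hh j (y j) = w j (y j) *
        (kc j * Real.exp (-(x j - ci j - y j)^2/(4*(R j T - R j t)))) := by
      rw [hh_def, hw_def]
      dsimp only
      rw [if_pos rfl, if_pos rfl]
      rw [show lam'*(y j)^2 - (y j - (x j - ci j))^2/(4*(R j T - R j t))
          = lam'*(y j)^2 + (-(x j - ci j - y j)^2/(4*(R j T - R j t))) by ring,
        Real.exp_add]
      ring
    have hPP : ∏ i, hh i (y i) = (∏ i, w i (y i)) *
        (kc j * Real.exp (-(x j - ci j - y j)^2/(4*(R j T - R j t)))) := by
      rw [← Finset.mul_prod_erase Finset.univ (fun i => hh i (y i))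
          (Finset.mem_univ j),
        ← Finset.mul_prod_erase Finset.univ (fun i => w i (y i))
          (Finset.mem_univ j)]
      have her2 : ∏ i ∈ Finset.univ.erase j, hh i (y i)
          = ∏ i ∈ Finset.univ.erase j, w i (y i) := by
        apply Finset.prod_congr rfl
        intro i hi
        rw [hh_def]
        dsimp only
        rw [if_neg (Finset.mem_erase.1 hi).1]
      rw [her2, hfactor]
      ring
    have hprodnn : (0:ℝ) ≤ ∏ i, w i (y i) :=
      Finset.prod_nonneg (fun i _ => hwnn i (y i))
    rw [Real.norm_eq_abs, abs_mul]
    calc |W y| * |k2 (x j - ci j - y j)|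
        ≤ (∏ i, w i (y i)) * ((kc j * (3/(R j T - R j t))) *
            Real.exp (-(x j - ci j - y j)^2/(4*(R j T - R j t)))) :=
          mul_le_mul (hwb y) (hk2b _) (abs_nonneg _) hprodnn
      _ = 3*(R j T - R j t)⁻¹ * ∏ i, hh i (y i) := by
          rw [hPP]
          field_simp
  -- integral bounds for each hh i
  have hInn : ∀ i, 0 ≤ ∫ v, hh i v := fun i =>
    MeasureTheory.integral_nonneg (fun v => hhnn i v)
  have hIb : ∀ i, (∫ v, hh i v) ≤ 3*(c'+1) *
      Real.exp (2*lam'*(x i - ci i)^2) := by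
    intro i
    rcases eq_or_ne i j with rfl | hij
    · have hib := (fk_int_bound lam' (R i T - R i t) (R i T) (x i - ci i) 4
        (hσpos i) (hσle i) hlam' (hlam'' i) (by norm_num) (by norm_num)).2
      have heq : hh i = fun v => kc i * c' *
          Real.exp (lam' * v^2 - (v - (x i - ci i))^2/(4*(R i T - R i t))) := by
        funext v
        rw [hh_def]
        dsimp only
        rw [if_pos rfl]
      rw [heq, MeasureTheory.integral_const_mul]
      have hpos : (0:ℝ) ≤ kc i * c' := mul_nonneg (hkcpos i).le hc'.le
      calc kc i * c' * ∫ v, Real.exp (lam' * v^2 -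
            (v - (x i - ci i))^2/(4*(R i T - R i t)))
          ≤ kc i * c' * (4 * Real.sqrt Real.pi * Real.sqrt (R i T - R i t) *
              Real.exp (2*lam'*(x i - ci i)^2)) :=
            mul_le_mul_of_nonneg_left hib hpos
        _ = c' * (kc i * (4 * Real.sqrt Real.pi * Real.sqrt (R i T - R i t))) *
              Real.exp (2*lam'*(x i - ci i)^2) := by ring
        _ ≤ c' * 3 * Real.exp (2*lam'*(x i - ci i)^2) := by
            apply mul_le_mul_of_nonneg_right _ (Real.exp_nonneg _)
            exact mul_le_mul_of_nonneg_left (hkcb i) hc'.le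
        _ ≤ 3*(c'+1) * Real.exp (2*lam'*(x i - ci i)^2) := by
            apply mul_le_mul_of_nonneg_right _ (Real.exp_nonneg _)
            linarith
    · have hib := (fk_int_bound lam' (R i T - R i t) (R i T) (x i - ci i) 2
        (hσpos i) (hσle i) hlam' (hlam'' i) (by norm_num) (by norm_num)).2
      have heq : hh i = fun v => kc i *
          Real.exp (lam' * v^2 - (v - (x i - ci i))^2/(2*(R i T - R i t))) := by
        funext v
        rw [hh_def, hw_def]
        dsimp only
        rw [if_neg hij, if_neg hij]
      rw [heq, MeasureTheory.integral_const_mul]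
      calc kc i * ∫ v, Real.exp (lam' * v^2 -
            (v - (x i - ci i))^2/(2*(R i T - R i t)))
          ≤ kc i * (4 * Real.sqrt Real.pi * Real.sqrt (R i T - R i t) *
              Real.exp (2*lam'*(x i - ci i)^2)) :=
            mul_le_mul_of_nonneg_left hib (hkcpos i).le
        _ = (kc i * (4 * Real.sqrt Real.pi * Real.sqrt (R i T - R i t))) *
              Real.exp (2*lam'*(x i - ci i)^2) := by ring
        _ ≤ 3 * Real.exp (2*lam'*(x i - ci i)^2) :=
            mul_le_mul_of_nonneg_right (hkcb i) (Real.exp_nonneg _)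
        _ ≤ 3*(c'+1) * Real.exp (2*lam'*(x i - ci i)^2) := by
            apply mul_le_mul_of_nonneg_right _ (Real.exp_nonneg _)
            linarith
  -- assembling the integral bound
  have hintprod : Integrable (fun y : Fin n → ℝ => ∏ i, hh i (y i)) :=
    Integrable.fintype_prod (𝕜 := ℝ) hhint
  have h1 : |∫ y : Fin n → ℝ, W y * k2 (x j - ci j - y j)|
      ≤ ∫ y : Fin n → ℝ, 3*(R j T - R j t)⁻¹ * ∏ i, hh i (y i) := by
    rw [← Real.norm_eq_abs]
    exact MeasureTheory.norm_integral_le_of_norm_le (hintprod.const_mul _)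
      (Filter.Eventually.of_forall hb2)
  have h2 : ∫ y : Fin n → ℝ, 3*(R j T - R j t)⁻¹ * ∏ i, hh i (y i)
      = 3*(R j T - R j t)⁻¹ * ∏ i, ∫ v, hh i v := by
    rw [MeasureTheory.integral_const_mul]
    congr 1
    exact MeasureTheory.integral_fintype_prod_eq_prod (𝕜 := ℝ) hh
  have h3 : ∏ i, ∫ v, hh i v ≤
      ∏ i : Fin n, (3*(c'+1) * Real.exp (2*lam'*(x i - ci i)^2)) :=
    Finset.prod_le_prod (fun i _ => hInn i) (fun i _ => hIb i)
  have h4 : ∏ i : Fin n, (3*(c'+1) * Real.exp (2*lam'*(x i - ci i)^2))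
      = (3*(c'+1))^n * Real.exp (∑ i, 2*lam'*(x i - ci i)^2) := by
    rw [Finset.prod_mul_distrib, Finset.prod_const, Real.exp_sum,
      Finset.card_univ, Fintype.card_fin]
  have h5 : ∑ i, 2*lam'*(x i - ci i)^2
      ≤ 4*lam'*(∑ i, (x i)^2) + 4*(n:ℝ)*lam'*(Cr*(T-t₀))^2 := by
    have hterm : ∀ i, 2*lam'*(x i - ci i)^2
        ≤ 4*lam'*(x i)^2 + 4*lam'*(Cr*(T-t₀))^2 := by
      intro i
      have hci := hciB i
      obtain ⟨q, hq⟩ : ∃ q, ci i = q := ⟨ci i, rfl⟩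
      rw [hq] at hci ⊢
      obtain ⟨p, hp⟩ : ∃ p, x i = p := ⟨x i, rfl⟩
      rw [hp]
      have h6 : q^2 ≤ (Cr*(T-t₀))^2 := by
        nlinarith [sq_abs q, abs_nonneg q]
      nlinarith [sq_nonneg (p + q), hlam'.le]
    calc ∑ i, 2*lam'*(x i - ci i)^2
        ≤ ∑ i : Fin n, (4*lam'*(x i)^2 + 4*lam'*(Cr*(T-t₀))^2) :=
          Finset.sum_le_sum (fun i _ => hterm i)
      _ = 4*lam'*(∑ i, (x i)^2) + 4*(n:ℝ)*lam'*(Cr*(T-t₀))^2 := by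
          rw [Finset.sum_add_distrib, ← Finset.mul_sum, Finset.sum_const,
            Finset.card_univ, Fintype.card_fin, nsmul_eq_mul]
          ring
  have hI2 : |∫ y : Fin n → ℝ, W y * k2 (x j - ci j - y j)|
      ≤ 3*(R j T - R j t)⁻¹ * ((3*(c'+1))^n *
          Real.exp (4*lam'*(∑ i, (x i)^2) + 4*(n:ℝ)*lam'*(Cr*(T-t₀))^2)) := by
    refine h1.trans ?_
    rw [h2]
    have h7 : (3*(c'+1))^n * Real.exp (∑ i, 2*lam'*(x i - ci i)^2)
        ≤ (3*(c'+1))^n *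
          Real.exp (4*lam'*(∑ i, (x i)^2) + 4*(n:ℝ)*lam'*(Cr*(T-t₀))^2) :=
      mul_le_mul_of_nonneg_left (Real.exp_le_exp.2 h5) (by positivity)
    have h8 : (0:ℝ) ≤ 3*(R j T - R j t)⁻¹ := by
      have := hσpos j
      positivity
    exact mul_le_mul_of_nonneg_left ((h3.trans_eq h4).trans h7) h8
  -- final computation
  rw [hderiv2, abs_mul, abs_of_pos (Real.exp_pos _)]
  calc Real.exp (-(∫ s in t..T, A₁ s)) *
        |∫ y : Fin n → ℝ, W y * k2 (x j - ci j - y j)|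
      ≤ Real.exp (CA*(T-t₀)) * (3*(R j T - R j t)⁻¹ * ((3*(c'+1))^n *
          Real.exp (4*lam'*(∑ i, (x i)^2) + 4*(n:ℝ)*lam'*(Cr*(T-t₀))^2))) :=
        mul_le_mul hEB hI2 (abs_nonneg _) (Real.exp_nonneg _)
    _ = 3 * Real.exp (CA*(T-t₀)) * (3*(c'+1))^n *
          Real.exp (4*(n:ℝ)*lam'*(Cr*(T-t₀))^2) * (R j T - R j t)⁻¹ *
          Real.exp (4*lam' * ∑ i, (x i)^2) := by
        rw [Real.exp_add]
        ring
end

section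
/- Assume in addition that there are constants 0 < c₀ ≤ C with c₀ ≤ σ_t ≤ C for all t ∈ [0,T], that φ(r,s) ≥ 0 for all r ≠ s, and that there exist t₀ ∈ [0,T), c₁ > 0 and a ∈ (0,2) such that ∫_t^T ( ∫_s^T σ_r (∂K/∂t)(r,s) dr )² ds ≥ c₁ (T−t)^a for all t ∈ [t₀,T]. Then ∫_{t₀}^T (V(T) − V(t))^{−1/2} dt < ∞. -/
open Real MeasureTheory intervalIntegral

lemma measurable_indicator_of_continuousOn {α : Type*} [MeasurableSpace α]
    [TopologicalSpace α] [OpensMeasurableSpace α] {f : α → ℝ} {s : Set α}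
    (hf : ContinuousOn f s) (hs : MeasurableSet s) : Measurable (s.indicator f) := by
  apply measurable_of_isOpen
  intro t ht
  obtain ⟨u, u_open, hu⟩ := _root_.continuousOn_iff'.1 hf t ht
  rw [Set.indicator_preimage, Set.ite, hu]
  exact (u_open.measurableSet.inter hs).union
    ((measurable_const ht.measurableSet).diff hs)

lemma measurable_rpow_const {p : ℝ} : Measurable fun x : ℝ => x ^ p := by
  rcases eq_or_ne p 0 with hp | hp
  · simpa [hp, Real.rpow_zero] using measurable_const (a := (1:ℝ))
  have h : ContinuousOn (fun x : ℝ => x ^ p) {(0:ℝ)}ᶜ := fun x hx =>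
    (Real.continuousAt_rpow_const x p (Or.inl hx)).continuousWithinAt
  have := measurable_indicator_of_continuousOn h (MeasurableSet.singleton (0:ℝ)).compl
  convert this using 1
  funext x
  by_cases hx : x = 0
  · simp [hx, Real.zero_rpow hp]
  · simp [Set.indicator_of_mem, hx]

lemma integrableOn_rpow_Ioc {p b : ℝ} (hp : -1 < p) :
    IntegrableOn (fun s : ℝ => s ^ p) (Set.Ioc 0 b) volume := by
  rcases le_or_gt b 0 with hb | hb
  · rw [Set.Ioc_eq_empty (not_lt.2 hb)]
    · exact integrableOn_empty
  · exact (intervalIntegrable_iff_integrableOn_Ioc_of_le hb.le).1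
      (intervalIntegrable_rpow' hp)

lemma integrableOn_rpow_shift {q x y : ℝ} (hq : -1 < q) :
    IntegrableOn (fun s : ℝ => (s - x) ^ q) (Set.Ioc x y) volume := by
  rcases le_or_gt y x with hb | hb
  · rw [Set.Ioc_eq_empty (not_lt.2 hb)]
    · exact integrableOn_empty
  · refine (intervalIntegrable_iff_integrableOn_Ioc_of_le hb.le).1 ?_
    have := (intervalIntegrable_rpow' hq (a := 0) (b := y - x)).comp_sub_right x
    simpa using this

lemma integrableOn_rpow_shift' {q x y : ℝ} (hq : -1 < q) :
    IntegrableOn (fun s : ℝ => (y - s) ^ q) (Set.Ioc x y) volume := by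
  rcases le_or_gt y x with hb | hb
  · rw [Set.Ioc_eq_empty (not_lt.2 hb)]
    · exact integrableOn_empty
  · refine (intervalIntegrable_iff_integrableOn_Ioc_of_le hb.le).1 ?_
    have := ((intervalIntegrable_rpow' hq (a := 0) (b := y - x)).comp_sub_left y).symm
    simpa using this

lemma integrableOn_beta {p q r : ℝ} (hp : -1 < p) (hp0 : p ≤ 0) (hq : -1 < q) (hq0 : q ≤ 0)
    (hr : 0 < r) :
    IntegrableOn (fun s : ℝ => s ^ p * (r - s) ^ q) (Set.Ioc 0 r) volume := by
  have hmeas : Measurable (fun s : ℝ => s ^ p * (r - s) ^ q) :=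
    (measurable_rpow_const.mul
      (measurable_rpow_const.comp (measurable_const.sub measurable_id)))
  have h1 : IntegrableOn (fun s : ℝ => s ^ p * (r - s) ^ q) (Set.Ioc 0 (r/2)) volume := by
    refine Integrable.mono' ((integrableOn_rpow_Ioc hp).mul_const ((r/2) ^ q))
      hmeas.aestronglyMeasurable.restrict ?_
    filter_upwards [ae_restrict_mem measurableSet_Ioc] with s hs
    rw [Real.norm_eq_abs, abs_of_nonneg (mul_nonneg (Real.rpow_nonneg hs.1.le _)
      (Real.rpow_nonneg (by linarith [hs.2] : (0:ℝ) ≤ r - s) _))]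
    exact mul_le_mul_of_nonneg_left
      (Real.rpow_le_rpow_of_nonpos (by linarith) (by linarith [hs.2]) hq0)
      (Real.rpow_nonneg hs.1.le _)
  have h2 : IntegrableOn (fun s : ℝ => s ^ p * (r - s) ^ q) (Set.Ioc (r/2) r) volume := by
    refine Integrable.mono' ((integrableOn_rpow_shift' hq).const_mul ((r/2) ^ p))
      hmeas.aestronglyMeasurable.restrict ?_
    filter_upwards [ae_restrict_mem measurableSet_Ioc] with s hs
    have hs0 : (0:ℝ) < s := lt_trans (by linarith) hs.1
    rw [Real.norm_eq_abs, abs_of_nonneg (mul_nonneg (Real.rpow_nonneg hs0.le _)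
      (Real.rpow_nonneg (by linarith [hs.2] : (0:ℝ) ≤ r - s) _))]
    exact mul_le_mul_of_nonneg_right
      (Real.rpow_le_rpow_of_nonpos (by linarith) hs.1.le hp0)
      (Real.rpow_nonneg (by linarith [hs.2]) _)
  have := h1.union h2
  rwa [Set.Ioc_union_Ioc_eq_Ioc (by linarith) (by linarith)] at this

/-- a.e. upgrade: a property holding on `Ioo a b` holds a.e. on membership in `Ioc a b`. -/
lemma ae_Ioc_of_Ioo {a b : ℝ} {P : ℝ → Prop} (h : ∀ x ∈ Set.Ioo a b, P x) :
    ∀ᵐ x ∂(volume : Measure ℝ), x ∈ Set.Ioc a b → P x := by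
  have hsub : {x : ℝ | ¬(x ∈ Set.Ioc a b → P x)} ⊆ {b} := by
    intro x hx
    rw [Set.mem_setOf_eq, Classical.not_imp] at hx
    rcases eq_or_lt_of_le hx.1.2 with h' | h'
    · exact h'
    · exact absurd (h x ⟨hx.1.1, h'⟩) hx.2
  exact measure_mono_null hsub (measure_singleton b)

lemma disjoint_Ioc_Ioc {a b c : ℝ} : Disjoint (Set.Ioc a b) (Set.Ioc b c) := by
  rw [Set.disjoint_left]
  rintro x ⟨_, hx2⟩ ⟨hx3, _⟩
  exact absurd hx3 (not_lt.2 hx2)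

lemma integrableOn_absbeta {p q r t : ℝ} (hp : -1 < p) (hp0 : p ≤ 0) (hq : -1 < q)
    (hq0 : q ≤ 0) (hr : 0 < r) (hrt : r ≤ t) :
    IntegrableOn (fun s : ℝ => s ^ p * |r - s| ^ q) (Set.Ioc 0 t) volume := by
  have h1 : IntegrableOn (fun s : ℝ => s ^ p * |r - s| ^ q) (Set.Ioc 0 r) volume := by
    refine (integrableOn_beta hp hp0 hq hq0 hr).congr_fun (fun s hs => ?_) measurableSet_Ioc
    rw [abs_of_nonneg (by linarith [hs.2] : (0:ℝ) ≤ r - s)]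
  have h2 : IntegrableOn (fun s : ℝ => s ^ p * |r - s| ^ q) (Set.Ioc r t) volume := by
    refine Integrable.mono' ((integrableOn_rpow_shift (x := r) (y := t) hq).const_mul (r ^ p))
      ?_ ?_
    · exact (measurable_rpow_const.mul ((measurable_rpow_const).comp
        ((measurable_const.sub measurable_id).abs))).aestronglyMeasurable.restrict
    · filter_upwards [ae_restrict_mem measurableSet_Ioc] with s hs
      have hs0 : (0:ℝ) < s := hr.trans hs.1
      rw [Real.norm_eq_abs, abs_of_nonneg (mul_nonneg (Real.rpow_nonneg hs0.le _)
        (Real.rpow_nonneg (abs_nonneg _) _)),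
        abs_of_nonpos (by linarith [hs.1] : r - s ≤ 0), neg_sub]
      exact mul_le_mul (Real.rpow_le_rpow_of_nonpos hr hs.1.le hp0) le_rfl
        (Real.rpow_nonneg (by linarith [hs.1]) _) (Real.rpow_nonneg hr.le _)
  have := h1.union h2
  rwa [Set.Ioc_union_Ioc_eq_Ioc hr.le hrt] at this

lemma integrableOn_abs_shift {q x a b : ℝ} (hq : -1 < q) (hab : 0 ≤ a) (hx : x ∈ Set.Icc a b) :
    IntegrableOn (fun r : ℝ => |r - x| ^ q) (Set.Ioc a b) volume := by
  have h1 : IntegrableOn (fun r : ℝ => |r - x| ^ q) (Set.Ioc a x) volume := by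
    refine (integrableOn_rpow_shift' (x := a) (y := x) hq).congr_fun (fun r hr => ?_)
      measurableSet_Ioc
    rw [abs_of_nonpos (by linarith [hr.2] : r - x ≤ 0), neg_sub]
  have h2 : IntegrableOn (fun r : ℝ => |r - x| ^ q) (Set.Ioc x b) volume := by
    refine (integrableOn_rpow_shift (x := x) (y := b) hq).congr_fun (fun r hr => ?_)
      measurableSet_Ioc
    rw [abs_of_nonneg (by linarith [hr.1] : 0 ≤ r - x)]
  have := h1.union h2
  rwa [Set.Ioc_union_Ioc_eq_Ioc hx.1 hx.2] at this

lemma integral_abs_rpow_eq {s t α : ℝ} (hα : 0 < α) (h0 : 0 ≤ s) (hst : s ≤ t) :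
    ∫ r in Set.Ioc 0 t, |r - s| ^ (α - 1) = (s ^ α + (t - s) ^ α) / α := by
  have hα1 : (-1:ℝ) < α - 1 := by linarith
  have e1 : ∫ r in Set.Ioc 0 s, |r - s| ^ (α - 1) = s ^ α / α := by
    have : ∫ r in Set.Ioc 0 s, |r - s| ^ (α - 1) = ∫ r in (0:ℝ)..s, (s - r) ^ (α - 1) := by
      rw [intervalIntegral.integral_of_le h0]
      refine setIntegral_congr_fun measurableSet_Ioc (fun r hr => ?_)
      rw [abs_of_nonpos (by linarith [hr.2] : r - s ≤ 0), neg_sub]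
    rw [this, intervalIntegral.integral_comp_sub_left (fun x => x ^ (α - 1)) s, sub_self,
      sub_zero, integral_rpow (Or.inl hα1), Real.zero_rpow (by linarith), sub_zero,
      sub_add_cancel]
  have e2 : ∫ r in Set.Ioc s t, |r - s| ^ (α - 1) = (t - s) ^ α / α := by
    have : ∫ r in Set.Ioc s t, |r - s| ^ (α - 1) = ∫ r in s..t, (r - s) ^ (α - 1) := by
      rw [intervalIntegral.integral_of_le hst]
      refine setIntegral_congr_fun measurableSet_Ioc (fun r hr => ?_)
      rw [abs_of_nonneg (by linarith [hr.1] : 0 ≤ r - s)]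
    rw [this, intervalIntegral.integral_comp_sub_right (fun x => x ^ (α - 1)) s, sub_self,
      integral_rpow (Or.inl hα1), Real.zero_rpow (by linarith), sub_zero, sub_add_cancel]
  rw [← Set.Ioc_union_Ioc_eq_Ioc h0 hst, setIntegral_union disjoint_Ioc_Ioc measurableSet_Ioc
      ((integrableOn_abs_shift hα1 le_rfl ⟨h0, hst⟩).mono (Set.Ioc_subset_Ioc_right hst) le_rfl)
      ((integrableOn_abs_shift hα1 le_rfl ⟨h0, hst⟩).mono (Set.Ioc_subset_Ioc_left h0) le_rfl),
    e1, e2]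
  ring


/-- If moreover `0 < c₀ ≤ σ ≤ C` on `[0,T]`, `φ ≥ 0`, and
`∫_t^T (∫_s^T σ_r K'(r,s) dr)² ds ≥ c₁ (T−t)^a` on `[t₀,T]` for some `c₁ > 0` and
`a ∈ (0,2)`, then `∫_{t₀}^T (V(T) − V(t))^(−1/2) dt < ∞`, where
`V(t) = ∫_0^t (∫_s^t σ_r K'(r,s) dr)² ds`. -/
theorem volterra_variance_inverse_sqrt_integrable
    (T : ℝ) (hT : 0 < T) (K K' : ℝ → ℝ → ℝ)
    (hVol : ∀ t s : ℝ, t < s → K t s = 0)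
    (hKcont : ContinuousOn (fun p : ℝ × ℝ => K p.1 p.2)
      {p : ℝ × ℝ | 0 < p.2 ∧ p.2 ≤ p.1 ∧ p.1 < T})
    (hK' : ∀ s t : ℝ, 0 < s → s < t → t < T → HasDerivAt (fun τ => K τ s) (K' t s) t)
    (hK'cont : ContinuousOn (fun p : ℝ × ℝ => K' p.1 p.2)
      {p : ℝ × ℝ | 0 < p.2 ∧ p.2 < p.1 ∧ p.1 < T})
    (α β c : ℝ) (hα : 0 < α) (hα' : α < 1 / 2) (hβ : 0 < β) (hβ' : β < 1 / 2)
    (hc : 0 < c)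
    (hH2 : ∀ s t : ℝ, 0 < s → s < t → t < T →
      |K' t s| ≤ c * (t - s) ^ (α - 1) * (t / s) ^ β)
    (σ : ℝ → ℝ) (hσmeas : Measurable σ)
    (c₀ C : ℝ) (hc₀ : 0 < c₀) (hc₀C : c₀ ≤ C)
    (hσB : ∀ t ∈ Set.Icc (0 : ℝ) T, c₀ ≤ σ t ∧ σ t ≤ C)
    (hφpos : ∀ r s : ℝ, r ≠ s → 0 ≤ ∫ u in (0 : ℝ)..(min r s), K' r u * K' s u)
    (t₀ : ℝ) (ht₀ : 0 ≤ t₀) (ht₀T : t₀ < T)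
    (c₁ a : ℝ) (hc₁ : 0 < c₁) (ha : 0 < a) (ha' : a < 2)
    (hlower : ∀ t ∈ Set.Icc t₀ T,
      c₁ * (T - t) ^ a ≤ ∫ s in t..T, (∫ r in s..T, σ r * K' r s) ^ 2) :
    IntervalIntegrable
      (fun t => ((∫ s in (0 : ℝ)..T, (∫ r in s..T, σ r * K' r s) ^ 2)
          - (∫ s in (0 : ℝ)..t, (∫ r in s..t, σ r * K' r s) ^ 2)) ^ (-(1 : ℝ) / 2))
      MeasureTheory.volume t₀ T := by
  have hC : 0 < C := lt_of_lt_of_le hc₀ hc₀C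
  have hβ1 : (-1:ℝ) < -β - β := by linarith
  have hα1 : (-1:ℝ) < α - 1 := by linarith
  -- the measurable truncated kernel
  have hUopen : IsOpen {p : ℝ × ℝ | 0 < p.2 ∧ p.2 < p.1 ∧ p.1 < T} :=
    (isOpen_lt continuous_const continuous_snd).inter
      ((isOpen_lt continuous_snd continuous_fst).inter
        (isOpen_lt continuous_fst continuous_const))
  set Kt : ℝ × ℝ → ℝ :=
    ({p : ℝ × ℝ | 0 < p.2 ∧ p.2 < p.1 ∧ p.1 < T}).indicator (fun p => K' p.1 p.2) with hKtdef
  have hKtmeas : Measurable Kt :=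
    measurable_indicator_of_continuousOn hK'cont hUopen.measurableSet
  have hKt_eq : ∀ r s : ℝ, 0 < s → s < r → r < T → Kt (r, s) = K' r s := fun r s h1 h2 h3 =>
    Set.indicator_of_mem (by exact ⟨h1, h2, h3⟩) _
  have hKt_zero : ∀ r s : ℝ, ¬(0 < s ∧ s < r ∧ r < T) → Kt (r, s) = 0 := fun r s h => by
    rw [hKtdef, Set.indicator_of_notMem (by exact h)]
  have hKt_zero' : ∀ r s : ℝ, r ≤ s → Kt (r, s) = 0 := fun r s h =>
    hKt_zero r s (by rintro ⟨h1, h2, h3⟩; exact absurd h2 (not_lt.2 h))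
  -- pointwise bound on the truncated kernel
  have hKt_bound : ∀ r s : ℝ, 0 < s → s < r →
      |Kt (r, s)| ≤ c * (r - s) ^ (α - 1) * (T ^ β * s ^ (-β)) := by
    intro r s hs hsr
    have hrs : (0:ℝ) < r - s := by linarith
    by_cases hrT : r < T
    · rw [hKt_eq r s hs hsr hrT]
      refine (hH2 s r hs hsr hrT).trans ?_
      have h1 : (r / s) ^ β ≤ T ^ β * s ^ (-β) := by
        rw [Real.div_rpow (by linarith : (0:ℝ) ≤ r) hs.le, Real.rpow_neg hs.le,
          div_eq_mul_inv]
        exact mul_le_mul_of_nonneg_right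
          (Real.rpow_le_rpow (by linarith) hrT.le hβ.le)
          (inv_nonneg.2 (Real.rpow_nonneg hs.le _))
      exact mul_le_mul_of_nonneg_left h1
        (mul_nonneg hc.le (Real.rpow_nonneg hrs.le _))
    · rw [hKt_zero r s (by rintro ⟨_, _, h3⟩; exact hrT h3), abs_zero]
      exact mul_nonneg (mul_nonneg hc.le (Real.rpow_nonneg hrs.le _))
        (mul_nonneg (Real.rpow_nonneg hT.le _) (Real.rpow_nonneg hs.le _))
  -- bounds on σ
  have hσ0 : ∀ r : ℝ, 0 ≤ r → r ≤ T → 0 ≤ σ r := fun r h1 h2 =>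
    le_trans hc₀.le (hσB r ⟨h1, h2⟩).1
  have hσC : ∀ r : ℝ, 0 ≤ r → r ≤ T → |σ r| ≤ C := fun r h1 h2 => by
    rw [abs_of_nonneg (hσ0 r h1 h2)]; exact (hσB r ⟨h1, h2⟩).2
  -- integrability of the kernel slices
  have hI1 : ∀ s u v : ℝ, 0 < s → s ≤ u → u ≤ v → v ≤ T →
      IntervalIntegrable (fun r => σ r * Kt (r, s)) volume u v := by
    intro s u v hs hsu huv hvT
    have hdom : IntervalIntegrable
        (fun r => (C * c * (T ^ β * s ^ (-β))) * (r - s) ^ (α - 1)) volume u v := by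
      have := ((intervalIntegrable_rpow' hα1 (a := u - s) (b := v - s)).comp_sub_right s)
      simpa using this.const_mul (C * c * (T ^ β * s ^ (-β)))
    refine hdom.mono_fun ((hσmeas.mul (hKtmeas.comp
      (measurable_id.prodMk measurable_const))).aestronglyMeasurable.restrict) ?_
    rw [Set.uIoc_of_le huv]
    filter_upwards [ae_restrict_mem measurableSet_Ioc] with r hr
    have hsr : s < r := lt_of_le_of_lt hsu hr.1
    have h0r : (0:ℝ) ≤ r := le_trans hs.le hsr.le
    rw [Real.norm_eq_abs, Real.norm_eq_abs, abs_mul]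
    calc |σ r| * |Kt (r, s)| ≤ C * (c * (r - s) ^ (α - 1) * (T ^ β * s ^ (-β))) := by
          refine mul_le_mul (hσC r h0r (hr.2.trans hvT)) (hKt_bound r s hs hsr)
            (abs_nonneg _) hC.le
      _ = C * c * (T ^ β * s ^ (-β)) * (r - s) ^ (α - 1) := by ring
      _ ≤ |C * c * (T ^ β * s ^ (-β)) * (r - s) ^ (α - 1)| := le_abs_self _
    -- uniform bound for slice integrals
  have hIbound : ∀ s u v : ℝ, 0 < s → s ≤ u → u ≤ v → v ≤ T →
      |∫ r in u..v, σ r * Kt (r, s)| ≤ C * c * T ^ β * T ^ α / α * s ^ (-β) := by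
    intro s u v hs hsu huv hvT
    have hdom : IntervalIntegrable
        (fun r => (C * c * (T ^ β * s ^ (-β))) * (r - s) ^ (α - 1)) volume u v := by
      have := ((intervalIntegrable_rpow' hα1 (a := u - s) (b := v - s)).comp_sub_right s)
      simpa using this.const_mul (C * c * (T ^ β * s ^ (-β)))
    have hb : ‖∫ r in u..v, σ r * Kt (r, s)‖ ≤
        |∫ r in u..v, (C * c * (T ^ β * s ^ (-β))) * (r - s) ^ (α - 1)| := by
      refine intervalIntegral.norm_integral_le_abs_of_norm_le ?_ hdom
      rw [Set.uIoc_of_le huv]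
      filter_upwards [ae_restrict_mem measurableSet_Ioc] with r hr
      have hsr : s < r := lt_of_le_of_lt hsu hr.1
      have h0r : (0:ℝ) ≤ r := le_trans hs.le hsr.le
      rw [Real.norm_eq_abs, abs_mul]
      calc |σ r| * |Kt (r, s)| ≤ C * (c * (r - s) ^ (α - 1) * (T ^ β * s ^ (-β))) :=
            mul_le_mul (hσC r h0r (hr.2.trans hvT)) (hKt_bound r s hs hsr)
              (abs_nonneg _) hC.le
        _ = C * c * (T ^ β * s ^ (-β)) * (r - s) ^ (α - 1) := by ring
    have hval : ∫ r in u..v, (r - s) ^ (α - 1) = ((v - s) ^ α - (u - s) ^ α) / α := by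
      rw [intervalIntegral.integral_comp_sub_right (fun x => x ^ (α - 1)) s,
        integral_rpow (Or.inl hα1), sub_add_cancel]
    have hus : (0:ℝ) ≤ u - s := by linarith
    have hmono' : (u - s) ^ α ≤ (v - s) ^ α := Real.rpow_le_rpow hus (by linarith) hα.le
    have hvT' : (v - s) ^ α ≤ T ^ α := Real.rpow_le_rpow (by linarith) (by linarith) hα.le
    rw [Real.norm_eq_abs] at hb
    refine hb.trans ?_
    rw [intervalIntegral.integral_const_mul, hval, abs_mul,
      abs_of_nonneg (by positivity : (0:ℝ) ≤ C * c * (T ^ β * s ^ (-β))),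
      abs_of_nonneg (div_nonneg (by linarith) hα.le)]
    calc C * c * (T ^ β * s ^ (-β)) * (((v - s) ^ α - (u - s) ^ α) / α)
        ≤ C * c * (T ^ β * s ^ (-β)) * (T ^ α / α) := by
          refine mul_le_mul_of_nonneg_left ?_ (by positivity)
          rw [div_le_div_iff_of_pos_right hα]
          have := Real.rpow_nonneg hus α
          linarith
      _ = C * c * T ^ β * T ^ α / α * s ^ (-β) := by ring
    -- measurability of parametric integrals
  have hGmeas : ∀ u v : ℝ, u ≤ v → Measurable (fun s => ∫ r' in u..v, σ r' * Kt (r', s)) := by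
    intro u v huv
    have heq : (fun s => ∫ r' in u..v, σ r' * Kt (r', s))
        = fun s => ∫ r', (Set.Ioc u v).indicator (fun r' => σ r' * Kt (r', s)) r' := by
      funext s
      rw [intervalIntegral.integral_of_le huv, ← MeasureTheory.integral_indicator measurableSet_Ioc]
    rw [heq]
    have hSM : StronglyMeasurable
        (fun q : ℝ × ℝ => (Set.Ioc u v).indicator (fun r' => σ r' * Kt (r', q.1)) q.2) := by
      have he : (fun q : ℝ × ℝ => (Set.Ioc u v).indicator (fun r' => σ r' * Kt (r', q.1)) q.2)
          = fun q : ℝ × ℝ => if q.2 ∈ Set.Ioc u v then σ q.2 * Kt (q.2, q.1) else 0 := by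
        funext q; rw [Set.indicator_apply]
      rw [he]
      refine Measurable.stronglyMeasurable (Measurable.ite ?_ ?_ measurable_const)
      · exact (measurableSet_lt measurable_const measurable_snd).inter
          (measurableSet_le measurable_snd measurable_const)
      · exact (hσmeas.comp measurable_snd).mul
          (hKtmeas.comp (measurable_snd.prodMk measurable_fst))
    exact hSM.integral_prod_right'.measurable
  have hFmeas : ∀ τ : ℝ,
      Measurable (fun s => ∫ r, (Set.Ioc s τ).indicator (fun r => σ r * Kt (r, s)) r) := by
    intro τ
    have hSM : StronglyMeasurable
        (fun q : ℝ × ℝ => (Set.Ioc q.1 τ).indicator (fun r => σ r * Kt (r, q.1)) q.2) := by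
      have he : (fun q : ℝ × ℝ => (Set.Ioc q.1 τ).indicator (fun r => σ r * Kt (r, q.1)) q.2)
          = fun q : ℝ × ℝ => if q.1 < q.2 ∧ q.2 ≤ τ then σ q.2 * Kt (q.2, q.1) else 0 := by
        funext q; rw [Set.indicator_apply]; rfl
      rw [he]
      refine Measurable.stronglyMeasurable (Measurable.ite ?_ ?_ measurable_const)
      · exact (measurableSet_lt measurable_fst measurable_snd).inter
          (measurableSet_le measurable_snd measurable_const)
      · exact (hσmeas.comp measurable_snd).mul
          (hKtmeas.comp (measurable_snd.prodMk measurable_fst))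
    exact hSM.integral_prod_right'.measurable
  have hFeq : ∀ τ s : ℝ, s ≤ τ → (∫ r in s..τ, σ r * Kt (r, s))
      = ∫ r, (Set.Ioc s τ).indicator (fun r => σ r * Kt (r, s)) r := by
    intro τ s h
    rw [intervalIntegral.integral_of_le h, ← MeasureTheory.integral_indicator measurableSet_Ioc]
  have hFaesm : ∀ τ u v : ℝ, u ≤ v → v ≤ τ →
      AEStronglyMeasurable (fun s => ∫ r in s..τ, σ r * Kt (r, s))
        (volume.restrict (Set.Ioc u v)) := by
    intro τ u v huv hvτ
    refine ((hFmeas τ).aestronglyMeasurable.restrict).congr ?_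
    filter_upwards [ae_restrict_mem measurableSet_Ioc] with s hs
    exact (hFeq τ s (hs.2.trans hvτ)).symm
  set M₁ : ℝ := C * c * T ^ β * T ^ α / α with hM₁def
  have hM₁ : 0 ≤ M₁ := by rw [hM₁def]; positivity
  have hdom2 : ∀ u v : ℝ, 0 ≤ u →
      IntegrableOn (fun s : ℝ => M₁ * M₁ * s ^ (-β - β)) (Set.Ioc u v) volume :=
    fun u v h0 => ((integrableOn_rpow_Ioc hβ1).mono (Set.Ioc_subset_Ioc_left h0) le_rfl).const_mul _
  have hsqb : ∀ x y s : ℝ, 0 < s → |x| ≤ M₁ * s ^ (-β) → |y| ≤ M₁ * s ^ (-β) →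
      ‖x * y‖ ≤ M₁ * M₁ * s ^ (-β - β) := by
    intro x y s hs hx hy
    rw [Real.norm_eq_abs, abs_mul, show -β - β = -β + -β by ring, Real.rpow_add hs]
    calc |x| * |y| ≤ (M₁ * s ^ (-β)) * (M₁ * s ^ (-β)) :=
          mul_le_mul hx hy (abs_nonneg _) (mul_nonneg hM₁ (Real.rpow_nonneg hs.le _))
      _ = M₁ * M₁ * (s ^ (-β) * s ^ (-β)) := by ring
  have hFsq_int : ∀ τ u v : ℝ, 0 ≤ u → u ≤ v → v ≤ τ → τ ≤ T →
      IntervalIntegrable (fun s => (∫ r in s..τ, σ r * Kt (r, s)) ^ 2) volume u v := by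
    intro τ u v h0u huv hvτ hτT
    refine (intervalIntegrable_iff_integrableOn_Ioc_of_le huv).2 ?_
    refine Integrable.mono' (hdom2 u v h0u)
      (((hFaesm τ u v huv hvτ).mul (hFaesm τ u v huv hvτ)).congr ?_) ?_
    · exact Filter.Eventually.of_forall (fun s => by simp only [Pi.mul_apply]; ring)
    · filter_upwards [ae_restrict_mem measurableSet_Ioc] with s hs
      have hs0 : 0 < s := lt_of_le_of_lt h0u hs.1
      have hb := hIbound s s τ hs0 le_rfl (hs.2.trans hvτ) hτT
      rw [show (∫ r in s..τ, σ r * Kt (r, s)) ^ 2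
          = (∫ r in s..τ, σ r * Kt (r, s)) * (∫ r in s..τ, σ r * Kt (r, s)) by ring]
      exact hsqb _ _ s hs0 hb hb
  have hFG_int : ∀ t t' : ℝ, 0 ≤ t → t ≤ t' → t' ≤ T →
      IntervalIntegrable (fun s => (∫ r in s..t, σ r * Kt (r, s))
        * (∫ r' in t..t', σ r' * Kt (r', s))) volume 0 t := by
    intro t t' h0t htt' ht'T
    refine (intervalIntegrable_iff_integrableOn_Ioc_of_le h0t).2 ?_
    refine Integrable.mono' (hdom2 0 t le_rfl)
      ((hFaesm t 0 t h0t le_rfl).mul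
        ((hGmeas t t' htt').aestronglyMeasurable.restrict)) ?_
    filter_upwards [ae_restrict_mem measurableSet_Ioc] with s hs
    exact hsqb _ _ s hs.1 (hIbound s s t hs.1 le_rfl hs.2 (htt'.trans ht'T))
      (hIbound s t t' hs.1 hs.2 htt' ht'T)
  have hGsq_int : ∀ t t' : ℝ, 0 ≤ t → t ≤ t' → t' ≤ T →
      IntervalIntegrable (fun s => (∫ r' in t..t', σ r' * Kt (r', s)) ^ 2) volume 0 t := by
    intro t t' h0t htt' ht'T
    refine (intervalIntegrable_iff_integrableOn_Ioc_of_le h0t).2 ?_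
    refine Integrable.mono' (hdom2 0 t le_rfl)
      ((((hGmeas t t' htt').mul (hGmeas t t' htt')).aestronglyMeasurable.restrict).congr ?_) ?_
    · exact Filter.Eventually.of_forall (fun s => by simp only [Pi.mul_apply]; ring)
    · filter_upwards [ae_restrict_mem measurableSet_Ioc] with s hs
      have hb := hIbound s t t' hs.1 hs.2 htt' ht'T
      rw [show (∫ r' in t..t', σ r' * Kt (r', s)) ^ 2
          = (∫ r' in t..t', σ r' * Kt (r', s)) * (∫ r' in t..t', σ r' * Kt (r', s)) by ring]
      exact hsqb _ _ s hs.1 hb hb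
  -- the crucial positivity of the cross term (via two Fubini swaps)
  have cross : ∀ t t' : ℝ, 0 ≤ t → t ≤ t' → t' ≤ T →
      0 ≤ ∫ s in (0:ℝ)..t, (∫ r in s..t, σ r * Kt (r, s))
        * (∫ r' in t..t', σ r' * Kt (r', s)) := by
    intro t t' h0t htt' ht'T
    have htT : t ≤ T := htt'.trans ht'T
    -- Fubini 1 : integrability on the square
    have FUB1 : Integrable
        (fun z : ℝ × ℝ => σ z.2 * Kt (z.2, z.1) * (∫ r' in t..t', σ r' * Kt (r', z.1)))
        ((volume.restrict (Set.Ioc (0:ℝ) t)).prod (volume.restrict (Set.Ioc (0:ℝ) t))) := by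
      have hD0 : (0:ℝ) ≤ C * c * T ^ β * M₁ := by
        refine mul_nonneg (by positivity) hM₁
      refine Integrable.mono'
        (g := fun z : ℝ × ℝ => C * c * T ^ β * M₁ * (z.1 ^ (-β - β) * |z.2 - z.1| ^ (α - 1)))
        ?_ ?_ ?_
      · have hgm : Measurable
            (fun z : ℝ × ℝ => C * c * T ^ β * M₁ * (z.1 ^ (-β - β) * |z.2 - z.1| ^ (α - 1))) :=
          measurable_const.mul ((measurable_rpow_const.comp measurable_fst).mul
            (measurable_rpow_const.comp ((measurable_snd.sub measurable_fst).abs)))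
        refine (integrable_prod_iff hgm.aestronglyMeasurable).2 ⟨?_, ?_⟩
        · filter_upwards [ae_restrict_mem measurableSet_Ioc] with s hs
          have h1 : IntegrableOn (fun r : ℝ => |r - s| ^ (α - 1)) (Set.Ioc 0 t) volume :=
            integrableOn_abs_shift hα1 le_rfl ⟨hs.1.le, hs.2⟩
          have h2 := h1.const_mul (C * c * T ^ β * M₁ * s ^ (-β - β))
          exact MeasureTheory.IntegrableOn.congr_fun h2 (fun r _ => by ring) measurableSet_Ioc
        · refine Integrable.mono'
            (g := fun s : ℝ => C * c * T ^ β * M₁ * (2 * T ^ α / α) * s ^ (-β - β))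
            (((integrableOn_rpow_Ioc hβ1).const_mul _))
            ((hgm.norm.stronglyMeasurable.integral_prod_right').aestronglyMeasurable.restrict) ?_
          filter_upwards [ae_restrict_mem measurableSet_Ioc] with s hs
          have hval : ∫ r in Set.Ioc (0:ℝ) t, ‖C * c * T ^ β * M₁ * (s ^ (-β - β) * |r - s| ^ (α - 1))‖
              = C * c * T ^ β * M₁ * s ^ (-β - β) * ((s ^ α + (t - s) ^ α) / α) := by
            have e : ∀ r : ℝ, ‖C * c * T ^ β * M₁ * (s ^ (-β - β) * |r - s| ^ (α - 1))‖
                = (C * c * T ^ β * M₁ * s ^ (-β - β)) * |r - s| ^ (α - 1) := by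
              intro r
              rw [Real.norm_eq_abs,
                abs_of_nonneg (mul_nonneg hD0 (mul_nonneg (Real.rpow_nonneg hs.1.le _)
                  (Real.rpow_nonneg (abs_nonneg _) _)))]
              ring
            rw [setIntegral_congr_fun measurableSet_Ioc (fun r _ => e r),
              MeasureTheory.integral_const_mul, integral_abs_rpow_eq hα hs.1.le hs.2]
          rw [Real.norm_eq_abs,
            abs_of_nonneg (MeasureTheory.integral_nonneg (fun r => norm_nonneg _)), hval]
          have hb : (s ^ α + (t - s) ^ α) / α ≤ 2 * T ^ α / α := by
            rw [div_le_div_iff_of_pos_right hα]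
            have b1 : s ^ α ≤ T ^ α :=
              Real.rpow_le_rpow hs.1.le (hs.2.trans htT) hα.le
            have b2 : (t - s) ^ α ≤ T ^ α :=
              Real.rpow_le_rpow (by linarith [hs.1, hs.2]) (by linarith [hs.1, hs.2, htT]) hα.le
            linarith
          calc C * c * T ^ β * M₁ * s ^ (-β - β) * ((s ^ α + (t - s) ^ α) / α)
              ≤ C * c * T ^ β * M₁ * s ^ (-β - β) * (2 * T ^ α / α) := by
                refine mul_le_mul_of_nonneg_left hb
                  (mul_nonneg hD0 (Real.rpow_nonneg hs.1.le _))
            _ = C * c * T ^ β * M₁ * (2 * T ^ α / α) * s ^ (-β - β) := by ring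
      · exact (((hσmeas.comp measurable_snd).mul
          (hKtmeas.comp (measurable_snd.prodMk measurable_fst))).mul
          ((hGmeas t t' htt').comp measurable_fst)).aestronglyMeasurable
      · rw [Measure.prod_restrict]
        filter_upwards [ae_restrict_mem (measurableSet_Ioc.prod measurableSet_Ioc)] with z hz
        obtain ⟨hz1, hz2⟩ := hz
        rcases le_or_gt z.2 z.1 with h | h
        · rw [hKt_zero' _ _ h, mul_zero, zero_mul, norm_zero]
          exact mul_nonneg hD0 (mul_nonneg (Real.rpow_nonneg hz1.1.le _)
            (Real.rpow_nonneg (abs_nonneg _) _))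
        · have hG1 : |∫ r' in t..t', σ r' * Kt (r', z.1)| ≤ M₁ * z.1 ^ (-β) :=
            hIbound z.1 t t' hz1.1 hz1.2 htt' ht'T
          calc ‖σ z.2 * Kt (z.2, z.1) * (∫ r' in t..t', σ r' * Kt (r', z.1))‖
              = |σ z.2| * |Kt (z.2, z.1)| * |∫ r' in t..t', σ r' * Kt (r', z.1)| := by
                rw [Real.norm_eq_abs, abs_mul, abs_mul]
            _ ≤ C * (c * (z.2 - z.1) ^ (α - 1) * (T ^ β * z.1 ^ (-β))) * (M₁ * z.1 ^ (-β)) := by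
                refine mul_le_mul (mul_le_mul
                  (hσC z.2 (hz1.1.le.trans h.le) (hz2.2.trans htT))
                  (hKt_bound z.2 z.1 hz1.1 h) (abs_nonneg _) hC.le) hG1 (abs_nonneg _) ?_
                exact mul_nonneg hC.le (mul_nonneg (mul_nonneg hc.le
                  (Real.rpow_nonneg (by linarith [h] : (0:ℝ) ≤ z.2 - z.1) _))
                  (mul_nonneg (Real.rpow_nonneg hT.le _) (Real.rpow_nonneg hz1.1.le _)))
            _ = C * c * T ^ β * M₁ * (z.1 ^ (-β) * z.1 ^ (-β) * (z.2 - z.1) ^ (α - 1)) := by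
                ring
            _ = C * c * T ^ β * M₁ * (z.1 ^ (-β - β) * |z.2 - z.1| ^ (α - 1)) := by
                rw [abs_of_pos (sub_pos.2 h), show -β - β = -β + -β by ring,
                  Real.rpow_add hz1.1]
    -- rewrite the cross term as a double integral over the square
    rw [intervalIntegral.integral_of_le h0t]
    have step1 : ∀ s ∈ Set.Ioc (0:ℝ) t,
        (∫ r in s..t, σ r * Kt (r, s)) * (∫ r' in t..t', σ r' * Kt (r', s))
        = ∫ r in Set.Ioc (0:ℝ) t, σ r * Kt (r, s) * (∫ r' in t..t', σ r' * Kt (r', s)) := by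
      intro s hs
      have e1 : ∀ r ∈ Set.Ioc (0:ℝ) t, σ r * Kt (r, s)
          = (Set.Ioc s t).indicator (fun r => σ r * Kt (r, s)) r := by
        intro r hr
        by_cases hr2 : r ∈ Set.Ioc s t
        · rw [Set.indicator_of_mem hr2]
        · rw [Set.indicator_of_notMem hr2]
          rw [Set.mem_Ioc, not_and_or, not_lt] at hr2
          rcases hr2 with h | h
          · rw [hKt_zero' r s h, mul_zero]
          · exact absurd hr.2 h
      have h2 : ∫ r in Set.Ioc (0:ℝ) t, σ r * Kt (r, s) = ∫ r in s..t, σ r * Kt (r, s) := by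
        rw [setIntegral_congr_fun measurableSet_Ioc e1,
          MeasureTheory.integral_indicator measurableSet_Ioc,
          Measure.restrict_restrict measurableSet_Ioc,
          Set.inter_eq_self_of_subset_left (Set.Ioc_subset_Ioc hs.1.le le_rfl),
          intervalIntegral.integral_of_le hs.2]
      rw [← h2, ← MeasureTheory.integral_mul_const]
    rw [setIntegral_congr_fun measurableSet_Ioc step1, integral_integral_swap FUB1]
    refine integral_nonneg_of_ae ((ae_restrict_iff' measurableSet_Ioc).2
      (ae_Ioc_of_Ioo (fun r hr => ?_)))
    -- now fix r ∈ Ioo 0 t and show the inner integral is nonnegative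
    have hrT : r < T := lt_of_lt_of_le hr.2 htT
    have FUB2 : Integrable (fun z : ℝ × ℝ => Kt (r, z.1) * (σ z.2 * Kt (z.2, z.1)))
        ((volume.restrict (Set.Ioc (0:ℝ) t)).prod (volume.restrict (Set.Ioc t t'))) := by
      have htr : (0:ℝ) < t - r := sub_pos.2 hr.2
      have hE0 : (0:ℝ) ≤ c * T ^ β * (C * c * T ^ β * (t - r) ^ (α - 1)) := by
        have := Real.rpow_nonneg htr.le (α - 1)
        positivity
      have hu := (integrableOn_absbeta hβ1 (by linarith) hα1 (by linarith) hr.1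
        hr.2.le).const_mul (c * T ^ β * (C * c * T ^ β * (t - r) ^ (α - 1)))
      have hv : Integrable (fun _ : ℝ => (1:ℝ)) (volume.restrict (Set.Ioc t t')) :=
        integrableOn_const measure_Ioc_lt_top.ne
      refine Integrable.mono' (hu.mul_prod hv) ?_ ?_
      · exact ((hKtmeas.comp (measurable_const.prodMk measurable_fst)).mul
          ((hσmeas.comp measurable_snd).mul
            (hKtmeas.comp (measurable_snd.prodMk measurable_fst)))).aestronglyMeasurable
      · rw [Measure.prod_restrict]
        filter_upwards [ae_restrict_mem (measurableSet_Ioc.prod measurableSet_Ioc)] with z hz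
        obtain ⟨hz1, hz2⟩ := hz
        have hsr' : z.1 < z.2 := lt_of_le_of_lt hz1.2 hz2.1
        rcases le_or_gt r z.1 with h | h
        · rw [hKt_zero' r z.1 h, zero_mul, norm_zero, mul_one]
          exact mul_nonneg hE0 (mul_nonneg (Real.rpow_nonneg hz1.1.le _)
            (Real.rpow_nonneg (abs_nonneg _) _))
        · have hb1 : |Kt (r, z.1)| ≤ c * (r - z.1) ^ (α - 1) * (T ^ β * z.1 ^ (-β)) :=
            hKt_bound r z.1 hz1.1 h
          have hb2 : |Kt (z.2, z.1)| ≤ c * (z.2 - z.1) ^ (α - 1) * (T ^ β * z.1 ^ (-β)) :=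
            hKt_bound z.2 z.1 hz1.1 hsr'
          have hb3 : (z.2 - z.1) ^ (α - 1) ≤ (t - r) ^ (α - 1) :=
            Real.rpow_le_rpow_of_nonpos htr (by linarith [hz1.2, hz2.1]) (by linarith)
          have hσ2 : |σ z.2| ≤ C := hσC z.2 (by linarith [hz1.1, hsr']) (hz2.2.trans ht'T)
          calc ‖Kt (r, z.1) * (σ z.2 * Kt (z.2, z.1))‖
              = |Kt (r, z.1)| * (|σ z.2| * |Kt (z.2, z.1)|) := by
                rw [Real.norm_eq_abs, abs_mul, abs_mul]
            _ ≤ (c * (r - z.1) ^ (α - 1) * (T ^ β * z.1 ^ (-β)))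
                * (C * (c * (t - r) ^ (α - 1) * (T ^ β * z.1 ^ (-β)))) := by
                refine mul_le_mul hb1 ?_ (mul_nonneg (abs_nonneg _) (abs_nonneg _)) ?_
                · refine mul_le_mul hσ2 (hb2.trans ?_) (abs_nonneg _) hC.le
                  refine mul_le_mul_of_nonneg_right
                    (mul_le_mul_of_nonneg_left hb3 hc.le) ?_
                  exact mul_nonneg (Real.rpow_nonneg hT.le _) (Real.rpow_nonneg hz1.1.le _)
                · have := Real.rpow_nonneg (by linarith : (0:ℝ) ≤ r - z.1) (α - 1)
                  have := Real.rpow_nonneg hT.le β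
                  have := Real.rpow_nonneg hz1.1.le (-β)
                  positivity
            _ = c * T ^ β * (C * c * T ^ β * (t - r) ^ (α - 1))
                * (z.1 ^ (-β) * z.1 ^ (-β) * (r - z.1) ^ (α - 1)) := by ring
            _ = c * T ^ β * (C * c * T ^ β * (t - r) ^ (α - 1))
                * (z.1 ^ (-β - β) * |r - z.1| ^ (α - 1)) * 1 := by
                rw [abs_of_pos (sub_pos.2 h), show -β - β = -β + -β by ring,
                  Real.rpow_add hz1.1, mul_one]
    -- swap and use positivity of φ
    have e1 : ∀ s : ℝ, Kt (r, s) * (∫ r' in t..t', σ r' * Kt (r', s))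
        = ∫ r' in Set.Ioc t t', Kt (r, s) * (σ r' * Kt (r', s)) := by
      intro s
      rw [intervalIntegral.integral_of_le htt', ← MeasureTheory.integral_const_mul]
    have hφ : ∀ r' ∈ Set.Ioc t t', 0 ≤ ∫ s in Set.Ioc (0:ℝ) t, Kt (r, s) * (σ r' * Kt (r', s)) := by
      intro r' hr'
      have hσr' : 0 ≤ σ r' := hσ0 r' (h0t.trans hr'.1.le) (hr'.2.trans ht'T)
      have e2 : ∀ s ∈ Set.Ioc (0:ℝ) t, Kt (r, s) * (σ r' * Kt (r', s))
          = σ r' * (Kt (r, s) * Kt (r', s)) := fun s _ => by ring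
      rw [setIntegral_congr_fun measurableSet_Ioc e2, MeasureTheory.integral_const_mul]
      refine mul_nonneg hσr' ?_
      by_cases hr'T : r' < T
      · have e3 : ∀ s ∈ Set.Ioc (0:ℝ) t, Kt (r, s) * Kt (r', s)
            = (Set.Ioo 0 r).indicator (fun s => Kt (r, s) * Kt (r', s)) s := by
          intro s hs
          by_cases h2 : s ∈ Set.Ioo (0:ℝ) r
          · rw [Set.indicator_of_mem h2]
          · rw [Set.indicator_of_notMem h2]
            have : r ≤ s := le_of_not_gt (fun hlt => h2 ⟨hs.1, hlt⟩)
            rw [hKt_zero' r s this, zero_mul]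
        have hsub : Set.Ioo (0:ℝ) r ⊆ Set.Ioc 0 t :=
          fun x hx => ⟨hx.1, le_of_lt (hx.2.trans hr.2)⟩
        rw [setIntegral_congr_fun measurableSet_Ioc e3,
          MeasureTheory.integral_indicator measurableSet_Ioo,
          Measure.restrict_restrict measurableSet_Ioo,
          Set.inter_eq_self_of_subset_left hsub]
        have hrr' : r < r' := lt_trans hr.2 hr'.1
        have e4 : ∫ s in Set.Ioo (0:ℝ) r, Kt (r, s) * Kt (r', s)
            = ∫ s in Set.Ioo (0:ℝ) r, K' r s * K' r' s := by
          refine setIntegral_congr_fun measurableSet_Ioo (fun s hs => ?_)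
          rw [hKt_eq r s hs.1 hs.2 hrT, hKt_eq r' s hs.1 (hs.2.trans hrr') hr'T]
        rw [e4, ← MeasureTheory.integral_Ioc_eq_integral_Ioo,
          ← intervalIntegral.integral_of_le hr.1.le]
        have h5 := hφpos r r' (ne_of_lt hrr')
        rwa [min_eq_left hrr'.le] at h5
      · have e5 : ∀ s ∈ Set.Ioc (0:ℝ) t, Kt (r, s) * Kt (r', s) = 0 := fun s _ => by
          rw [hKt_zero r' s (by rintro ⟨_, _, h3⟩; exact hr'T h3), mul_zero]
        rw [setIntegral_congr_fun measurableSet_Ioc e5, MeasureTheory.integral_zero]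
    have key2 : ∫ s in Set.Ioc (0:ℝ) t, Kt (r, s) * (∫ r' in t..t', σ r' * Kt (r', s))
        = ∫ r' in Set.Ioc t t', ∫ s in Set.Ioc (0:ℝ) t, Kt (r, s) * (σ r' * Kt (r', s)) := by
      rw [setIntegral_congr_fun measurableSet_Ioc (fun s _ => e1 s)]
      exact integral_integral_swap FUB2
    calc (0:ℝ) ≤ σ r * ∫ s in Set.Ioc (0:ℝ) t, Kt (r, s) * (∫ r' in t..t', σ r' * Kt (r', s)) := by
          refine mul_nonneg (hσ0 r hr.1.le (hr.2.le.trans htT)) ?_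
          rw [key2]
          exact setIntegral_nonneg measurableSet_Ioc hφ
      _ = ∫ s in Set.Ioc (0:ℝ) t, σ r * (Kt (r, s) * (∫ r' in t..t', σ r' * Kt (r', s))) :=
          (MeasureTheory.integral_const_mul _ _).symm
      _ = ∫ s in Set.Ioc (0:ℝ) t, σ r * Kt (r, s) * (∫ r' in t..t', σ r' * Kt (r', s)) :=
          setIntegral_congr_fun measurableSet_Ioc (fun s _ => by ring)
  -- monotonicity core inequality
  have key : ∀ t t' : ℝ, 0 ≤ t → t ≤ t' → t' ≤ T →
      (∫ s in (0:ℝ)..t, (∫ r in s..t, σ r * Kt (r, s)) ^ 2)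
        + (∫ s in t..t', (∫ r in s..t', σ r * Kt (r, s)) ^ 2)
      ≤ ∫ s in (0:ℝ)..t', (∫ r in s..t', σ r * Kt (r, s)) ^ 2 := by
    intro t t' h0t htt' ht'T
    have hsplit : ∫ s in (0:ℝ)..t', (∫ r in s..t', σ r * Kt (r, s)) ^ 2
        = (∫ s in (0:ℝ)..t, (∫ r in s..t', σ r * Kt (r, s)) ^ 2)
          + ∫ s in t..t', (∫ r in s..t', σ r * Kt (r, s)) ^ 2 :=
      (intervalIntegral.integral_add_adjacent_intervals
        (hFsq_int t' 0 t le_rfl h0t htt' ht'T)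
        (hFsq_int t' t t' h0t htt' le_rfl ht'T)).symm
    have hdecomp : ∀ s ∈ Set.Ioo (0:ℝ) t,
        (∫ r in s..t', σ r * Kt (r, s)) ^ 2
        = (∫ r in s..t, σ r * Kt (r, s)) ^ 2
          + (2 * ((∫ r in s..t, σ r * Kt (r, s)) * (∫ r' in t..t', σ r' * Kt (r', s)))
            + (∫ r' in t..t', σ r' * Kt (r', s)) ^ 2) := by
      intro s hs
      have hadd : (∫ r in s..t, σ r * Kt (r, s)) + (∫ r in t..t', σ r * Kt (r, s))
          = ∫ r in s..t', σ r * Kt (r, s) :=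
        intervalIntegral.integral_add_adjacent_intervals
          (hI1 s s t hs.1 le_rfl hs.2.le (htt'.trans ht'T))
          (hI1 s t t' hs.1 hs.2.le htt' ht'T)
      rw [← hadd]; ring
    have hmain : (∫ s in (0:ℝ)..t, (∫ r in s..t, σ r * Kt (r, s)) ^ 2)
        ≤ ∫ s in (0:ℝ)..t, (∫ r in s..t', σ r * Kt (r, s)) ^ 2 := by
      have hcongr : ∫ s in (0:ℝ)..t, (∫ r in s..t', σ r * Kt (r, s)) ^ 2
          = ∫ s in (0:ℝ)..t, ((∫ r in s..t, σ r * Kt (r, s)) ^ 2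
            + (2 * ((∫ r in s..t, σ r * Kt (r, s)) * (∫ r' in t..t', σ r' * Kt (r', s)))
              + (∫ r' in t..t', σ r' * Kt (r', s)) ^ 2)) := by
        refine intervalIntegral.integral_congr_ae ?_
        rw [Set.uIoc_of_le h0t]
        exact ae_Ioc_of_Ioo hdecomp
      rw [hcongr, intervalIntegral.integral_add
        (hFsq_int t 0 t le_rfl h0t le_rfl (htt'.trans ht'T))
        (((hFG_int t t' h0t htt' ht'T).const_mul 2).add (hGsq_int t t' h0t htt' ht'T)),
        intervalIntegral.integral_add
        ((hFG_int t t' h0t htt' ht'T).const_mul 2) (hGsq_int t t' h0t htt' ht'T),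
        intervalIntegral.integral_const_mul]
      have hc1 := cross t t' h0t htt' ht'T
      have hc2 : (0:ℝ) ≤ ∫ s in (0:ℝ)..t, (∫ r' in t..t', σ r' * Kt (r', s)) ^ 2 :=
        intervalIntegral.integral_nonneg h0t (fun u _ => sq_nonneg _)
      linarith
    linarith [hsplit, hmain]
  -- tilde and original versions agree
  have hVeq : ∀ u v : ℝ, 0 ≤ u → u ≤ v → v ≤ T →
      (∫ s in u..v, (∫ r in s..v, σ r * K' r s) ^ 2)
      = ∫ s in u..v, (∫ r in s..v, σ r * Kt (r, s)) ^ 2 := by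
    intro u v h0 huv hvT
    refine intervalIntegral.integral_congr_ae ?_
    rw [Set.uIoc_of_le huv]
    refine ae_Ioc_of_Ioo (fun s hs => ?_)
    have h1 : (∫ r in s..v, σ r * K' r s) = ∫ r in s..v, σ r * Kt (r, s) := by
      refine intervalIntegral.integral_congr_ae ?_
      rw [Set.uIoc_of_le hs.2.le]
      refine ae_Ioc_of_Ioo (fun r hr => ?_)
      rw [hKt_eq r s (lt_of_le_of_lt h0 hs.1) hr.1 (lt_of_lt_of_le hr.2 hvT)]
    rw [h1]
  -- monotonicity of the variance functional
  have hmono : ∀ x y : ℝ, 0 ≤ x → x ≤ y → y ≤ T →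
      (∫ s in (0:ℝ)..x, (∫ r in s..x, σ r * K' r s) ^ 2)
        ≤ ∫ s in (0:ℝ)..y, (∫ r in s..y, σ r * K' r s) ^ 2 := by
    intro x y h0 hxy hyT
    rw [hVeq 0 x le_rfl h0 (hxy.trans hyT), hVeq 0 y le_rfl (h0.trans hxy) hyT]
    have h1 := key x y h0 hxy hyT
    have h2 : (0:ℝ) ≤ ∫ s in x..y, (∫ r in s..y, σ r * Kt (r, s)) ^ 2 :=
      intervalIntegral.integral_nonneg hxy (fun u _ => sq_nonneg _)
    linarith
  -- lower bound on the variance increment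
  have hlow : ∀ x : ℝ, t₀ ≤ x → x ≤ T →
      c₁ * (T - x) ^ a ≤ (∫ s in (0:ℝ)..T, (∫ r in s..T, σ r * K' r s) ^ 2)
        - ∫ s in (0:ℝ)..x, (∫ r in s..x, σ r * K' r s) ^ 2 := by
    intro x hx hxT
    have h0x : 0 ≤ x := ht₀.trans hx
    have h1 := key x T h0x hxT le_rfl
    have h2 := hlower x ⟨hx, hxT⟩
    rw [hVeq x T h0x hxT le_rfl] at h2
    rw [hVeq 0 T le_rfl hT.le le_rfl, hVeq 0 x le_rfl h0x hxT]
    linarith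
  -- final assembly
  rw [intervalIntegrable_iff_integrableOn_Ioc_of_le ht₀T.le]
  have hdommain : IntegrableOn (fun x : ℝ => c₁ ^ (-(1:ℝ)/2) * (T - x) ^ (-(a/2)))
      (Set.Ioc t₀ T) volume := by
    have h1 : IntervalIntegrable (fun x : ℝ => (T - x) ^ (-(a/2))) volume t₀ T := by
      have h2 := ((intervalIntegrable_rpow' (r := -(a/2)) (by linarith)
        (a := 0) (b := T - t₀)).comp_sub_left T).symm
      simpa using h2
    exact (intervalIntegrable_iff_integrableOn_Ioc_of_le ht₀T.le).1 (h1.const_mul _)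
  refine Integrable.mono' hdommain ?_ ?_
  · -- measurability via monotonicity
    have hmonoOn : MonotoneOn
        (fun t => ((∫ s in (0:ℝ)..T, (∫ r in s..T, σ r * K' r s) ^ 2)
          - (∫ s in (0:ℝ)..t, (∫ r in s..t, σ r * K' r s) ^ 2)) ^ (-(1:ℝ) / 2))
        (Set.Ico t₀ T) := by
      intro x hx y hy hxy
      have h1 := hmono x y (ht₀.trans hx.1) hxy hy.2.le
      have h2 := hlow y hy.1 hy.2.le
      have hpos : 0 < (∫ s in (0:ℝ)..T, (∫ r in s..T, σ r * K' r s) ^ 2)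
          - ∫ s in (0:ℝ)..y, (∫ r in s..y, σ r * K' r s) ^ 2 :=
        lt_of_lt_of_le (mul_pos hc₁ (Real.rpow_pos_of_pos (by linarith [hy.2]) a)) h2
      exact Real.rpow_le_rpow_of_nonpos hpos (by linarith) (by norm_num)
    have hae := aemeasurable_restrict_of_monotoneOn (μ := volume) measurableSet_Ico hmonoOn
    have hset : Set.Ioc t₀ T =ᵐ[volume] Set.Ico t₀ T :=
      (MeasureTheory.Ioo_ae_eq_Ioc (a := t₀) (b := T)).symm.trans MeasureTheory.Ioo_ae_eq_Ico
    rw [Measure.restrict_congr_set hset]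
    exact hae.aestronglyMeasurable
  · -- pointwise bound
    filter_upwards [ae_restrict_mem measurableSet_Ioc] with x hx
    rcases eq_or_lt_of_le hx.2 with hxT | hxT
    · rw [hxT, sub_self, sub_self,
        Real.zero_rpow (by norm_num : (-(1:ℝ)/2) ≠ 0),
        Real.zero_rpow (neg_ne_zero.2 (by positivity : (a/2) ≠ 0)),
        norm_zero, mul_zero]
    · have h2 := hlow x hx.1.le hxT.le
      have hTx : (0:ℝ) < T - x := by linarith
      have hpos : (0:ℝ) < c₁ * (T - x) ^ a :=
        mul_pos hc₁ (Real.rpow_pos_of_pos hTx a)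
      have hb : ((∫ s in (0:ℝ)..T, (∫ r in s..T, σ r * K' r s) ^ 2)
            - (∫ s in (0:ℝ)..x, (∫ r in s..x, σ r * K' r s) ^ 2)) ^ (-(1:ℝ)/2)
          ≤ (c₁ * (T - x) ^ a) ^ (-(1:ℝ)/2) :=
        Real.rpow_le_rpow_of_nonpos hpos h2 (by norm_num)
      rw [Real.norm_eq_abs, abs_of_nonneg (Real.rpow_nonneg (by linarith [hpos.le, h2]) _)]
      refine hb.trans (le_of_eq ?_)
      rw [Real.mul_rpow hc₁.le (Real.rpow_nonneg hTx.le _),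
        ← Real.rpow_mul hTx.le, show a * (-(1:ℝ)/2) = -(a/2) by ring]
end

section
/- For every t ∈ [0,T], V(t) = ∫_0^t ∫_0^t σ_r σ_{r′} φ(r,r′) dr′ dr, all integrals converging absolutely. -/
open Real MeasureTheory intervalIntegral

open Set

private lemma setIntegral_zero_off {h : ℝ → ℝ} {A B : Set ℝ} (hA : MeasurableSet A)
    (hB : MeasurableSet B) (hBA : B ⊆ A) (h0 : ∀ x ∈ A \ B, h x = 0) :
    ∫ x in A, h x = ∫ x in B, h x := by
  rw [← MeasureTheory.integral_indicator hA, ← MeasureTheory.integral_indicator hB]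
  congr 1
  funext x
  by_cases hxB : x ∈ B
  · rw [indicator_of_mem hxB, indicator_of_mem (hBA hxB)]
  · rw [indicator_of_notMem hxB]
    by_cases hxA : x ∈ A
    · rw [indicator_of_mem hxA, h0 x ⟨hxA, hxB⟩]
    · rw [indicator_of_notMem hxA]

private lemma betaIntegrable {a b m : ℝ} (ha : 0 < a) (ha1 : a < 1) (hb : 0 < b) (hb' : b < 1)
    (hm : 0 < m) :
    IntegrableOn (fun u => (m - u) ^ (a - 1) * u ^ (-b)) (Ioc 0 m) volume := by
  have hmeas : Measurable (fun u : ℝ => (m - u) ^ (a - 1) * u ^ (-b)) := by fun_prop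
  have h1 : IntegrableOn (fun u => (m - u) ^ (a - 1) * u ^ (-b)) (Ioc 0 (m / 2)) volume := by
    have hint : IntegrableOn (fun u : ℝ => (m / 2) ^ (a - 1) * u ^ (-b)) (Ioc 0 (m / 2)) volume := by
      have h := (intervalIntegrable_rpow' (a := 0) (b := m / 2) (r := -b) (by linarith)).const_mul
        ((m / 2) ^ (a - 1))
      rwa [intervalIntegrable_iff_integrableOn_Ioc_of_le (by linarith)] at h
    refine hint.mono' hmeas.aestronglyMeasurable.restrict ?_
    refine (ae_restrict_iff' measurableSet_Ioc).2 (ae_of_all _ fun u hu => ?_)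
    have hu0 : 0 < u := hu.1
    have hmu : (0:ℝ) < m / 2 := by linarith
    have h1 : m / 2 ≤ m - u := by linarith [hu.2]
    have hb1 : (0:ℝ) ≤ (m - u) ^ (a - 1) := rpow_nonneg (by linarith) _
    have hb2 : (0:ℝ) ≤ u ^ (-b) := rpow_nonneg hu0.le _
    rw [Real.norm_eq_abs, abs_of_nonneg (mul_nonneg hb1 hb2)]
    exact mul_le_mul_of_nonneg_right
      (Real.rpow_le_rpow_of_nonpos hmu h1 (by linarith)) hb2
  have h2 : IntegrableOn (fun u => (m - u) ^ (a - 1) * u ^ (-b)) (Ioc (m / 2) m) volume := by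
    have hint : IntegrableOn (fun u : ℝ => (m / 2) ^ (-b) * (m - u) ^ (a - 1)) (Ioc (m / 2) m)
        volume := by
      have h := ((intervalIntegrable_rpow' (a := 0) (b := m / 2) (r := a - 1)
        (by linarith)).comp_sub_left m).const_mul ((m / 2) ^ (-b))
      rw [sub_zero, sub_half] at h
      replace h := h.symm
      rwa [intervalIntegrable_iff_integrableOn_Ioc_of_le (by linarith)] at h
    refine hint.mono' hmeas.aestronglyMeasurable.restrict ?_
    refine (ae_restrict_iff' measurableSet_Ioc).2 (ae_of_all _ fun u hu => ?_)
    have hu0 : (0:ℝ) < m / 2 := by linarith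
    have hb1 : (0:ℝ) ≤ (m - u) ^ (a - 1) := rpow_nonneg (by linarith [hu.2]) _
    have hb2 : (0:ℝ) ≤ u ^ (-b) := rpow_nonneg (by linarith [hu.1]) _
    rw [Real.norm_eq_abs, abs_of_nonneg (mul_nonneg hb1 hb2), mul_comm]
    exact mul_le_mul_of_nonneg_right
      (Real.rpow_le_rpow_of_nonpos hu0 hu.1.le (by linarith)) hb1
  have := h1.union h2
  rwa [Ioc_union_Ioc_eq_Ioc (by linarith) (by linarith)] at this

private lemma betaBound {a b m : ℝ} (ha : 0 < a) (ha1 : a < 1) (hb : 0 < b) (hb' : b < 1)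
    (hm : 0 < m) :
    ∫ u in Ioc 0 m, (m - u) ^ (a - 1) * u ^ (-b) ≤
      ((1 / (1 - b) + 1 / a) * (1 / 2) ^ (a - b)) * m ^ (a - b) := by
  have hmeas : Measurable (fun u : ℝ => (m - u) ^ (a - 1) * u ^ (-b)) := by fun_prop
  have hI := betaIntegrable ha ha1 hb hb' hm
  have h1 : IntegrableOn (fun u => (m - u) ^ (a - 1) * u ^ (-b)) (Ioc 0 (m / 2)) volume :=
    hI.mono_set (Ioc_subset_Ioc_right (by linarith))
  have h2 : IntegrableOn (fun u => (m - u) ^ (a - 1) * u ^ (-b)) (Ioc (m / 2) m) volume :=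
    hI.mono_set (Ioc_subset_Ioc_left (by linarith))
  have hint1 : IntegrableOn (fun u : ℝ => (m / 2) ^ (a - 1) * u ^ (-b)) (Ioc 0 (m / 2))
      volume := by
    have h := (intervalIntegrable_rpow' (a := 0) (b := m / 2) (r := -b) (by linarith)).const_mul
      ((m / 2) ^ (a - 1))
    rwa [intervalIntegrable_iff_integrableOn_Ioc_of_le (by linarith)] at h
  have hint2 : IntegrableOn (fun u : ℝ => (m / 2) ^ (-b) * (m - u) ^ (a - 1)) (Ioc (m / 2) m)
      volume := by
    have h := ((intervalIntegrable_rpow' (a := 0) (b := m / 2) (r := a - 1)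
      (by linarith)).comp_sub_left m).const_mul ((m / 2) ^ (-b))
    rw [sub_zero, sub_half] at h
    replace h := h.symm
    rwa [intervalIntegrable_iff_integrableOn_Ioc_of_le (by linarith)] at h
  have hsplit : Ioc (0:ℝ) m = Ioc 0 (m / 2) ∪ Ioc (m / 2) m :=
    (Ioc_union_Ioc_eq_Ioc (by linarith) (by linarith)).symm
  rw [hsplit, setIntegral_union (Ioc_disjoint_Ioc_of_le le_rfl) measurableSet_Ioc h1 h2]
  have hhalf : (0:ℝ) < m / 2 := by linarith
  have e1 : ∫ u in Ioc 0 (m / 2), (m - u) ^ (a - 1) * u ^ (-b) ≤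
      (m / 2) ^ (a - b) / (1 - b) := by
    have step : ∫ u in Ioc 0 (m / 2), (m - u) ^ (a - 1) * u ^ (-b) ≤
        ∫ u in Ioc 0 (m / 2), (m / 2) ^ (a - 1) * u ^ (-b) := by
      refine setIntegral_mono_on h1 hint1 measurableSet_Ioc fun u hu => ?_
      have hb2 : (0:ℝ) ≤ u ^ (-b) := rpow_nonneg hu.1.le _
      exact mul_le_mul_of_nonneg_right
        (Real.rpow_le_rpow_of_nonpos hhalf (by linarith [hu.2]) (by linarith)) hb2
    have hA : ∫ u in Ioc (0:ℝ) (m / 2), u ^ (-b) = (m / 2) ^ (1 - b) / (1 - b) := by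
      rw [← intervalIntegral.integral_of_le (by linarith : (0:ℝ) ≤ m / 2),
        integral_rpow (Or.inl (by linarith)), Real.zero_rpow (by linarith), sub_zero]
      have hexp : -b + 1 = 1 - b := by ring
      rw [hexp]
    calc ∫ u in Ioc 0 (m / 2), (m - u) ^ (a - 1) * u ^ (-b) ≤
        ∫ u in Ioc 0 (m / 2), (m / 2) ^ (a - 1) * u ^ (-b) := step
      _ = (m / 2) ^ (a - 1) * ((m / 2) ^ (1 - b) / (1 - b)) := by
          rw [MeasureTheory.integral_const_mul, hA]
      _ = (m / 2) ^ (a - 1) * (m / 2) ^ (1 - b) / (1 - b) := by ring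
      _ = (m / 2) ^ (a - b) / (1 - b) := by
          rw [← Real.rpow_add hhalf]; ring_nf
  have e2 : ∫ u in Ioc (m / 2) m, (m - u) ^ (a - 1) * u ^ (-b) ≤
      (m / 2) ^ (a - b) / a := by
    have step : ∫ u in Ioc (m / 2) m, (m - u) ^ (a - 1) * u ^ (-b) ≤
        ∫ u in Ioc (m / 2) m, (m / 2) ^ (-b) * (m - u) ^ (a - 1) := by
      refine setIntegral_mono_on h2 hint2 measurableSet_Ioc fun u hu => ?_
      have hb1 : (0:ℝ) ≤ (m - u) ^ (a - 1) := rpow_nonneg (by linarith [hu.2]) _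
      calc (m - u) ^ (a - 1) * u ^ (-b) ≤ (m - u) ^ (a - 1) * (m / 2) ^ (-b) :=
            mul_le_mul_of_nonneg_left
              (Real.rpow_le_rpow_of_nonpos hhalf hu.1.le (by linarith)) hb1
        _ = (m / 2) ^ (-b) * (m - u) ^ (a - 1) := by ring
    have hB : ∫ u in Ioc (m / 2) m, (m - u) ^ (a - 1) = (m / 2) ^ a / a := by
      rw [← intervalIntegral.integral_of_le (by linarith : m / 2 ≤ m)]
      rw [show (fun u : ℝ => (m - u) ^ (a - 1)) = fun u : ℝ => (fun x : ℝ => x ^ (a - 1)) (m - u)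
        from rfl]
      rw [intervalIntegral.integral_comp_sub_left (fun x : ℝ => x ^ (a - 1)) m, sub_self,
        sub_half, integral_rpow (Or.inl (by linarith)), Real.zero_rpow (by linarith), sub_zero]
      have hexp : a - 1 + 1 = a := by ring
      rw [hexp]
    calc ∫ u in Ioc (m / 2) m, (m - u) ^ (a - 1) * u ^ (-b) ≤
        ∫ u in Ioc (m / 2) m, (m / 2) ^ (-b) * (m - u) ^ (a - 1) := step
      _ = (m / 2) ^ (-b) * ((m / 2) ^ a / a) := by
          rw [MeasureTheory.integral_const_mul, hB]
      _ = (m / 2) ^ (-b) * (m / 2) ^ a / a := by ring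
      _ = (m / 2) ^ (a - b) / a := by
          rw [← Real.rpow_add hhalf]; ring_nf
  have k3 : (m / 2) ^ (a - b) = (1 / 2) ^ (a - b) * m ^ (a - b) := by
    rw [show m / 2 = m * (1 / 2) by ring, Real.mul_rpow hm.le (by norm_num)]
    ring
  have : (m / 2) ^ (a - b) / (1 - b) + (m / 2) ^ (a - b) / a =
      ((1 / (1 - b) + 1 / a) * (1 / 2) ^ (a - b)) * m ^ (a - b) := by
    rw [k3]; ring
  linarith [e1, e2]

set_option maxHeartbeats 1000000 in
/-- For every `t ∈ [0,T]`,
`V(t) = ∫_0^t ∫_0^t σ_r σ_{r'} φ(r,r') dr' dr`, all integrals converging absolutely,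
where `V(t) = ∫_0^t (∫_s^t σ_r K'(r,s) dr)² ds` and
`φ(r,s) = ∫_0^{min(r,s)} K'(r,u) K'(s,u) du`. -/
theorem volterra_variance_double_integral
    (T : ℝ) (hT : 0 < T) (K K' : ℝ → ℝ → ℝ)
    (hVol : ∀ t s : ℝ, t < s → K t s = 0)
    (hKcont : ContinuousOn (fun p : ℝ × ℝ => K p.1 p.2)
      {p : ℝ × ℝ | 0 < p.2 ∧ p.2 ≤ p.1 ∧ p.1 < T})
    (hK' : ∀ s t : ℝ, 0 < s → s < t → t < T → HasDerivAt (fun τ => K τ s) (K' t s) t)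
    (hK'cont : ContinuousOn (fun p : ℝ × ℝ => K' p.1 p.2)
      {p : ℝ × ℝ | 0 < p.2 ∧ p.2 < p.1 ∧ p.1 < T})
    (α β c : ℝ) (hα : 0 < α) (hα' : α < 1 / 2) (hβ : 0 < β) (hβ' : β < 1 / 2)
    (hc : 0 < c)
    (hH2 : ∀ s t : ℝ, 0 < s → s < t → t < T →
      |K' t s| ≤ c * (t - s) ^ (α - 1) * (t / s) ^ β)
    (σ : ℝ → ℝ) (hσmeas : Measurable σ)
    (Cσ : ℝ) (hσB : ∀ t ∈ Set.Icc (0 : ℝ) T, |σ t| ≤ Cσ) :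
    ∀ t ∈ Set.Icc (0 : ℝ) T,
      (∀ s ∈ Set.Ioo (0 : ℝ) t,
          IntervalIntegrable (fun r => σ r * K' r s) MeasureTheory.volume s t) ∧
      IntervalIntegrable (fun s => (∫ r in s..t, σ r * K' r s) ^ 2)
        MeasureTheory.volume 0 t ∧
      (∀ r ∈ Set.Ioo (0 : ℝ) t,
          IntervalIntegrable
            (fun r' => σ r * σ r' * ∫ u in (0 : ℝ)..(min r r'), K' r u * K' r' u)
            MeasureTheory.volume 0 t) ∧
      IntervalIntegrable
        (fun r => ∫ r' in (0 : ℝ)..t, σ r * σ r' * ∫ u in (0 : ℝ)..(min r r'), K' r u * K' r' u)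
        MeasureTheory.volume 0 t ∧
      (∫ s in (0 : ℝ)..t, (∫ r in s..t, σ r * K' r s) ^ 2)
        = ∫ r in (0 : ℝ)..t, ∫ r' in (0 : ℝ)..t,
            σ r * σ r' * ∫ u in (0 : ℝ)..(min r r'), K' r u * K' r' u := by
  intro t ht
  obtain ⟨ht0, htT⟩ := ht
  rcases ht0.eq_or_lt with h0 | h0
  · -- degenerate case t = 0
    subst h0
    have htriv : ∀ f : ℝ → ℝ, IntervalIntegrable f volume 0 0 := by
      intro f
      simp [intervalIntegrable_iff]
    exact ⟨fun s hs => absurd (hs.1.trans hs.2) (lt_irrefl 0),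
      htriv _, fun r hr => absurd (hr.1.trans hr.2) (lt_irrefl 0), htriv _, by
        simp [intervalIntegral.integral_same]⟩
  -- main case 0 < t ≤ T
  classical
  have hCσ : 0 ≤ Cσ := le_trans (abs_nonneg _) (hσB 0 ⟨le_refl 0, hT.le⟩)
  set U : Set (ℝ × ℝ) := {p : ℝ × ℝ | 0 < p.2 ∧ p.2 < p.1 ∧ p.1 < T} with hU
  have hUopen : IsOpen U := by
    have h1 : IsOpen {p : ℝ × ℝ | 0 < p.2} := isOpen_lt continuous_const continuous_snd
    have h2 : IsOpen {p : ℝ × ℝ | p.2 < p.1} := isOpen_lt continuous_snd continuous_fst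
    have h3 : IsOpen {p : ℝ × ℝ | p.1 < T} := isOpen_lt continuous_fst continuous_const
    exact h1.inter (h2.inter h3)
  set G : ℝ × ℝ → ℝ := fun p => U.indicator (fun q => K' q.1 q.2) p * σ p.1 with hG
  have hKind : Measurable (U.indicator (fun q : ℝ × ℝ => K' q.1 q.2)) := by
    rw [← Set.piecewise_eq_indicator]
    exact ContinuousOn.measurable_piecewise hK'cont continuousOn_const hUopen.measurableSet
  have hGmeas : Measurable G := hKind.mul (hσmeas.comp measurable_fst)
  have hGz : ∀ p : ℝ × ℝ, p ∉ U → G p = 0 := fun p hp => by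
    simp [hG, Set.indicator_of_notMem hp]
  have hGeq : ∀ p : ℝ × ℝ, p ∈ U → G p = K' p.1 p.2 * σ p.1 := fun p hp => by
    simp [hG, Set.indicator_of_mem hp]
  have hGzero_left : ∀ s r : ℝ, r ≤ s → G (r, s) = 0 := fun s r hrs =>
    hGz _ (fun hmem => absurd hmem.2.1 (not_lt.2 hrs))
  -- the basic pointwise bound
  have hGb : ∀ r s : ℝ, 0 < s → s < r →
      |G (r, s)| ≤ (Cσ * c * T ^ β * s ^ (-β)) * (r - s) ^ (α - 1) := by
    intro r s hs hsr
    have hsb : (0:ℝ) ≤ s ^ (-β) := Real.rpow_nonneg hs.le _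
    have hrs : (0:ℝ) ≤ (r - s) ^ (α - 1) := Real.rpow_nonneg (by linarith) _
    by_cases hrT : r < T
    · have hmem : (r, s) ∈ U := ⟨hs, hsr, hrT⟩
      rw [hGeq _ hmem, abs_mul]
      have h2 := hH2 s r hs hsr hrT
      have hσr : |σ r| ≤ Cσ := hσB r ⟨by linarith, by linarith⟩
      have hdiv : (r / s) ^ β = r ^ β * s ^ (-β) := by
        rw [Real.div_rpow (by linarith) hs.le, Real.rpow_neg hs.le, div_eq_mul_inv]
      have hrβ : r ^ β ≤ T ^ β := Real.rpow_le_rpow (by linarith) hrT.le hβ.le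
      have hcnn : (0:ℝ) ≤ c * (r - s) ^ (α - 1) := mul_nonneg hc.le hrs
      calc |K' r s| * |σ r| ≤ (c * (r - s) ^ (α - 1) * (r / s) ^ β) * Cσ := by
            refine mul_le_mul h2 hσr (abs_nonneg _) ?_
            have : (0:ℝ) ≤ (r / s) ^ β := Real.rpow_nonneg (div_nonneg (by linarith) hs.le) _
            exact mul_nonneg hcnn this
        _ = (c * (r - s) ^ (α - 1)) * (r ^ β * s ^ (-β)) * Cσ := by rw [hdiv]
        _ ≤ (c * (r - s) ^ (α - 1)) * (T ^ β * s ^ (-β)) * Cσ := by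
            refine mul_le_mul_of_nonneg_right (mul_le_mul_of_nonneg_left
              (mul_le_mul_of_nonneg_right hrβ hsb) hcnn) hCσ
        _ = (Cσ * c * T ^ β * s ^ (-β)) * (r - s) ^ (α - 1) := by ring
    · rw [hGz _ (fun hmem => hrT hmem.2.2), abs_zero]
      have hC : (0:ℝ) ≤ Cσ * c * T ^ β * s ^ (-β) :=
        mul_nonneg (mul_nonneg (mul_nonneg hCσ hc.le) (Real.rpow_nonneg hT.le _)) hsb
      exact mul_nonneg hC hrs
  have hbound_int : ∀ s : ℝ, 0 < s → s < t → IntegrableOn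
      (fun r => (Cσ * c * T ^ β * s ^ (-β)) * (r - s) ^ (α - 1)) (Set.Ioc s t) volume := by
    intro s hs hst
    have h := ((intervalIntegrable_rpow' (a := 0) (b := t - s) (r := α - 1)
      (by linarith)).comp_sub_right s).const_mul (Cσ * c * T ^ β * s ^ (-β))
    rw [zero_add, sub_add_cancel] at h
    rwa [intervalIntegrable_iff_integrableOn_Ioc_of_le (by linarith)] at h
  have hGint_Ioc : ∀ s : ℝ, 0 < s → s < t →
      IntegrableOn (fun r => G (r, s)) (Set.Ioc s t) volume := by
    intro s hs hst
    refine (hbound_int s hs hst).mono'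
      ((hGmeas.comp (measurable_id.prodMk measurable_const)).aestronglyMeasurable.restrict) ?_
    refine (ae_restrict_iff' measurableSet_Ioc).2 (ae_of_all _ fun r hr => ?_)
    rw [Real.norm_eq_abs]
    exact hGb r s hs hr.1
  have haeNe : ∀ x0 : ℝ, ∀ᵐ x : ℝ ∂volume, x ≠ x0 := by
    intro x0
    refine mem_ae_iff.2 ?_
    have : {x : ℝ | x ≠ x0}ᶜ = {x0} := by ext x; simp
    rw [this]
    exact measure_singleton x0
  have fact_inner : ∀ s : ℝ, 0 < s → s < t →
      (fun r => σ r * K' r s) =ᵐ[volume.restrict (Set.Ioc s t)] fun r => G (r, s) := by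
    intro s hs hst
    filter_upwards [ae_restrict_mem measurableSet_Ioc, ae_restrict_of_ae (haeNe T)]
      with r hr hrT
    have hrT' : r < T := lt_of_le_of_ne (le_trans hr.2 htT) hrT
    rw [hGeq (r, s) ⟨hs, hr.1, hrT'⟩]
    ring
  have conj1 : ∀ s ∈ Set.Ioo (0:ℝ) t,
      IntervalIntegrable (fun r => σ r * K' r s) volume s t := by
    intro s hs
    rw [intervalIntegrable_iff_integrableOn_Ioc_of_le hs.2.le]
    exact (hGint_Ioc s hs.1 hs.2).congr (fact_inner s hs.1 hs.2).symm
  -- the one-variable integral functions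
  set J : ℝ → ℝ := fun s => ∫ r in Set.Ioo 0 t, G (r, s) with hJdef
  set Jn : ℝ → ℝ := fun s => ∫ r in Set.Ioo 0 t, |G (r, s)| with hJndef
  have hJsm : StronglyMeasurable J := by
    have h : Measurable fun q : ℝ × ℝ => G (q.2, q.1) := hGmeas.comp measurable_swap
    exact h.stronglyMeasurable.integral_prod_right'
  have hJnsm : StronglyMeasurable Jn := by
    have h : Measurable fun q : ℝ × ℝ => |G (q.2, q.1)| := (hGmeas.comp measurable_swap).abs
    exact h.stronglyMeasurable.integral_prod_right'
  -- shrinking the integration domain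
  have shrinkA : ∀ (s : ℝ) (h : ℝ → ℝ), 0 ≤ s → (∀ r, r ≤ s → h r = 0) →
      ∫ r in Set.Ioo 0 t, h r = ∫ r in Set.Ioc s t, h r := by
    intro s h hs h0
    rw [integral_Ioc_eq_integral_Ioo]
    refine setIntegral_zero_off measurableSet_Ioo measurableSet_Ioo
      (fun r hr => ⟨lt_of_le_of_lt hs hr.1, hr.2⟩) (fun r hr => h0 r ?_)
    rcases hr with ⟨hr1, hr2⟩
    by_contra hcon
    push_neg at hcon
    exact hr2 ⟨hcon, hr1.2⟩
  have shrinkB : ∀ (m : ℝ) (h : ℝ → ℝ), m ≤ t → (∀ u, m ≤ u → h u = 0) →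
      ∫ u in Set.Ioo 0 t, h u = ∫ u in Set.Ioc 0 m, h u := by
    intro m h hmt h0
    rw [integral_Ioc_eq_integral_Ioo]
    refine setIntegral_zero_off measurableSet_Ioo measurableSet_Ioo
      (fun u hu => ⟨hu.1, lt_of_lt_of_le hu.2 hmt⟩) (fun u hu => h0 u ?_)
    rcases hu with ⟨hu1, hu2⟩
    by_contra hcon
    push_neg at hcon
    exact hu2 ⟨hu1.1, hcon⟩
  have inner_eq : ∀ s ∈ Set.Ioo (0:ℝ) t, (∫ r in s..t, σ r * K' r s) = J s := by
    intro s hs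
    rw [intervalIntegral.integral_of_le hs.2.le, integral_congr_ae (fact_inner s hs.1 hs.2)]
    exact (shrinkA s _ hs.1.le (fun r hr => hGzero_left s r hr)).symm
  set C1 : ℝ := Cσ * c * T ^ β * (t ^ α / α) with hC1def
  have hC1nn : 0 ≤ C1 :=
    mul_nonneg (mul_nonneg (mul_nonneg hCσ hc.le) (Real.rpow_nonneg hT.le _))
      (div_nonneg (Real.rpow_nonneg h0.le _) hα.le)
  have norm_step : ∀ s : ℝ, 0 < s → s < t → Jn s ≤ C1 * s ^ (-β) := by
    intro s hs hst
    have e0 : Jn s = ∫ r in Set.Ioc s t, |G (r, s)| :=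
      shrinkA s _ hs.le (fun r hr => by rw [hGzero_left s r hr, abs_zero])
    have mono : ∫ r in Set.Ioc s t, |G (r, s)| ≤
        ∫ r in Set.Ioc s t, (Cσ * c * T ^ β * s ^ (-β)) * (r - s) ^ (α - 1) :=
      setIntegral_mono_on ((hGint_Ioc s hs hst).abs) (hbound_int s hs hst)
        measurableSet_Ioc (fun r hr => hGb r s hs hr.1)
    have comp : ∫ r in Set.Ioc s t, (Cσ * c * T ^ β * s ^ (-β)) * (r - s) ^ (α - 1)
        = (Cσ * c * T ^ β * s ^ (-β)) * ((t - s) ^ α / α) := by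
      rw [MeasureTheory.integral_const_mul]
      congr 1
      rw [← intervalIntegral.integral_of_le hst.le]
      rw [show (fun r : ℝ => (r - s) ^ (α - 1))
        = fun r : ℝ => (fun x : ℝ => x ^ (α - 1)) (r - s) from rfl]
      rw [intervalIntegral.integral_comp_sub_right (fun x : ℝ => x ^ (α - 1)) s, sub_self,
        integral_rpow (Or.inl (by linarith)), Real.zero_rpow (by linarith), sub_zero,
        show α - 1 + 1 = α by ring]
    have hts : (t - s) ^ α / α ≤ t ^ α / α := by
      refine div_le_div_of_nonneg_right ?_ hα.le
      exact Real.rpow_le_rpow (by linarith) (by linarith) hα.le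
    have hMn : (0:ℝ) ≤ Cσ * c * T ^ β * s ^ (-β) :=
      mul_nonneg (mul_nonneg (mul_nonneg hCσ hc.le) (Real.rpow_nonneg hT.le _))
        (Real.rpow_nonneg hs.le _)
    calc Jn s = ∫ r in Set.Ioc s t, |G (r, s)| := e0
      _ ≤ (Cσ * c * T ^ β * s ^ (-β)) * ((t - s) ^ α / α) := by rw [← comp]; exact mono
      _ ≤ (Cσ * c * T ^ β * s ^ (-β)) * (t ^ α / α) := mul_le_mul_of_nonneg_left hts hMn
      _ = C1 * s ^ (-β) := by rw [hC1def]; ring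
  have hJn_nonneg : ∀ s, 0 ≤ Jn s := fun s => integral_nonneg fun r => abs_nonneg _
  have hJabs : ∀ s, |J s| ≤ Jn s := by
    intro s
    have h := norm_integral_le_integral_norm (μ := volume.restrict (Set.Ioo 0 t))
      (fun r => G (r, s))
    simpa [Real.norm_eq_abs] using h
  have hpow2int : IntegrableOn (fun s : ℝ => C1 ^ 2 * s ^ (-(2 * β)))
      (Set.Ioo 0 t) volume := by
    have h := (intervalIntegrable_rpow' (a := 0) (b := t) (r := -(2 * β))
      (by linarith)).const_mul (C1 ^ 2)
    rw [intervalIntegrable_iff_integrableOn_Ioc_of_le h0.le] at h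
    exact h.mono_set Set.Ioo_subset_Ioc_self
  have hJnJn_int : Integrable (fun s => Jn s * Jn s) (volume.restrict (Set.Ioo 0 t)) := by
    refine hpow2int.mono' (hJnsm.mul hJnsm).aestronglyMeasurable ?_
    refine (ae_restrict_iff' measurableSet_Ioo).2 (ae_of_all _ fun s hs => ?_)
    have hb := norm_step s hs.1 hs.2
    rw [Real.norm_eq_abs, abs_of_nonneg (mul_nonneg (hJn_nonneg s) (hJn_nonneg s))]
    have hsb : (0:ℝ) ≤ s ^ (-β) := Real.rpow_nonneg hs.1.le _
    have key : s ^ (-β) * s ^ (-β) = s ^ (-(2 * β)) := by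
      rw [← Real.rpow_add hs.1]; ring_nf
    calc Jn s * Jn s ≤ (C1 * s ^ (-β)) * (C1 * s ^ (-β)) :=
          mul_le_mul hb hb (hJn_nonneg s) (mul_nonneg hC1nn hsb)
      _ = C1 ^ 2 * (s ^ (-β) * s ^ (-β)) := by ring
      _ = C1 ^ 2 * s ^ (-(2 * β)) := by rw [key]
  have hJJ_int : Integrable (fun s => J s * J s) (volume.restrict (Set.Ioo 0 t)) := by
    refine hJnJn_int.mono' (hJsm.mul hJsm).aestronglyMeasurable ?_
    refine ae_of_all _ fun s => ?_
    rw [Real.norm_eq_abs, abs_mul]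
    exact mul_le_mul (hJabs s) (hJabs s) (abs_nonneg _) (hJn_nonneg s)
  have conj2 : IntervalIntegrable (fun s => (∫ r in s..t, σ r * K' r s) ^ 2) volume 0 t := by
    rw [intervalIntegrable_iff_integrableOn_Ioc_of_le h0.le,
      integrableOn_Ioc_iff_integrableOn_Ioo]
    refine hJJ_int.congr ?_
    refine (ae_restrict_iff' measurableSet_Ioo).2 (ae_of_all _ fun s hs => ?_)
    show J s * J s = (∫ r in s..t, σ r * K' r s) ^ 2
    rw [inner_eq s hs]
    ring
  -- product-measure machinery
  set H : ℝ × ℝ × ℝ → ℝ := fun q => G (q.2.1, q.1) * G (q.2.2, q.1) with hHdef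
  have hHmeas : Measurable H :=
    (hGmeas.comp ((measurable_fst.comp measurable_snd).prodMk measurable_fst)).mul
      (hGmeas.comp ((measurable_snd.comp measurable_snd).prodMk measurable_fst))
  have hGint_mu : ∀ s : ℝ, 0 < s → s < t →
      Integrable (fun r => G (r, s)) (volume.restrict (Set.Ioo 0 t)) := by
    intro s hs hst
    have h1 : IntegrableOn (fun r => G (r, s)) (Set.Ioc 0 s) volume :=
      (integrableOn_zero).congr_fun (fun r hr => (hGzero_left s r hr.2).symm) measurableSet_Ioc
    have hsub : Set.Ioo 0 t ⊆ Set.Ioc 0 s ∪ Set.Ioc s t := by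
      rw [Set.Ioc_union_Ioc_eq_Ioc hs.le hst.le]
      exact Set.Ioo_subset_Ioc_self
    exact (h1.union (hGint_Ioc s hs hst)).mono_set hsub
  have hHint : Integrable H ((volume.restrict (Set.Ioo 0 t)).prod
      ((volume.restrict (Set.Ioo 0 t)).prod (volume.restrict (Set.Ioo 0 t)))) := by
    rw [MeasureTheory.integrable_prod_iff hHmeas.aestronglyMeasurable]
    constructor
    · filter_upwards [ae_restrict_mem measurableSet_Ioo] with s hs
      exact (hGint_mu s hs.1 hs.2).mul_prod (hGint_mu s hs.1 hs.2)
    · have key : ∀ s : ℝ, (∫ p, ‖H (s, p)‖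
          ∂((volume.restrict (Set.Ioo 0 t)).prod (volume.restrict (Set.Ioo 0 t))))
          = Jn s * Jn s := by
        intro s
        rw [show (fun p : ℝ × ℝ => ‖H (s, p)‖)
          = fun p : ℝ × ℝ => |G (p.1, s)| * |G (p.2, s)| from
          funext fun p => by rw [Real.norm_eq_abs, abs_mul]]
        exact integral_prod_mul (fun r => |G (r, s)|) (fun r => |G (r, s)|)
      exact hJnJn_int.congr (ae_of_all _ fun s => (key s).symm)
  set F3 : ℝ × ℝ → ℝ := fun p => ∫ s in Set.Ioo 0 t, G (p.1, s) * G (p.2, s) with hF3def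
  have hF3int : Integrable F3
      ((volume.restrict (Set.Ioo 0 t)).prod (volume.restrict (Set.Ioo 0 t))) :=
    hHint.integral_prod_right
  have hF3meas : StronglyMeasurable F3 := by
    have h : Measurable fun q : (ℝ × ℝ) × ℝ => H (q.2, q.1) :=
      hHmeas.comp (measurable_snd.prodMk measurable_fst)
    exact h.stronglyMeasurable.integral_prod_right'
  -- the chain of equalities for the left-hand side
  have eqL : (∫ s in (0:ℝ)..t, (∫ r in s..t, σ r * K' r s) ^ 2)
      = ∫ s in Set.Ioo 0 t, J s * J s := by
    rw [intervalIntegral.integral_of_le h0.le, integral_Ioc_eq_integral_Ioo]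
    refine setIntegral_congr_fun measurableSet_Ioo fun s hs => ?_
    rw [inner_eq s hs]
    ring
  have step1 : ∀ s : ℝ, J s * J s = ∫ p, G (p.1, s) * G (p.2, s)
      ∂((volume.restrict (Set.Ioo 0 t)).prod (volume.restrict (Set.Ioo 0 t))) :=
    fun s => (integral_prod_mul (fun r => G (r, s)) (fun r => G (r, s))).symm
  have step2 : ∫ s in Set.Ioo 0 t, J s * J s
      = ∫ p, F3 p ∂((volume.restrict (Set.Ioo 0 t)).prod (volume.restrict (Set.Ioo 0 t))) := by
    rw [show (fun s => J s * J s) = fun s => ∫ p, G (p.1, s) * G (p.2, s)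
      ∂((volume.restrict (Set.Ioo 0 t)).prod (volume.restrict (Set.Ioo 0 t)))
      from funext step1]
    exact MeasureTheory.integral_integral_swap hHint
  have step3 : (∫ p, F3 p
      ∂((volume.restrict (Set.Ioo 0 t)).prod (volume.restrict (Set.Ioo 0 t))))
      = ∫ r in Set.Ioo 0 t, ∫ r' in Set.Ioo 0 t, F3 (r, r') :=
    MeasureTheory.integral_prod F3 hF3int
  -- identification of F3 with the φ-integrand
  have fact_F3 : ∀ r ∈ Set.Ioo (0:ℝ) t, ∀ r' ∈ Set.Ioo (0:ℝ) t,
      σ r * σ r' * (∫ u in (0:ℝ)..(min r r'), K' r u * K' r' u) = F3 (r, r') := by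
    intro r hr r' hr'
    have hm0 : 0 < min r r' := lt_min hr.1 hr'.1
    have hmt : min r r' < t := lt_of_le_of_lt (min_le_left _ _) hr.2
    have hzero : ∀ u : ℝ, min r r' ≤ u → G (r, u) * G (r', u) = 0 := by
      intro u hu
      rcases le_total r r' with hle | hle
      · rw [min_eq_left hle] at hu
        rw [hGzero_left u r hu, zero_mul]
      · rw [min_eq_right hle] at hu
        rw [hGzero_left u r' hu, mul_zero]
    have e1 : F3 (r, r') = ∫ u in Set.Ioc 0 (min r r'), G (r, u) * G (r', u) :=
      shrinkB (min r r') _ hmt.le hzero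
    have e2 : ∫ u in Set.Ioc 0 (min r r'), G (r, u) * G (r', u)
        = ∫ u in Set.Ioc 0 (min r r'), σ r * σ r' * (K' r u * K' r' u) := by
      rw [integral_Ioc_eq_integral_Ioo,
        show (∫ u in Set.Ioc 0 (min r r'), σ r * σ r' * (K' r u * K' r' u))
          = ∫ u in Set.Ioo 0 (min r r'), σ r * σ r' * (K' r u * K' r' u)
          from integral_Ioc_eq_integral_Ioo]
      refine setIntegral_congr_fun measurableSet_Ioo fun u hu => ?_
      have hur : u < r := lt_of_lt_of_le hu.2 (min_le_left _ _)
      have hur' : u < r' := lt_of_lt_of_le hu.2 (min_le_right _ _)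
      have hrT : r < T := lt_of_lt_of_le hr.2 htT
      have hr'T : r' < T := lt_of_lt_of_le hr'.2 htT
      rw [hGeq (r, u) ⟨hu.1, hur, hrT⟩, hGeq (r', u) ⟨hu.1, hur', hr'T⟩]
      ring
    rw [e1, e2, ← intervalIntegral.integral_of_le hm0.le,
      ← intervalIntegral.integral_const_mul]
  have eqR : (∫ r in (0:ℝ)..t, ∫ r' in (0:ℝ)..t,
        σ r * σ r' * ∫ u in (0:ℝ)..(min r r'), K' r u * K' r' u)
      = ∫ r in Set.Ioo 0 t, ∫ r' in Set.Ioo 0 t, F3 (r, r') := by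
    rw [intervalIntegral.integral_of_le h0.le, integral_Ioc_eq_integral_Ioo]
    refine setIntegral_congr_fun measurableSet_Ioo fun r hr => ?_
    rw [intervalIntegral.integral_of_le h0.le, integral_Ioc_eq_integral_Ioo]
    exact setIntegral_congr_fun measurableSet_Ioo fun r' hr' => fact_F3 r hr r' hr'
  have conj5 : (∫ s in (0:ℝ)..t, (∫ r in s..t, σ r * K' r s) ^ 2)
      = ∫ r in (0:ℝ)..t, ∫ r' in (0:ℝ)..t,
          σ r * σ r' * ∫ u in (0:ℝ)..(min r r'), K' r u * K' r' u := by
    rw [eqL, step2, step3, eqR]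
  have conj4 : IntervalIntegrable (fun r => ∫ r' in (0:ℝ)..t,
      σ r * σ r' * ∫ u in (0:ℝ)..(min r r'), K' r u * K' r' u) volume 0 t := by
    rw [intervalIntegrable_iff_integrableOn_Ioc_of_le h0.le,
      integrableOn_Ioc_iff_integrableOn_Ioo]
    refine hF3int.integral_prod_left.congr ?_
    refine (ae_restrict_iff' measurableSet_Ioo).2 (ae_of_all _ fun r hr => ?_)
    show (∫ r' in Set.Ioo 0 t, F3 (r, r'))
      = ∫ r' in (0:ℝ)..t, σ r * σ r' * ∫ u in (0:ℝ)..(min r r'), K' r u * K' r' u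
    rw [intervalIntegral.integral_of_le h0.le, integral_Ioc_eq_integral_Ioo]
    exact setIntegral_congr_fun measurableSet_Ioo fun r' hr' => (fact_F3 r hr r' hr').symm
  -- conjunct 3 : integrability in r' for each fixed r
  have hMn : (0:ℝ) ≤ Cσ * c * T ^ β :=
    mul_nonneg (mul_nonneg hCσ hc.le) (Real.rpow_nonneg hT.le _)
  have hGGzero : ∀ r r' u : ℝ, min r r' ≤ u → G (r, u) * G (r', u) = 0 := by
    intro r r' u hu
    rcases le_total r r' with hle | hle
    · rw [min_eq_left hle] at hu
      rw [hGzero_left u r hu, zero_mul]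
    · rw [min_eq_right hle] at hu
      rw [hGzero_left u r' hu, mul_zero]
  have conj3 : ∀ r ∈ Set.Ioo (0:ℝ) t, IntervalIntegrable
      (fun r' => σ r * σ r' * ∫ u in (0:ℝ)..(min r r'), K' r u * K' r' u) volume 0 t := by
    intro r hr
    set C2 : ℝ := (Cσ * c * T ^ β) ^ 2 * ((1 / (1 - 2 * β) + 1 / α) * (1 / 2) ^ (α - 2 * β))
      with hC2def
    have hC2nn : 0 ≤ C2 := by
      have h2 : (0:ℝ) < 1 - 2 * β := by linarith
      have h3 : (0:ℝ) ≤ 1 / (1 - 2 * β) + 1 / α := by positivity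
      exact mul_nonneg (sq_nonneg _)
        (mul_nonneg h3 (Real.rpow_nonneg (by norm_num) _))
    set D : ℝ → ℝ := fun r' => C2 * ((min r r') ^ (α - 2 * β) * |r - r'| ^ (α - 1)) with hDdef
    have hDmeas : Measurable D := by fun_prop
    have hDnn : ∀ r' : ℝ, 0 < r' → 0 ≤ D r' := by
      intro r' h
      simp only [hDdef]
      exact mul_nonneg hC2nn (mul_nonneg (Real.rpow_nonneg (le_min hr.1.le h.le) _)
        (Real.rpow_nonneg (abs_nonneg _) _))
    have hDb : ∀ r' ∈ Set.Ioo (0:ℝ) t, r' ≠ r → |F3 (r, r')| ≤ D r' := by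
      intro r' hr' hne
      have hm0 : 0 < min r r' := lt_min hr.1 hr'.1
      have hmt : min r r' < t := lt_of_le_of_lt (min_le_left _ _) hr.2
      have e1 : F3 (r, r') = ∫ u in Set.Ioc 0 (min r r'), G (r, u) * G (r', u) :=
        shrinkB _ _ hmt.le (hGGzero r r')
      have key_pt : ∀ u ∈ Set.Ioc (0:ℝ) (min r r'), |G (r, u) * G (r', u)| ≤
          ((Cσ * c * T ^ β) ^ 2 * |r - r'| ^ (α - 1)) *
            ((min r r' - u) ^ (α - 1) * u ^ (-(2 * β))) := by
        intro u hu
        rcases eq_or_lt_of_le hu.2 with he | hlt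
        · rw [hGGzero r r' u he.ge, abs_zero, ← he, sub_self,
            Real.zero_rpow (by intro hcon; exact absurd hcon (by intro h; linarith [hα'])),
            zero_mul, mul_zero]
        · have hu0 : 0 < u := hu.1
          have hur : u < r := lt_of_lt_of_le hlt (min_le_left _ _)
          have hur' : u < r' := lt_of_lt_of_le hlt (min_le_right _ _)
          have b1 := hGb r u hu0 hur
          have b2 := hGb r' u hu0 hur'
          have hpair : (r - u) ^ (α - 1) * (r' - u) ^ (α - 1) ≤
              (min r r' - u) ^ (α - 1) * |r - r'| ^ (α - 1) := by
            rcases le_total r r' with hle | hle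
            · rw [min_eq_left hle]
              have hrr' : r < r' := lt_of_le_of_ne hle (fun h => hne h.symm)
              have h1 : (r' - u) ^ (α - 1) ≤ (r' - r) ^ (α - 1) :=
                Real.rpow_le_rpow_of_nonpos (by linarith) (by linarith) (by linarith)
              have h2 : |r - r'| = r' - r := by
                rw [abs_sub_comm]; exact abs_of_pos (by linarith)
              rw [h2]
              exact mul_le_mul_of_nonneg_left h1 (Real.rpow_nonneg (by linarith) _)
            · rw [min_eq_right hle]
              have hrr' : r' < r := lt_of_le_of_ne hle hne
              have h1 : (r - u) ^ (α - 1) ≤ (r - r') ^ (α - 1) :=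
                Real.rpow_le_rpow_of_nonpos (by linarith) (by linarith) (by linarith)
              have h2 : |r - r'| = r - r' := abs_of_pos (by linarith)
              rw [h2, mul_comm]
              exact mul_le_mul_of_nonneg_left h1 (Real.rpow_nonneg (by linarith) _)
          have hu2b : u ^ (-β) * u ^ (-β) = u ^ (-(2 * β)) := by
            rw [← Real.rpow_add hu0]; ring_nf
          rw [abs_mul]
          calc |G (r, u)| * |G (r', u)|
              ≤ ((Cσ * c * T ^ β * u ^ (-β)) * (r - u) ^ (α - 1)) *
                ((Cσ * c * T ^ β * u ^ (-β)) * (r' - u) ^ (α - 1)) :=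
                mul_le_mul b1 b2 (abs_nonneg _)
                  (mul_nonneg (mul_nonneg hMn (Real.rpow_nonneg hu0.le _))
                    (Real.rpow_nonneg (by linarith) _))
            _ = ((Cσ * c * T ^ β) ^ 2 * (u ^ (-β) * u ^ (-β))) *
                ((r - u) ^ (α - 1) * (r' - u) ^ (α - 1)) := by ring
            _ ≤ ((Cσ * c * T ^ β) ^ 2 * (u ^ (-β) * u ^ (-β))) *
                ((min r r' - u) ^ (α - 1) * |r - r'| ^ (α - 1)) := by
                refine mul_le_mul_of_nonneg_left hpair ?_
                exact mul_nonneg (sq_nonneg _)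
                  (mul_nonneg (Real.rpow_nonneg hu0.le _) (Real.rpow_nonneg hu0.le _))
            _ = ((Cσ * c * T ^ β) ^ 2 * |r - r'| ^ (α - 1)) *
                ((min r r' - u) ^ (α - 1) * (u ^ (-β) * u ^ (-β))) := by ring
            _ = ((Cσ * c * T ^ β) ^ 2 * |r - r'| ^ (α - 1)) *
                ((min r r' - u) ^ (α - 1) * u ^ (-(2 * β))) := by rw [hu2b]
      have hbetaI := (betaIntegrable hα (by linarith) (show (0:ℝ) < 2 * β by linarith)
        (by linarith) hm0).const_mul ((Cσ * c * T ^ β) ^ 2 * |r - r'| ^ (α - 1))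
      have hGG_meas : Measurable fun u => G (r, u) * G (r', u) :=
        (hGmeas.comp (measurable_const.prodMk measurable_id)).mul
          (hGmeas.comp (measurable_const.prodMk measurable_id))
      have hGGint : IntegrableOn (fun u => G (r, u) * G (r', u))
          (Set.Ioc 0 (min r r')) volume := by
        refine hbetaI.mono' hGG_meas.aestronglyMeasurable.restrict ?_
        refine (ae_restrict_iff' measurableSet_Ioc).2 (ae_of_all _ fun u hu => ?_)
        rw [Real.norm_eq_abs]
        exact key_pt u hu
      have hstep : ∫ u in Set.Ioc 0 (min r r'), |G (r, u) * G (r', u)| ≤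
          ((Cσ * c * T ^ β) ^ 2 * |r - r'| ^ (α - 1)) *
            ∫ u in Set.Ioc 0 (min r r'), (min r r' - u) ^ (α - 1) * u ^ (-(2 * β)) := by
        rw [← MeasureTheory.integral_const_mul]
        exact setIntegral_mono_on hGGint.abs hbetaI measurableSet_Ioc key_pt
      have hbeta := betaBound hα (by linarith) (show (0:ℝ) < 2 * β by linarith)
        (by linarith) hm0
      have hcoef : (0:ℝ) ≤ (Cσ * c * T ^ β) ^ 2 * |r - r'| ^ (α - 1) :=
        mul_nonneg (sq_nonneg _) (Real.rpow_nonneg (abs_nonneg _) _)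
      calc |F3 (r, r')| = |∫ u in Set.Ioc 0 (min r r'), G (r, u) * G (r', u)| := by rw [e1]
        _ ≤ ∫ u in Set.Ioc 0 (min r r'), |G (r, u) * G (r', u)| := by
            simpa only [Real.norm_eq_abs] using norm_integral_le_integral_norm
              (μ := volume.restrict (Set.Ioc 0 (min r r'))) (fun u => G (r, u) * G (r', u))
        _ ≤ ((Cσ * c * T ^ β) ^ 2 * |r - r'| ^ (α - 1)) *
            ∫ u in Set.Ioc 0 (min r r'), (min r r' - u) ^ (α - 1) * u ^ (-(2 * β)) := hstep
        _ ≤ ((Cσ * c * T ^ β) ^ 2 * |r - r'| ^ (α - 1)) *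
            (((1 / (1 - 2 * β) + 1 / α) * (1 / 2) ^ (α - 2 * β)) *
              (min r r') ^ (α - 2 * β)) := mul_le_mul_of_nonneg_left hbeta hcoef
        _ = D r' := by simp only [hDdef, hC2def]; ring
    have hDint : IntegrableOn D (Set.Ioo 0 t) volume := by
      have hr0 : 0 < r := hr.1
      have hrt : r < t := hr.2
      have p1 : IntegrableOn D (Set.Ioc 0 (r / 2)) volume := by
        have hbint : IntegrableOn (fun r' : ℝ => (C2 * (r / 2) ^ (α - 1)) * r' ^ (α - 2 * β))
            (Set.Ioc 0 (r / 2)) volume := by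
          have h := (intervalIntegrable_rpow' (a := 0) (b := r / 2) (r := α - 2 * β)
            (by linarith)).const_mul (C2 * (r / 2) ^ (α - 1))
          rwa [intervalIntegrable_iff_integrableOn_Ioc_of_le (by linarith)] at h
        refine hbint.mono' hDmeas.aestronglyMeasurable.restrict ?_
        refine (ae_restrict_iff' measurableSet_Ioc).2 (ae_of_all _ fun r' hu => ?_)
        have h1 : min r r' = r' := min_eq_right (by linarith [hu.2])
        rw [Real.norm_eq_abs, abs_of_nonneg (hDnn r' hu.1)]
        simp only [hDdef, h1]
        have habs2 : (r / 2) ≤ |r - r'| := le_trans (by linarith [hu.2]) (le_abs_self _)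
        have h3 : |r - r'| ^ (α - 1) ≤ (r / 2) ^ (α - 1) :=
          Real.rpow_le_rpow_of_nonpos (by linarith) habs2 (by linarith)
        calc C2 * (r' ^ (α - 2 * β) * |r - r'| ^ (α - 1))
            ≤ C2 * (r' ^ (α - 2 * β) * (r / 2) ^ (α - 1)) :=
              mul_le_mul_of_nonneg_left
                (mul_le_mul_of_nonneg_left h3 (Real.rpow_nonneg hu.1.le _)) hC2nn
          _ = (C2 * (r / 2) ^ (α - 1)) * r' ^ (α - 2 * β) := by ring
      have p2 : IntegrableOn D (Set.Ioc (r / 2) r) volume := by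
        have hbint : IntegrableOn (fun r' : ℝ =>
            (C2 * ((r / 2) ^ (α - 2 * β) + r ^ (α - 2 * β))) * (r - r') ^ (α - 1))
            (Set.Ioc (r / 2) r) volume := by
          have h := ((intervalIntegrable_rpow' (a := 0) (b := r / 2) (r := α - 1)
            (by linarith)).comp_sub_left r).const_mul
            (C2 * ((r / 2) ^ (α - 2 * β) + r ^ (α - 2 * β)))
          rw [sub_zero, sub_half] at h
          replace h := h.symm
          rwa [intervalIntegrable_iff_integrableOn_Ioc_of_le (by linarith)] at h
        refine hbint.mono' hDmeas.aestronglyMeasurable.restrict ?_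
        refine (ae_restrict_iff' measurableSet_Ioc).2 (ae_of_all _ fun r' hu => ?_)
        have hr'0 : 0 < r' := lt_trans (by linarith) hu.1
        have h1 : min r r' = r' := min_eq_right hu.2
        have habs : |r - r'| = r - r' := abs_of_nonneg (by linarith [hu.2])
        rw [Real.norm_eq_abs, abs_of_nonneg (hDnn r' hr'0)]
        simp only [hDdef, h1, habs]
        have hsum : r' ^ (α - 2 * β) ≤ (r / 2) ^ (α - 2 * β) + r ^ (α - 2 * β) := by
          rcases le_or_gt 0 (α - 2 * β) with hexp | hexp
          · have hh := Real.rpow_le_rpow hr'0.le hu.2 hexp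
            have hnn : (0:ℝ) ≤ (r / 2) ^ (α - 2 * β) := Real.rpow_nonneg (by linarith) _
            linarith
          · have hh := Real.rpow_le_rpow_of_nonpos
              (show (0:ℝ) < r / 2 by linarith) hu.1.le hexp.le
            have hnn : (0:ℝ) ≤ r ^ (α - 2 * β) := Real.rpow_nonneg (by linarith) _
            linarith
        calc C2 * (r' ^ (α - 2 * β) * (r - r') ^ (α - 1))
            ≤ C2 * (((r / 2) ^ (α - 2 * β) + r ^ (α - 2 * β)) * (r - r') ^ (α - 1)) :=
              mul_le_mul_of_nonneg_left (mul_le_mul_of_nonneg_right hsum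
                (Real.rpow_nonneg (by linarith [hu.2]) _)) hC2nn
          _ = (C2 * ((r / 2) ^ (α - 2 * β) + r ^ (α - 2 * β))) * (r - r') ^ (α - 1) := by ring
      have p3 : IntegrableOn D (Set.Ioc r t) volume := by
        have hbint : IntegrableOn (fun r' : ℝ => (C2 * r ^ (α - 2 * β)) * (r' - r) ^ (α - 1))
            (Set.Ioc r t) volume := by
          have h := ((intervalIntegrable_rpow' (a := 0) (b := t - r) (r := α - 1)
            (by linarith)).comp_sub_right r).const_mul (C2 * r ^ (α - 2 * β))
          rw [zero_add, sub_add_cancel] at h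
          rwa [intervalIntegrable_iff_integrableOn_Ioc_of_le (by linarith)] at h
        refine hbint.mono' hDmeas.aestronglyMeasurable.restrict ?_
        refine (ae_restrict_iff' measurableSet_Ioc).2 (ae_of_all _ fun r' hu => ?_)
        have h1 : min r r' = r := min_eq_left hu.1.le
        have habs : |r - r'| = r' - r := by
          rw [abs_sub_comm]; exact abs_of_nonneg (by linarith [hu.1])
        rw [Real.norm_eq_abs, abs_of_nonneg (hDnn r' (lt_trans hr0 hu.1))]
        simp only [hDdef, h1, habs]
        exact le_of_eq (by ring)
      have hsub : Set.Ioo 0 t ⊆ (Set.Ioc 0 (r / 2) ∪ Set.Ioc (r / 2) r) ∪ Set.Ioc r t := by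
        rw [Set.Ioc_union_Ioc_eq_Ioc (by linarith) (by linarith),
          Set.Ioc_union_Ioc_eq_Ioc (by linarith) (by linarith)]
        exact Set.Ioo_subset_Ioc_self
      exact ((p1.union p2).union p3).mono_set hsub
    have hmain : IntegrableOn (fun r' => F3 (r, r')) (Set.Ioo 0 t) volume := by
      refine hDint.mono' ((hF3meas.measurable.comp
        (measurable_const.prodMk measurable_id)).aestronglyMeasurable.restrict) ?_
      filter_upwards [ae_restrict_mem measurableSet_Ioo, ae_restrict_of_ae (haeNe r)]
        with r' h1 h2
      rw [Real.norm_eq_abs]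
      exact hDb r' h1 h2
    rw [intervalIntegrable_iff_integrableOn_Ioc_of_le h0.le,
      integrableOn_Ioc_iff_integrableOn_Ioo]
    exact hmain.congr_fun (fun r' hr' => (fact_F3 r hr r' hr').symm) measurableSet_Ioo
  exact ⟨conj1, conj2, conj3, conj4, conj5⟩
end
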